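/- arXiv:2303.13834 — 7 statements merged into one kernel-verified Lean document; each statement's English description precedes it below -/
import Mathlib

section
/- Let h: ℝ → ℝ be increasing with m|x−y| ≤ |h(x)−h(y)| ≤ M|x−y| for all x,y and constants 0 < m ≤ M. Define H(x,ν) = ∫ h(x+z) dν(z) for ν a probability measure on ℝ with finite first moment, and G₀(ν) = inf{x ≥ 0 : H(x,ν) ≥ 0}. Then G₀ is Lipschitz with respect to the Wasserstein-1 distance: |G₀(μ) − G₀(ν)| ≤ (M/m) W₁(μ,ν) for all μ,ν with finite first moment. -/
open MeasureTheory Set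

theorem stmt0
    (m M : ℝ) (hm : 0 < m) (hmM : m ≤ M)
    (h : ℝ → ℝ) (hmono : Monotone h)
    (hbil : ∀ x y : ℝ, m * |x - y| ≤ |h x - h y| ∧ |h x - h y| ≤ M * |x - y|)
    (μ ν : Measure ℝ) [IsProbabilityMeasure μ] [IsProbabilityMeasure ν]
    (hμ : Integrable (fun z : ℝ => |z|) μ) (hν : Integrable (fun z : ℝ => |z|) ν)
    (H : ℝ → Measure ℝ → ℝ)
    (hH : ∀ (x : ℝ) (ρ : Measure ℝ), H x ρ = ∫ z, h (x + z) ∂ρ)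
    (G₀ : Measure ℝ → ℝ)
    (hG : ∀ ρ : Measure ℝ, G₀ ρ = sInf {x : ℝ | 0 ≤ x ∧ 0 ≤ H x ρ})
    (W₁ : Measure ℝ → Measure ℝ → ℝ)
    (hW : ∀ ρ₁ ρ₂ : Measure ℝ, W₁ ρ₁ ρ₂ =
      sSup {d : ℝ | ∃ g : ℝ → ℝ, LipschitzWith 1 g ∧
        d = |(∫ z, g z ∂ρ₁) - ∫ z, g z ∂ρ₂|}) :
    |G₀ μ - G₀ ν| ≤ (M / m) * W₁ μ ν := by
  have hM : 0 < M := hm.trans_le hmM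
  have hmeas : Measurable h := hmono.measurable
  -- integrability of z ↦ h (x + z)
  have hint : ∀ (x : ℝ) (ρ : Measure ℝ), IsProbabilityMeasure ρ →
      Integrable (fun z : ℝ => |z|) ρ → Integrable (fun z => h (x + z)) ρ := by
    intro x ρ hρi hρ
    haveI := hρi
    refine Integrable.mono' ((integrable_const (|h x|)).add (hρ.const_mul M)) ?_ ?_
    · exact (hmeas.comp (measurable_const_add x)).aestronglyMeasurable
    · filter_upwards with z
      have h2 := (hbil (x + z) x).2
      have : |h (x + z)| ≤ |h (x + z) - h x| + |h x| := by
        calc |h (x + z)| = |(h (x + z) - h x) + h x| := by ring_nf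
        _ ≤ |h (x + z) - h x| + |h x| := abs_add_le _ _
      have h3 : |x + z - x| = |z| := by ring_nf
      simp only [Real.norm_eq_abs, Pi.add_apply]
      rw [h3] at h2
      linarith
  -- shift inequality
  have hshift : ∀ (x t : ℝ), 0 ≤ t → ∀ (ρ : Measure ℝ), IsProbabilityMeasure ρ →
      Integrable (fun z : ℝ => |z|) ρ → H x ρ + m * t ≤ H (x + t) ρ := by
    intro x t ht ρ hρi hρ
    haveI := hρi
    rw [hH, hH]
    have h1 : Integrable (fun z => h (x + z)) ρ := hint x ρ hρi hρ
    have h2 : Integrable (fun z => h (x + t + z)) ρ := hint (x + t) ρ hρi hρ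
    have key : ∫ z, (h (x + z) + m * t) ∂ρ ≤ ∫ z, h (x + t + z) ∂ρ := by
      refine integral_mono (h1.add (integrable_const _)) h2 ?_
      intro z
      have hle : h (x + z) ≤ h (x + t + z) := hmono (by linarith)
      have hb := (hbil (x + t + z) (x + z)).1
      have he : |x + t + z - (x + z)| = t := by
        rw [show x + t + z - (x + z) = t by ring, abs_of_nonneg ht]
      rw [he, abs_of_nonneg (by linarith)] at hb
      simp only
      linarith
    rw [integral_add h1 (integrable_const _), integral_const, probReal_univ] at key
    simpa using key
  -- the Wasserstein set for μ ν
  set D : Set ℝ := {d : ℝ | ∃ g : ℝ → ℝ, LipschitzWith 1 g ∧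
      d = |(∫ z, g z ∂μ) - ∫ z, g z ∂ν|} with hD
  have hbdd : BddAbove D := by
    refine ⟨(∫ z, |z| ∂μ) + ∫ z, |z| ∂ν, ?_⟩
    rintro d ⟨g, hg, rfl⟩
    have hgb : ∀ z : ℝ, |g z - g 0| ≤ |z| := by
      intro z
      have := hg.dist_le_mul z 0
      simpa [Real.dist_eq] using this
    have hgint : ∀ (ρ : Measure ℝ), IsProbabilityMeasure ρ →
        Integrable (fun z : ℝ => |z|) ρ → Integrable g ρ := by
      intro ρ hρi hρ
      haveI := hρi
      refine Integrable.mono' ((integrable_const (|g 0|)).add hρ) ?_ ?_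
      · exact hg.continuous.measurable.aestronglyMeasurable
      · filter_upwards with z
        have := hgb z
        have : |g z| ≤ |g 0| + |z| := by
          calc |g z| = |(g z - g 0) + g 0| := by ring_nf
          _ ≤ |g z - g 0| + |g 0| := abs_add_le _ _
          _ ≤ |g 0| + |z| := by linarith [hgb z]
        simpa [Real.norm_eq_abs] using this
    have hgμ := hgint μ inferInstance hμ
    have hgν := hgint ν inferInstance hν
    have e1 : ∫ z, g z ∂μ = (∫ z, (g z - g 0) ∂μ) + g 0 := by
      rw [integral_sub hgμ (integrable_const _), integral_const, probReal_univ]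
      simp
    have e2 : ∫ z, g z ∂ν = (∫ z, (g z - g 0) ∂ν) + g 0 := by
      rw [integral_sub hgν (integrable_const _), integral_const, probReal_univ]
      simp
    have b1 : |∫ z, (g z - g 0) ∂μ| ≤ ∫ z, |z| ∂μ := by
      calc |∫ z, (g z - g 0) ∂μ| ≤ ∫ z, |g z - g 0| ∂μ := by
            simpa [Real.norm_eq_abs] using norm_integral_le_integral_norm (fun z => g z - g 0) (μ := μ)
      _ ≤ ∫ z, |z| ∂μ := integral_mono (hgμ.sub (integrable_const _)).abs hμ hgb
    have b2 : |∫ z, (g z - g 0) ∂ν| ≤ ∫ z, |z| ∂ν := by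
      calc |∫ z, (g z - g 0) ∂ν| ≤ ∫ z, |g z - g 0| ∂ν := by
            simpa [Real.norm_eq_abs] using norm_integral_le_integral_norm (fun z => g z - g 0) (μ := ν)
      _ ≤ ∫ z, |z| ∂ν := integral_mono (hgν.sub (integrable_const _)).abs hν hgb
    rw [e1, e2]
    calc |(∫ z, (g z - g 0) ∂μ) + g 0 - ((∫ z, (g z - g 0) ∂ν) + g 0)|
        = |(∫ z, (g z - g 0) ∂μ) - (∫ z, (g z - g 0) ∂ν)| := by congr 1; ring
      _ ≤ |∫ z, (g z - g 0) ∂μ| + |∫ z, (g z - g 0) ∂ν| := abs_sub _ _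
      _ ≤ (∫ z, |z| ∂μ) + ∫ z, |z| ∂ν := add_le_add b1 b2
  have hWnn : 0 ≤ W₁ μ ν := by
    rw [hW]
    refine le_csSup hbdd ?_
    exact ⟨fun _ => 0, LipschitzWith.of_dist_le_mul (fun a b => by simpa using dist_nonneg), by simp⟩
  -- key comparison of H
  have hHW : ∀ x : ℝ, |H x μ - H x ν| ≤ M * W₁ μ ν := by
    intro x
    set g : ℝ → ℝ := fun z => M⁻¹ * h (x + z) with hgdef
    have hglip : LipschitzWith 1 g := by
      refine LipschitzWith.of_dist_le_mul ?_
      intro a b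
      have h2 := (hbil (x + a) (x + b)).2
      have he : |x + a - (x + b)| = |a - b| := by ring_nf
      rw [he] at h2
      simp only [hgdef, Real.dist_eq, NNReal.coe_one, one_mul]
      rw [show M⁻¹ * h (x + a) - M⁻¹ * h (x + b) = M⁻¹ * (h (x + a) - h (x + b)) by ring,
        abs_mul, abs_of_nonneg (inv_nonneg.2 hM.le)]
      calc M⁻¹ * |h (x + a) - h (x + b)| ≤ M⁻¹ * (M * |a - b|) :=
            mul_le_mul_of_nonneg_left h2 (inv_nonneg.2 hM.le)
        _ = |a - b| := by field_simp
    have hmem : |(∫ z, g z ∂μ) - ∫ z, g z ∂ν| ∈ D := ⟨g, hglip, rfl⟩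
    have hle : |(∫ z, g z ∂μ) - ∫ z, g z ∂ν| ≤ W₁ μ ν := by
      rw [hW]; exact le_csSup hbdd hmem
    have eμ : ∫ z, g z ∂μ = M⁻¹ * H x μ := by
      rw [hH]; simp only [hgdef]; rw [integral_const_mul]
    have eν : ∫ z, g z ∂ν = M⁻¹ * H x ν := by
      rw [hH]; simp only [hgdef]; rw [integral_const_mul]
    rw [eμ, eν, show M⁻¹ * H x μ - M⁻¹ * H x ν = M⁻¹ * (H x μ - H x ν) by ring,
      abs_mul, abs_of_nonneg (inv_nonneg.2 hM.le)] at hle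
    calc |H x μ - H x ν| = M * (M⁻¹ * |H x μ - H x ν|) := by field_simp
      _ ≤ M * W₁ μ ν := mul_le_mul_of_nonneg_left hle hM.le
  -- nonemptiness and bddBelow of the sets
  have hSne : ∀ (ρ : Measure ℝ), IsProbabilityMeasure ρ → Integrable (fun z : ℝ => |z|) ρ →
      {x : ℝ | 0 ≤ x ∧ 0 ≤ H x ρ}.Nonempty := by
    intro ρ hρi hρ
    refine ⟨max 0 (m⁻¹ * |H 0 ρ|), le_max_left _ _, ?_⟩
    have ht : (0 : ℝ) ≤ max 0 (m⁻¹ * |H 0 ρ|) := le_max_left _ _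
    have := hshift 0 (max 0 (m⁻¹ * |H 0 ρ|)) ht ρ hρi hρ
    rw [zero_add] at this
    have hb : m * (m⁻¹ * |H 0 ρ|) ≤ m * max 0 (m⁻¹ * |H 0 ρ|) :=
      mul_le_mul_of_nonneg_left (le_max_right _ _) hm.le
    have he : m * (m⁻¹ * |H 0 ρ|) = |H 0 ρ| := by field_simp
    have := abs_nonneg (H 0 ρ)
    have := neg_abs_le (H 0 ρ)
    nlinarith [neg_abs_le (H 0 ρ)]
  have hSbb : ∀ (ρ : Measure ℝ), BddBelow {x : ℝ | 0 ≤ x ∧ 0 ≤ H x ρ} :=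
    fun ρ => ⟨0, fun x hx => hx.1⟩
  -- one-sided key estimate
  have key : ∀ (ρ₁ ρ₂ : Measure ℝ), IsProbabilityMeasure ρ₁ → IsProbabilityMeasure ρ₂ →
      Integrable (fun z : ℝ => |z|) ρ₁ → Integrable (fun z : ℝ => |z|) ρ₂ →
      (∀ x, H x ρ₂ ≤ H x ρ₁ + M * W₁ μ ν) →
      G₀ ρ₁ ≤ G₀ ρ₂ + (M / m) * W₁ μ ν := by
    intro ρ₁ ρ₂ p₁ p₂ i₁ i₂ hcomp
    set c : ℝ := (M / m) * W₁ μ ν with hc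
    have hc0 : 0 ≤ c := mul_nonneg (div_nonneg hM.le hm.le) hWnn
    rw [hG ρ₁, hG ρ₂]
    have hstep : ∀ x ∈ {x : ℝ | 0 ≤ x ∧ 0 ≤ H x ρ₂}, sInf {x : ℝ | 0 ≤ x ∧ 0 ≤ H x ρ₁} ≤ x + c := by
      intro x hx
      refine csInf_le (hSbb ρ₁) ?_
      refine ⟨by linarith [hx.1], ?_⟩
      have hs := hshift x c hc0 ρ₁ p₁ i₁
      have hmc : m * c = M * W₁ μ ν := by
        rw [hc]; field_simp
      have := hcomp x
      have hx2 := hx.2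
      linarith
    have : sInf {x : ℝ | 0 ≤ x ∧ 0 ≤ H x ρ₁} - c ≤ sInf {x : ℝ | 0 ≤ x ∧ 0 ≤ H x ρ₂} := by
      refine le_csInf (hSne ρ₂ p₂ i₂) ?_
      intro x hx
      linarith [hstep x hx]
    linarith
  have hWsymm : W₁ ν μ = W₁ μ ν := by
    rw [hW, hW]
    congr 1
    ext d
    constructor
    · rintro ⟨g, hg, rfl⟩; exact ⟨g, hg, (abs_sub_comm _ _)⟩
    · rintro ⟨g, hg, rfl⟩; exact ⟨g, hg, (abs_sub_comm _ _)⟩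
  have k1 : G₀ μ ≤ G₀ ν + (M / m) * W₁ μ ν := by
    refine key μ ν inferInstance inferInstance hμ hν ?_
    intro x
    have := hHW x
    have := abs_le.1 this
    linarith [this.1]
  have k2 : G₀ ν ≤ G₀ μ + (M / m) * W₁ μ ν := by
    refine key ν μ inferInstance inferInstance hν hμ ?_
    intro x
    have := hHW x
    have := abs_le.1 this
    linarith [this.2]
  rw [abs_sub_le_iff]
  constructor <;> linarith
end

section
/- Let b: ℝ → ℝ be Lipschitz, ξ ∈ ℝ, and K⁰ : [0,T] → ℝ a continuous nondecreasing function with K⁰(0)=0. For any φ ∈ L²([0,T],ℝ), the integral equation Y(t) = ξ + ∫₀ᵗ b(Y(s)) ds + ∫₀ᵗ σ(Y(s)) φ(s) ds + K⁰(t), with σ: ℝ → ℝ Lipschitz, has a unique continuous solution Y on [0,T]. -/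
open MeasureTheory Set

/-- The Picard map for the skeleton equation, with continuity supplied as a hypothesis. -/
noncomputable def stmt4Phi (T : ℝ) (hT' : (0:ℝ) ≤ T) (ξ : ℝ) (b σ K₀ φ : ℝ → ℝ)
    (hcont : ∀ Y : C(Set.Icc (0:ℝ) T, ℝ),
      Continuous fun t : Set.Icc (0:ℝ) T =>
        ξ + (∫ s in (0:ℝ)..(t:ℝ),
          b (Y (Set.projIcc 0 T hT' s)) + σ (Y (Set.projIcc 0 T hT' s)) * φ s) + K₀ t)
    (Y : C(Set.Icc (0:ℝ) T, ℝ)) : C(Set.Icc (0:ℝ) T, ℝ) :=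
  ⟨_, hcont Y⟩

set_option maxHeartbeats 1000000 in
theorem stmt4
    (T : ℝ) (hT : 0 < T) (ξ : ℝ)
    (b σ : ℝ → ℝ) (Lb Lσ : NNReal)
    (hb : LipschitzWith Lb b) (hσ : LipschitzWith Lσ σ)
    (K₀ : ℝ → ℝ) (hK₀c : ContinuousOn K₀ (Icc 0 T))
    (hK₀m : MonotoneOn K₀ (Icc 0 T)) (hK₀0 : K₀ 0 = 0)
    (φ : ℝ → ℝ) (hφ : MemLp φ 2 (volume.restrict (Icc (0:ℝ) T))) :
    (∃ Y : ℝ → ℝ, ContinuousOn Y (Icc 0 T) ∧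
        ∀ t ∈ Icc (0:ℝ) T,
          Y t = ξ + (∫ s in (0:ℝ)..t, b (Y s)) + (∫ s in (0:ℝ)..t, σ (Y s) * φ s) + K₀ t) ∧
      ∀ Y Z : ℝ → ℝ,
        ContinuousOn Y (Icc 0 T) →
        (∀ t ∈ Icc (0:ℝ) T,
          Y t = ξ + (∫ s in (0:ℝ)..t, b (Y s)) + (∫ s in (0:ℝ)..t, σ (Y s) * φ s) + K₀ t) →
        ContinuousOn Z (Icc 0 T) →
        (∀ t ∈ Icc (0:ℝ) T,
          Z t = ξ + (∫ s in (0:ℝ)..t, b (Z s)) + (∫ s in (0:ℝ)..t, σ (Z s) * φ s) + K₀ t) →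
        ∀ t ∈ Icc (0:ℝ) T, Y t = Z t := by
  have hT' : (0:ℝ) ≤ T := hT.le
  haveI : CompactSpace (Icc (0:ℝ) T) := isCompact_iff_compactSpace.mp isCompact_Icc
  haveI : Nonempty (Icc (0:ℝ) T) := ⟨⟨0, le_refl 0, hT'⟩⟩
  haveI : IsFiniteMeasure (volume.restrict (Icc (0:ℝ) T)) :=
    ⟨by rw [Measure.restrict_apply_univ]; exact measure_Icc_lt_top⟩
  -- basic integrability of φ
  have hφint : IntegrableOn φ (Icc (0:ℝ) T) := hφ.integrable one_le_two
  have hφabs : IntegrableOn (fun s => |φ s|) (Icc (0:ℝ) T) := hφint.abs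
  have hφsq : IntegrableOn (fun s => φ s ^ 2) (Icc (0:ℝ) T) := hφ.integrable_sq
  set A : ℝ := ∫ s in Icc (0:ℝ) T, φ s ^ 2 with hA_def
  have hA : 0 ≤ A :=
    setIntegral_nonneg measurableSet_Icc fun s _ => sq_nonneg _
  set Cc : ℝ := 2 * (Lb:ℝ)^2 * T + 2 * (Lσ:ℝ)^2 * A with hCc_def
  have hCc : 0 ≤ Cc := by positivity
  -- generic integrability of bounded-continuous × integrable products on subintervals
  have hprod : ∀ g : ℝ → ℝ, IntegrableOn g (Icc (0:ℝ) T) →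
      ∀ u : ℝ → ℝ, Continuous u → (∃ M, ∀ x, |u x| ≤ M) →
      IntegrableOn (fun s => u s * g s) (Icc (0:ℝ) T) := by
    intro g hg u hu ⟨M, hM⟩
    exact hg.bdd_mul hu.aestronglyMeasurable (ae_of_all _ fun x => by simpa [Real.norm_eq_abs] using hM x)
  have hsub : ∀ t ∈ Icc (0:ℝ) T, ∀ f : ℝ → ℝ, IntegrableOn f (Icc (0:ℝ) T) →
      IntervalIntegrable f volume 0 t := by
    intro t ht f hf
    refine (hf.mono_set ?_).intervalIntegrable
    rw [uIcc_of_le ht.1]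
    exact Icc_subset_Icc le_rfl ht.2
  -- bound for σ ∘ extension
  have hextb : ∀ Y : C(Icc (0:ℝ) T, ℝ),
      ∃ M, ∀ x : ℝ, |σ (Y (projIcc 0 T hT' x))| ≤ M := by
    intro Y
    have hc : Continuous fun x : ℝ => σ (Y (projIcc 0 T hT' x)) :=
      hσ.continuous.comp (Y.continuous.comp continuous_projIcc)
    obtain ⟨M, hM⟩ := isCompact_Icc.exists_bound_of_continuousOn
      (s := Icc (0:ℝ) T) hc.continuousOn
    refine ⟨M, fun x => ?_⟩
    have h1 := hM ↑(projIcc 0 T hT' x) (projIcc 0 T hT' x).2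
    rw [projIcc_val] at h1
    simpa [Real.norm_eq_abs] using h1
  -- interval integrability of the two parts of the integrand
  have hIb : ∀ Y : C(Icc (0:ℝ) T, ℝ), ∀ t : ℝ,
      IntervalIntegrable (fun s => b (Y (projIcc 0 T hT' s))) volume 0 t := by
    intro Y t
    exact (hb.continuous.comp (Y.continuous.comp continuous_projIcc)).intervalIntegrable 0 t
  have hIσ : ∀ Y : C(Icc (0:ℝ) T, ℝ), ∀ t ∈ Icc (0:ℝ) T,
      IntervalIntegrable (fun s => σ (Y (projIcc 0 T hT' s)) * φ s) volume 0 t := by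
    intro Y t ht
    exact hsub t ht _ (hprod φ hφint _
      (hσ.continuous.comp (Y.continuous.comp continuous_projIcc)) (hextb Y))
  -- continuity of the Picard map values
  have hcont : ∀ Y : C(Icc (0:ℝ) T, ℝ),
      Continuous fun t : Icc (0:ℝ) T =>
        ξ + (∫ s in (0:ℝ)..(t:ℝ),
          b (Y (projIcc 0 T hT' s)) + σ (Y (projIcc 0 T hT' s)) * φ s) + K₀ t := by
    intro Y
    have h1 : IntegrableOn
        (fun s => b (Y (projIcc 0 T hT' s)) + σ (Y (projIcc 0 T hT' s)) * φ s)
        (Icc (0:ℝ) T) := by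
      refine Integrable.add ?_ ?_
      · exact (hb.continuous.comp (Y.continuous.comp continuous_projIcc)).integrableOn_Icc
      · exact hprod φ hφint _
          (hσ.continuous.comp (Y.continuous.comp continuous_projIcc)) (hextb Y)
    have h2 : ContinuousOn (fun x : ℝ => ∫ s in (0:ℝ)..x,
        b (Y (projIcc 0 T hT' s)) + σ (Y (projIcc 0 T hT' s)) * φ s) (Icc (0:ℝ) T) := by
      have h2' := intervalIntegral.continuousOn_primitive_interval (μ := volume)
        (a := (0:ℝ)) (b := T) (by rwa [uIcc_of_le hT'])
      rwa [uIcc_of_le hT'] at h2'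
    exact ((continuousOn_const.add h2).add hK₀c).restrict
  set Φ := stmt4Phi T hT' ξ b σ K₀ φ hcont with hΦ_def
  have hΦ_apply : ∀ Y : C(Icc (0:ℝ) T, ℝ), ∀ x : Icc (0:ℝ) T,
      Φ Y x = ξ + (∫ s in (0:ℝ)..(x:ℝ),
        b (Y (projIcc 0 T hT' s)) + σ (Y (projIcc 0 T hT' s)) * φ s) + K₀ x := by
    intro Y x; rfl
  -- pointwise difference bound on extensions
  have hyz : ∀ Y Z : C(Icc (0:ℝ) T, ℝ), ∀ s : ℝ,
      |Y (projIcc 0 T hT' s) - Z (projIcc 0 T hT' s)| ≤ dist Y Z := by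
    intro Y Z s
    rw [← Real.dist_eq]
    exact ContinuousMap.dist_apply_le_dist _
  -- the key quadratic estimate
  have key : ∀ Y Z : C(Icc (0:ℝ) T, ℝ), ∀ t ∈ Icc (0:ℝ) T,
      (Φ Y (projIcc 0 T hT' t) - Φ Z (projIcc 0 T hT' t))^2 ≤
        Cc * ∫ s in (0:ℝ)..t,
          (Y (projIcc 0 T hT' s) - Z (projIcc 0 T hT' s))^2 := by
    intro Y Z t ht
    set y : ℝ → ℝ := fun s => Y (projIcc 0 T hT' s) with hy_def
    set z : ℝ → ℝ := fun s => Z (projIcc 0 T hT' s) with hz_def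
    have hyc : Continuous y := Y.continuous.comp continuous_projIcc
    have hzc : Continuous z := Z.continuous.comp continuous_projIcc
    have hvalt : ((projIcc 0 T hT' t : Icc (0:ℝ) T) : ℝ) = t := by
      rw [projIcc_of_mem hT' ht]
    set d : ℝ := dist Y Z with hd_def
    have hd0 : 0 ≤ d := dist_nonneg
    have hbd : ∀ s : ℝ, |y s - z s| ≤ d := fun s => hyz Y Z s
    -- difference as a single integral
    have e1 : Φ Y (projIcc 0 T hT' t) - Φ Z (projIcc 0 T hT' t)
        = ∫ s in (0:ℝ)..t, ((b (y s) + σ (y s) * φ s) - (b (z s) + σ (z s) * φ s)) := by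
      rw [hΦ_apply, hΦ_apply, hvalt,
        intervalIntegral.integral_sub ((hIb Y t).add (hIσ Y t ht)) ((hIb Z t).add (hIσ Z t ht))]
      try ring
    -- integrability of the comparison function
    have hw : IntervalIntegrable (fun s => |y s - z s| * |φ s|) volume 0 t :=
      hsub t ht _ (hprod (fun s => |φ s|) hφabs (fun s => |y s - z s|) ((hyc.sub hzc).abs)
        ⟨d, fun x => by simpa using hbd x⟩)
    have hRHSint : IntervalIntegrable
        (fun s => (Lb:ℝ) * |y s - z s| + (Lσ:ℝ) * (|y s - z s| * |φ s|)) volume 0 t :=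
      ((continuous_const.mul (hyc.sub hzc).abs).intervalIntegrable 0 t).add (hw.const_mul _)
    -- first absolute-value bound
    have habs : |Φ Y (projIcc 0 T hT' t) - Φ Z (projIcc 0 T hT' t)| ≤
        ∫ s in (0:ℝ)..t, ((Lb:ℝ) * |y s - z s| + (Lσ:ℝ) * (|y s - z s| * |φ s|)) := by
      rw [e1]
      refine le_trans (intervalIntegral.abs_integral_le_integral_abs ht.1) ?_
      refine intervalIntegral.integral_mono_on ht.1
        (((hIb Y t).add (hIσ Y t ht)).sub ((hIb Z t).add (hIσ Z t ht))).abs hRHSint ?_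
      intro s _
      have h1 : |b (y s) - b (z s)| ≤ (Lb:ℝ) * |y s - z s| := by
        have := hb.dist_le_mul (y s) (z s)
        simpa [Real.dist_eq] using this
      have h2 : |σ (y s) - σ (z s)| ≤ (Lσ:ℝ) * |y s - z s| := by
        have := hσ.dist_le_mul (y s) (z s)
        simpa [Real.dist_eq] using this
      calc |(b (y s) + σ (y s) * φ s) - (b (z s) + σ (z s) * φ s)|
          = |(b (y s) - b (z s)) + (σ (y s) - σ (z s)) * φ s| := by
            rw [show (b (y s) + σ (y s) * φ s) - (b (z s) + σ (z s) * φ s)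
              = (b (y s) - b (z s)) + (σ (y s) - σ (z s)) * φ s by ring]
        _ ≤ |b (y s) - b (z s)| + |(σ (y s) - σ (z s)) * φ s| := abs_add_le _ _
        _ = |b (y s) - b (z s)| + |σ (y s) - σ (z s)| * |φ s| := by rw [abs_mul]
        _ ≤ (Lb:ℝ) * |y s - z s| + ((Lσ:ℝ) * |y s - z s|) * |φ s| := by
            gcongr
        _ = (Lb:ℝ) * |y s - z s| + (Lσ:ℝ) * (|y s - z s| * |φ s|) := by ring
    -- split the bounding integral
    have hP : (∫ s in (0:ℝ)..t, ((Lb:ℝ) * |y s - z s| + (Lσ:ℝ) * (|y s - z s| * |φ s|)))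
        = (Lb:ℝ) * (∫ s in (0:ℝ)..t, |y s - z s|)
          + (Lσ:ℝ) * (∫ s in (0:ℝ)..t, |y s - z s| * |φ s|) := by
      rw [intervalIntegral.integral_add (f := fun s => (Lb:ℝ) * |y s - z s|)
        (((hyc.sub hzc).abs.intervalIntegrable 0 t).const_mul _) (hw.const_mul _),
        intervalIntegral.integral_const_mul, intervalIntegral.integral_const_mul]
    -- Cauchy–Schwarz preparations on the measure restricted to Ioc 0 t
    set μt : Measure ℝ := volume.restrict (Ioc (0:ℝ) t) with hμt_def
    haveI : IsFiniteMeasure μt := ⟨by rw [Measure.restrict_apply_univ]; exact measure_Ioc_lt_top⟩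
    have hpq : Real.HolderConjugate 2 2 := Real.HolderConjugate.two_two
    have hle2 : (ENNReal.ofReal (2:ℝ)) = 2 := by
      rw [ENNReal.ofReal_ofNat]
    have hμle : μt ≤ volume.restrict (Icc (0:ℝ) T) :=
      Measure.restrict_mono (Ioc_subset_Icc_self.trans (Icc_subset_Icc le_rfl ht.2)) le_rfl
    haveI : IsFiniteMeasure (volume.restrict (Icc (0:ℝ) T)) :=
      ⟨by rw [Measure.restrict_apply_univ]; exact measure_Icc_lt_top⟩
    have hφ2 : MemLp φ (ENNReal.ofReal (2:ℝ)) μt := by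
      rw [hle2]; exact hφ.mono_measure hμle
    have hwmem : MemLp (fun s => |y s - z s|) (ENNReal.ofReal (2:ℝ)) μt :=
      MemLp.of_bound ((hyc.sub hzc).abs.aestronglyMeasurable) d
        (ae_of_all _ fun s => by simpa [Real.norm_eq_abs] using hbd s)
    have honemem : MemLp (fun _ : ℝ => (1:ℝ)) (ENNReal.ofReal (2:ℝ)) μt := memLp_const 1
    have habs_rpow : ∀ u : ℝ, |u| ^ (2:ℝ) = u ^ 2 := by
      intro u
      rw [show ((2:ℝ)) = ((2:ℕ):ℝ) by norm_num, Real.rpow_natCast, sq_abs]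
    have hsq : ∀ X : ℝ, 0 ≤ X → (X ^ ((1:ℝ)/2)) ^ 2 = X := by
      intro X hX
      rw [← Real.rpow_natCast (X ^ ((1:ℝ)/2)) 2, ← Real.rpow_mul hX]
      norm_num
    -- W = ∫₀ᵗ (y-z)²
    set W : ℝ := ∫ s in (0:ℝ)..t, (y s - z s)^2 with hW_def
    have hWμ : (∫ s, |y s - z s| ^ (2:ℝ) ∂μt) = W := by
      rw [hW_def, intervalIntegral.integral_of_le ht.1]
      refine setIntegral_congr_ae measurableSet_Ioc (ae_of_all _ fun s _ => ?_)
      rw [habs_rpow]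
    have hW0 : 0 ≤ W := by
      rw [← hWμ]
      exact integral_nonneg fun s => by positivity
    -- Cauchy–Schwarz for the first integral
    have hCS1 : (∫ s in (0:ℝ)..t, |y s - z s|) ^ 2 ≤ t * W := by
      have h := integral_mul_le_Lp_mul_Lq_of_nonneg hpq
        (f := fun _ : ℝ => (1:ℝ)) (g := fun s => |y s - z s|)
        (ae_of_all _ fun _ => zero_le_one) (ae_of_all _ fun s => abs_nonneg _)
        honemem hwmem
      have h1 : (∫ s, (1:ℝ) * |y s - z s| ∂μt) = ∫ s in (0:ℝ)..t, |y s - z s| := by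
        rw [intervalIntegral.integral_of_le ht.1]
        simp
        rfl
      have h2 : (∫ _ : ℝ, (1:ℝ) ^ (2:ℝ) ∂μt) = t := by
        simp [hμt_def, Real.one_rpow, Real.volume_Ioc, ENNReal.toReal_ofReal ht.1, ht.1]
      rw [h1, h2, hWμ] at h
      have hnn : 0 ≤ ∫ s in (0:ℝ)..t, |y s - z s| :=
        intervalIntegral.integral_nonneg ht.1 fun s _ => abs_nonneg _
      have ht0 : (0:ℝ) ≤ t := ht.1
      calc (∫ s in (0:ℝ)..t, |y s - z s|) ^ 2
          ≤ (t ^ ((1:ℝ)/2) * W ^ ((1:ℝ)/2)) ^ 2 := by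
            apply pow_le_pow_left₀ hnn h
        _ = t * W := by rw [mul_pow, hsq t ht0, hsq W hW0]
    -- Cauchy–Schwarz for the second integral
    have hφ2t : (∫ s, |φ s| ^ (2:ℝ) ∂μt) ≤ A := by
      have he : (∫ s, |φ s| ^ (2:ℝ) ∂μt) = ∫ s in Ioc (0:ℝ) t, φ s ^ 2 := by
        refine setIntegral_congr_ae measurableSet_Ioc (ae_of_all _ fun s _ => ?_)
        rw [habs_rpow]
      rw [he, hA_def]
      refine setIntegral_mono_set hφsq (ae_of_all _ fun s => sq_nonneg _) ?_
      exact HasSubset.Subset.eventuallyLE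
        (Ioc_subset_Icc_self.trans (Icc_subset_Icc le_rfl ht.2))
    have hCS2 : (∫ s in (0:ℝ)..t, |y s - z s| * |φ s|) ^ 2 ≤ W * A := by
      have h := integral_mul_le_Lp_mul_Lq_of_nonneg hpq
        (f := fun s => |y s - z s|) (g := fun s => |φ s|)
        (ae_of_all _ fun s => abs_nonneg _) (ae_of_all _ fun s => abs_nonneg _)
        hwmem (by rw [hle2]; exact (by rw [hle2] at hφ2; exact hφ2.abs))
      have h1 : (∫ s, |y s - z s| * |φ s| ∂μt) = ∫ s in (0:ℝ)..t, |y s - z s| * |φ s| := by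
        rw [intervalIntegral.integral_of_le ht.1]
      have hφnn : 0 ≤ ∫ s, |φ s| ^ (2:ℝ) ∂μt :=
        integral_nonneg fun s => by positivity
      rw [h1, hWμ] at h
      have hnn : 0 ≤ ∫ s in (0:ℝ)..t, |y s - z s| * |φ s| := by
        rw [← h1]
        exact integral_nonneg fun s => by positivity
      calc (∫ s in (0:ℝ)..t, |y s - z s| * |φ s|) ^ 2
          ≤ (W ^ ((1:ℝ)/2) * (∫ s, |φ s| ^ (2:ℝ) ∂μt) ^ ((1:ℝ)/2)) ^ 2 := by
            apply pow_le_pow_left₀ hnn h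
        _ = W * (∫ s, |φ s| ^ (2:ℝ) ∂μt) := by
            rw [mul_pow, hsq W hW0, hsq _ hφnn]
        _ ≤ W * A := by
            exact mul_le_mul_of_nonneg_left hφ2t hW0
    -- combine
    have hPnn : 0 ≤ ∫ s in (0:ℝ)..t, |y s - z s| :=
      intervalIntegral.integral_nonneg ht.1 fun s _ => abs_nonneg _
    have hQnn : 0 ≤ ∫ s in (0:ℝ)..t, |y s - z s| * |φ s| :=
      intervalIntegral.integral_nonneg ht.1 fun s _ => by positivity
    have hsq_le : (Φ Y (projIcc 0 T hT' t) - Φ Z (projIcc 0 T hT' t))^2 ≤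
        ((Lb:ℝ) * (∫ s in (0:ℝ)..t, |y s - z s|)
          + (Lσ:ℝ) * (∫ s in (0:ℝ)..t, |y s - z s| * |φ s|)) ^ 2 := by
      rw [← hP]
      refine sq_le_sq' ?_ ?_
      · linarith [neg_abs_le (Φ Y (projIcc 0 T hT' t) - Φ Z (projIcc 0 T hT' t)), habs]
      · linarith [le_abs_self (Φ Y (projIcc 0 T hT' t) - Φ Z (projIcc 0 T hT' t)), habs]
    have ht2 : t ≤ T := ht.2
    calc (Φ Y (projIcc 0 T hT' t) - Φ Z (projIcc 0 T hT' t))^2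
        ≤ ((Lb:ℝ) * (∫ s in (0:ℝ)..t, |y s - z s|)
          + (Lσ:ℝ) * (∫ s in (0:ℝ)..t, |y s - z s| * |φ s|)) ^ 2 := hsq_le
      _ ≤ 2 * ((Lb:ℝ) * (∫ s in (0:ℝ)..t, |y s - z s|))^2
          + 2 * ((Lσ:ℝ) * (∫ s in (0:ℝ)..t, |y s - z s| * |φ s|))^2 := by
          have two_sq : ∀ p q : ℝ, (p + q)^2 ≤ 2 * p^2 + 2 * q^2 := fun p q => by
            nlinarith [sq_nonneg (p - q)]
          exact two_sq _ _
      _ ≤ 2 * (Lb:ℝ)^2 * (t * W) + 2 * (Lσ:ℝ)^2 * (W * A) := by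
          have l1 : ((Lb:ℝ) * (∫ s in (0:ℝ)..t, |y s - z s|))^2
              = (Lb:ℝ)^2 * (∫ s in (0:ℝ)..t, |y s - z s|)^2 := by ring
          have l2 : ((Lσ:ℝ) * (∫ s in (0:ℝ)..t, |y s - z s| * |φ s|))^2
              = (Lσ:ℝ)^2 * (∫ s in (0:ℝ)..t, |y s - z s| * |φ s|)^2 := by ring
          rw [l1, l2]
          nlinarith [mul_le_mul_of_nonneg_left hCS1 (by positivity : (0:ℝ) ≤ (Lb:ℝ)^2),
            mul_le_mul_of_nonneg_left hCS2 (by positivity : (0:ℝ) ≤ (Lσ:ℝ)^2)]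
      _ ≤ Cc * W := by
          rw [hCc_def]
          have hmono : 2 * (Lb:ℝ)^2 * (t * W) ≤ 2 * (Lb:ℝ)^2 * (T * W) := by
            apply mul_le_mul_of_nonneg_left (mul_le_mul_of_nonneg_right ht2 hW0)
            positivity
          nlinarith [hmono]
  -- iteration estimate
  have hiter : ∀ n : ℕ, ∀ Y Z : C(Icc (0:ℝ) T, ℝ), ∀ t ∈ Icc (0:ℝ) T,
      ((Φ^[n] Y) (projIcc 0 T hT' t) - (Φ^[n] Z) (projIcc 0 T hT' t))^2 ≤
        dist Y Z ^ 2 * Cc ^ n / (Nat.factorial n : ℝ) * t ^ n := by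
    intro n
    induction n with
    | zero =>
      intro Y Z t ht
      simp only [Function.iterate_zero_apply, pow_zero, Nat.factorial_zero, Nat.cast_one,
        mul_one, div_one]
      have h := hyz Y Z t
      nlinarith [h, dist_nonneg (x := Y) (y := Z), abs_nonneg ((Y (projIcc 0 T hT' t)) - Z (projIcc 0 T hT' t)),
        sq_abs ((Y (projIcc 0 T hT' t)) - Z (projIcc 0 T hT' t)),
        le_abs_self ((Y (projIcc 0 T hT' t)) - Z (projIcc 0 T hT' t)),
        neg_abs_le ((Y (projIcc 0 T hT' t)) - Z (projIcc 0 T hT' t))]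
    | succ n ih =>
      intro Y Z t ht
      have h1 : ((Φ^[n+1] Y) (projIcc 0 T hT' t) - (Φ^[n+1] Z) (projIcc 0 T hT' t))^2 ≤
          Cc * ∫ s in (0:ℝ)..t,
            ((Φ^[n] Y) (projIcc 0 T hT' s) - (Φ^[n] Z) (projIcc 0 T hT' s))^2 := by
        rw [Function.iterate_succ_apply' Φ n Y, Function.iterate_succ_apply' Φ n Z]
        exact key (Φ^[n] Y) (Φ^[n] Z) t ht
      have hic : Continuous fun s : ℝ =>
          ((Φ^[n] Y) (projIcc 0 T hT' s) - (Φ^[n] Z) (projIcc 0 T hT' s))^2 := by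
        apply Continuous.pow
        exact ((Φ^[n] Y).continuous.comp continuous_projIcc).sub
          ((Φ^[n] Z).continuous.comp continuous_projIcc)
      have h2 : (∫ s in (0:ℝ)..t,
            ((Φ^[n] Y) (projIcc 0 T hT' s) - (Φ^[n] Z) (projIcc 0 T hT' s))^2)
          ≤ ∫ s in (0:ℝ)..t, dist Y Z ^ 2 * Cc ^ n / (Nat.factorial n : ℝ) * s ^ n := by
        refine intervalIntegral.integral_mono_on ht.1 (hic.intervalIntegrable 0 t)
          ((by continuity : Continuous fun s : ℝ =>
            dist Y Z ^ 2 * Cc ^ n / (Nat.factorial n : ℝ) * s ^ n).intervalIntegrable 0 t) ?_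
        intro s hs
        exact ih Y Z s ⟨hs.1, hs.2.trans ht.2⟩
      have h3 : (∫ s in (0:ℝ)..t, dist Y Z ^ 2 * Cc ^ n / (Nat.factorial n : ℝ) * s ^ n)
          = dist Y Z ^ 2 * Cc ^ n / (Nat.factorial n : ℝ) * (t ^ (n+1) / (n+1)) := by
        rw [intervalIntegral.integral_const_mul, integral_pow]
        norm_num
      have h4 : Cc * (dist Y Z ^ 2 * Cc ^ n / (Nat.factorial n : ℝ) * (t ^ (n+1) / (n+1)))
          = dist Y Z ^ 2 * Cc ^ (n+1) / (Nat.factorial (n+1) : ℝ) * t ^ (n+1) := by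
        rw [Nat.factorial_succ]
        have hfac : ((Nat.factorial n : ℝ)) ≠ 0 := Nat.cast_ne_zero.2 (Nat.factorial_ne_zero n)
        have hn1 : ((n:ℝ) + 1) ≠ 0 := by positivity
        push_cast
        field_simp
        ring
      calc ((Φ^[n+1] Y) (projIcc 0 T hT' t) - (Φ^[n+1] Z) (projIcc 0 T hT' t))^2
          ≤ Cc * ∫ s in (0:ℝ)..t,
            ((Φ^[n] Y) (projIcc 0 T hT' s) - (Φ^[n] Z) (projIcc 0 T hT' s))^2 := h1
        _ ≤ Cc * ∫ s in (0:ℝ)..t,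
            dist Y Z ^ 2 * Cc ^ n / (Nat.factorial n : ℝ) * s ^ n := by
            exact mul_le_mul_of_nonneg_left h2 hCc
        _ = dist Y Z ^ 2 * Cc ^ (n+1) / (Nat.factorial (n+1) : ℝ) * t ^ (n+1) := by
            rw [h3, h4]
  -- Lipschitz bound for iterates
  have hlip : ∀ n : ℕ, ∀ Y Z : C(Icc (0:ℝ) T, ℝ),
      dist (Φ^[n] Y) (Φ^[n] Z) ≤ Real.sqrt (Cc ^ n * T ^ n / (Nat.factorial n : ℝ)) * dist Y Z := by
    intro n Y Z
    rw [ContinuousMap.dist_le (by positivity)]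
    intro x
    have h := hiter n Y Z ↑x x.2
    rw [projIcc_val] at h
    rw [Real.dist_eq, ← Real.sqrt_sq_eq_abs]
    have hxT : (x:ℝ) ^ n ≤ T ^ n := pow_le_pow_left₀ x.2.1 x.2.2 n
    have hb2 : ((Φ^[n] Y) x - (Φ^[n] Z) x)^2 ≤
        Cc ^ n * T ^ n / (Nat.factorial n : ℝ) * dist Y Z ^ 2 := by
      have hd2 : (0:ℝ) ≤ dist Y Z ^ 2 * Cc ^ n / (Nat.factorial n : ℝ) := by positivity
      calc ((Φ^[n] Y) x - (Φ^[n] Z) x)^2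
          ≤ dist Y Z ^ 2 * Cc ^ n / (Nat.factorial n : ℝ) * (x:ℝ) ^ n := h
        _ ≤ dist Y Z ^ 2 * Cc ^ n / (Nat.factorial n : ℝ) * T ^ n :=
            mul_le_mul_of_nonneg_left hxT hd2
        _ = Cc ^ n * T ^ n / (Nat.factorial n : ℝ) * dist Y Z ^ 2 := by ring
    calc Real.sqrt (((Φ^[n] Y) x - (Φ^[n] Z) x)^2)
        ≤ Real.sqrt (Cc ^ n * T ^ n / (Nat.factorial n : ℝ) * dist Y Z ^ 2) :=
          Real.sqrt_le_sqrt hb2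
      _ = Real.sqrt (Cc ^ n * T ^ n / (Nat.factorial n : ℝ)) * dist Y Z := by
          rw [Real.sqrt_mul (by positivity), Real.sqrt_sq dist_nonneg]
  -- choose n making the iterate a contraction
  obtain ⟨n, hn⟩ : ∃ n : ℕ, Cc ^ n * T ^ n / (Nat.factorial n : ℝ) < 1 := by
    have h := FloorSemiring.tendsto_pow_div_factorial_atTop (Cc * T)
    obtain ⟨n, hn⟩ := (h.eventually_lt_const one_pos).exists
    exact ⟨n, by rwa [mul_pow] at hn⟩
  set K : NNReal := Real.toNNReal (Real.sqrt (Cc ^ n * T ^ n / (Nat.factorial n : ℝ))) with hK_def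
  have hKcoe : (K:ℝ) = Real.sqrt (Cc ^ n * T ^ n / (Nat.factorial n : ℝ)) :=
    Real.coe_toNNReal _ (Real.sqrt_nonneg _)
  have hK1 : K < 1 := by
    rw [hK_def, Real.toNNReal_lt_one]
    exact (Real.sqrt_lt' one_pos).2 (by simpa using hn)
  have hC : ContractingWith K (Φ^[n]) := by
    refine ⟨hK1, LipschitzWith.of_dist_le_mul fun Y Z => ?_⟩
    rw [hKcoe]
    exact hlip n Y Z
  set x₀ : C(Icc (0:ℝ) T, ℝ) := ContractingWith.fixedPoint (Φ^[n]) hC with hx₀_def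
  have hfix : Function.IsFixedPt Φ x₀ := hC.isFixedPt_fixedPoint_iterate
  constructor
  · -- existence
    refine ⟨fun s => x₀ (projIcc 0 T hT' s),
      (x₀.continuous.comp continuous_projIcc).continuousOn, ?_⟩
    intro t ht
    have hvalt : ((projIcc 0 T hT' t : Icc (0:ℝ) T) : ℝ) = t := by
      rw [projIcc_of_mem hT' ht]
    have h1 : x₀ (projIcc 0 T hT' t) = Φ x₀ (projIcc 0 T hT' t) :=
      (ContinuousMap.congr_fun (hfix : Φ x₀ = x₀) _).symm
    beta_reduce
    rw [h1, hΦ_apply, hvalt,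
      intervalIntegral.integral_add (hIb x₀ t) (hIσ x₀ t ht)]
    ring
  · -- uniqueness
    intro Y Z hYc hY hZc hZ t ht
    have mkfix : ∀ (W : ℝ → ℝ), ContinuousOn W (Icc (0:ℝ) T) →
        (∀ u ∈ Icc (0:ℝ) T,
          W u = ξ + (∫ s in (0:ℝ)..u, b (W s)) + (∫ s in (0:ℝ)..u, σ (W s) * φ s) + K₀ u) →
        ∃ W' : C(Icc (0:ℝ) T, ℝ), (∀ u : Icc (0:ℝ) T, W' u = W ↑u) ∧
          Function.IsFixedPt Φ W' := by
      intro W hWc hW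
      refine ⟨⟨fun u => W ↑u, hWc.restrict⟩, fun u => rfl, ?_⟩
      set W' : C(Icc (0:ℝ) T, ℝ) := ⟨fun u => W ↑u, hWc.restrict⟩ with hW'_def
      have hcongr : ∀ v ∈ Icc (0:ℝ) T, W' (projIcc 0 T hT' v) = W v := by
        intro v hv
        rw [hW'_def]
        simp [projIcc_of_mem hT' hv]
        rfl
      apply ContinuousMap.ext
      intro u
      have hu : (u:ℝ) ∈ Icc (0:ℝ) T := u.2
      have e1 : (∫ s in (0:ℝ)..(u:ℝ), b (W' (projIcc 0 T hT' s)))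
          = ∫ s in (0:ℝ)..(u:ℝ), b (W s) := by
        refine intervalIntegral.integral_congr ?_
        intro s hs
        rw [uIcc_of_le hu.1] at hs
        simp only [hcongr s ⟨hs.1, hs.2.trans hu.2⟩]
      have e2 : (∫ s in (0:ℝ)..(u:ℝ), σ (W' (projIcc 0 T hT' s)) * φ s)
          = ∫ s in (0:ℝ)..(u:ℝ), σ (W s) * φ s := by
        refine intervalIntegral.integral_congr ?_
        intro s hs
        rw [uIcc_of_le hu.1] at hs
        simp only [hcongr s ⟨hs.1, hs.2.trans hu.2⟩]
      have : Φ W' u = ξ + (∫ s in (0:ℝ)..(u:ℝ), b (W s))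
          + (∫ s in (0:ℝ)..(u:ℝ), σ (W s) * φ s) + K₀ ↑u := by
        rw [hΦ_apply, intervalIntegral.integral_add (hIb W' ↑u) (hIσ W' ↑u hu), e1, e2]
        ring
      rw [this, ← hW ↑u hu]
      rfl
    obtain ⟨Y', hY'val, hY'fix⟩ := mkfix Y hYc hY
    obtain ⟨Z', hZ'val, hZ'fix⟩ := mkfix Z hZc hZ
    have : Y' = Z' :=
      hC.fixedPoint_unique' (hY'fix.iterate n) (hZ'fix.iterate n)
    have h := ContinuousMap.congr_fun this ⟨t, ht⟩
    rw [hY'val ⟨t, ht⟩, hZ'val ⟨t, ht⟩] at h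
    exact h
end

section
/- Under the setting of the skeleton equation with b, σ Lipschitz and φ in the L² ball of radius N, the solutions Y^φ satisfy the uniform modulus-of-continuity estimate: for all 0 ≤ s < t ≤ T, |Y^φ(t) − Y^φ(s)|² ≤ C[(t−s)² + (t−s)] + C|K⁰(t) − K⁰(s)|², where C depends only on T, N, ξ, the Lipschitz constants and K⁰(T), but not on φ. -/
open MeasureTheory Set

lemma my_gronwall (f : ℝ → ℝ) (hf : Continuous f) (T A B : ℝ) (hA : 0 ≤ A) (hB : 0 ≤ B)
    (h : ∀ t ∈ Icc 0 T, f t ≤ A + B * ∫ s in (0:ℝ)..t, f s) :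
    ∀ t ∈ Icc 0 T, f t ≤ A * Real.exp (B * t) := by
  set g : ℝ → ℝ := fun t => A + B * ∫ s in (0:ℝ)..t, f s with hg
  have hgd : ∀ t : ℝ, HasDerivAt g (B * f t) t := by
    intro t
    have h1 : HasDerivAt (fun u => ∫ s in (0:ℝ)..u, f s) (f t) t :=
      intervalIntegral.integral_hasDerivAt_right (hf.intervalIntegrable _ _)
        (hf.stronglyMeasurableAtFilter _ _) hf.continuousAt
    exact (h1.const_mul B).const_add A
  set hfun : ℝ → ℝ := fun t => g t * Real.exp (-B * t) with hh
  have hhd : ∀ t : ℝ, HasDerivAt hfun (B * f t * Real.exp (-B * t) + g t * (Real.exp (-B * t) * (-B))) t := by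
    intro t
    have : HasDerivAt (fun t => Real.exp (-B * t)) (Real.exp (-B * t) * (-B)) t := by
      simpa using (((hasDerivAt_id t).const_mul (-B)).exp)
    exact (hgd t).mul this
  have hanti : AntitoneOn hfun (Icc 0 T) := by
    apply antitoneOn_of_deriv_nonpos (convex_Icc 0 T)
    · exact Continuous.continuousOn (continuous_iff_continuousAt.2 fun x => (hhd x).continuousAt)
    · intro x hx; exact ((hhd x).differentiableAt).differentiableWithinAt
    · intro x hx
      rw [interior_Icc] at hx
      rw [(hhd x).deriv]
      have hfg : f x ≤ g x := h x ⟨hx.1.le, hx.2.le⟩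
      have he : 0 < Real.exp (-B * x) := Real.exp_pos _
      nlinarith [mul_le_mul_of_nonneg_left hfg hB]
  intro t ht
  have h0 : hfun t ≤ hfun 0 := hanti (left_mem_Icc.2 (ht.1.trans ht.2)) ht ht.1
  have h00 : hfun 0 = A := by simp [hh, hg]
  have h2 : g t * Real.exp (-B * t) ≤ A := by rw [← h00]; exact h0
  have h3 : g t ≤ A * Real.exp (B * t) := by
    have hexp : Real.exp (-B * t) * Real.exp (B * t) = 1 := by
      rw [← Real.exp_add]; ring_nf; exact Real.exp_zero
    calc g t = g t * Real.exp (-B * t) * Real.exp (B * t) := by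
          rw [mul_assoc, hexp, mul_one]
      _ ≤ A * Real.exp (B * t) :=
          mul_le_mul_of_nonneg_right h2 (Real.exp_pos _).le
  have hgt : g t = A + B * ∫ s in (0:ℝ)..t, f s := rfl
  linarith [h t ht]

lemma my_CS (μ : Measure ℝ) (f g : ℝ → ℝ) (hf : MemLp f 2 μ) (hg : MemLp g 2 μ) :
    (∫ x, f x * g x ∂μ)^2 ≤ (∫ x, (f x)^2 ∂μ) * (∫ x, (g x)^2 ∂μ) := by
  have hconj : Real.HolderConjugate 2 2 := ⟨by norm_num, by norm_num, by norm_num⟩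
  have h2 : ENNReal.ofReal (2:ℝ) = 2 := by norm_num
  have key := integral_mul_norm_le_Lp_mul_Lq (μ := μ) hconj (h2.symm ▸ hf) (h2.symm ▸ hg)
  have e1 : ∀ x : ℝ, ‖x‖ ^ (2:ℝ) = x ^ 2 := by
    intro x
    rw [show (2:ℝ) = ((2:ℕ):ℝ) by norm_num, Real.rpow_natCast]
    simp [sq_abs]
  simp only [e1] at key
  have hA : 0 ≤ ∫ x, (f x)^2 ∂μ := integral_nonneg fun x => sq_nonneg _
  have hB : 0 ≤ ∫ x, (g x)^2 ∂μ := integral_nonneg fun x => sq_nonneg _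
  have habs : |∫ x, f x * g x ∂μ| ≤ (∫ x, (f x)^2 ∂μ) ^ (1/2:ℝ) * (∫ x, (g x)^2 ∂μ) ^ (1/2:ℝ) := by
    calc |∫ x, f x * g x ∂μ| ≤ ∫ x, ‖f x‖ * ‖g x‖ ∂μ := by
          simpa [Real.norm_eq_abs, abs_mul] using norm_integral_le_integral_norm (fun x => f x * g x) (μ := μ)
      _ ≤ _ := key
  have hsq : (∫ x, f x * g x ∂μ)^2 ≤ ((∫ x, (f x)^2 ∂μ) ^ (1/2:ℝ) * (∫ x, (g x)^2 ∂μ) ^ (1/2:ℝ))^2 := by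
    rw [← sq_abs]
    exact pow_le_pow_left₀ (abs_nonneg _) habs 2
  calc (∫ x, f x * g x ∂μ)^2 ≤ _ := hsq
    _ = (∫ x, (f x)^2 ∂μ) * (∫ x, (g x)^2 ∂μ) := by
        rw [mul_pow, ← Real.rpow_natCast (_ ^ (1/2:ℝ)) 2, ← Real.rpow_natCast (_ ^ (1/2:ℝ)) 2,
          ← Real.rpow_mul hA, ← Real.rpow_mul hB]
        norm_num

lemma my_CS_interval (a b : ℝ) (hab : a ≤ b) (f g : ℝ → ℝ)
    (hf : MemLp f 2 (volume.restrict (Ioc a b))) (hg : MemLp g 2 (volume.restrict (Ioc a b))) :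
    (∫ u in a..b, f u * g u)^2 ≤ (∫ u in a..b, (f u)^2) * (∫ u in a..b, (g u)^2) := by
  rw [intervalIntegral.integral_of_le hab, intervalIntegral.integral_of_le hab,
    intervalIntegral.integral_of_le hab]
  exact my_CS _ f g hf hg

instance my_finite (a b : ℝ) : IsFiniteMeasure (volume.restrict (Ioc a b)) :=
  ⟨by rw [Measure.restrict_apply_univ]; exact measure_Ioc_lt_top⟩

lemma memL2_Ioc (a b C : ℝ) (f : ℝ → ℝ) (hf : Continuous f) (hC : ∀ x, |f x| ≤ C) :
    MemLp f 2 (volume.restrict (Ioc a b)) :=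
  MemLp.of_bound hf.aestronglyMeasurable C (ae_of_all _ (by simpa [Real.norm_eq_abs] using hC))

set_option maxHeartbeats 1000000 in
theorem stmt6
    (T : ℝ) (hT : 0 < T) (ξ : ℝ) (N : ℝ) (hN : 0 < N)
    (b σ : ℝ → ℝ) (Lb Lσ : NNReal)
    (hb : LipschitzWith Lb b) (hσ : LipschitzWith Lσ σ)
    (K₀ : ℝ → ℝ) (hK₀c : ContinuousOn K₀ (Icc 0 T))
    (hK₀m : MonotoneOn K₀ (Icc 0 T)) (hK₀0 : K₀ 0 = 0) :
    ∃ C : ℝ, ∀ φ : ℝ → ℝ,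
      MemLp φ 2 (volume.restrict (Icc (0:ℝ) T)) →
      (∫ s in (0:ℝ)..T, (φ s) ^ 2) ≤ N →
      ∀ Y : ℝ → ℝ, ContinuousOn Y (Icc 0 T) →
        (∀ t ∈ Icc (0:ℝ) T,
          Y t = ξ + (∫ s in (0:ℝ)..t, b (Y s)) + (∫ s in (0:ℝ)..t, σ (Y s) * φ s) + K₀ t) →
        ∀ s t : ℝ, 0 ≤ s → s < t → t ≤ T →
          |Y t - Y s| ^ 2 ≤ C * ((t - s) ^ 2 + (t - s)) + C * |K₀ t - K₀ s| ^ 2 := by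
  -- Lipschitz growth bounds
  have hbg : ∀ y : ℝ, |b y| ≤ |b 0| + (Lb:ℝ) * |y| := by
    intro y
    have := hb.dist_le_mul y 0
    rw [Real.dist_eq, Real.dist_eq, sub_zero] at this
    have h2 : |b y| - |b 0| ≤ (Lb:ℝ) * |y| := (abs_sub_abs_le_abs_sub _ _).trans this
    linarith
  have hσg : ∀ y : ℝ, |σ y| ≤ |σ 0| + (Lσ:ℝ) * |y| := by
    intro y
    have := hσ.dist_le_mul y 0
    rw [Real.dist_eq, Real.dist_eq, sub_zero] at this
    have h2 : |σ y| - |σ 0| ≤ (Lσ:ℝ) * |y| := (abs_sub_abs_le_abs_sub _ _).trans this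
    linarith
  set b0 : ℝ := |b 0| with hb0
  set s0 : ℝ := |σ 0| with hs0
  have hb0n : 0 ≤ b0 := abs_nonneg _
  have hs0n : 0 ≤ s0 := abs_nonneg _
  have hLbn : (0:ℝ) ≤ (Lb:ℝ) := Lb.2
  have hLσn : (0:ℝ) ≤ (Lσ:ℝ) := Lσ.2
  have hKT : 0 ≤ K₀ T := by
    rw [← hK₀0]
    exact hK₀m (left_mem_Icc.2 hT.le) (right_mem_Icc.2 hT.le) hT.le
  set A : ℝ := 4*ξ^2 + 4*(K₀ T)^2 + 8*T^2*b0^2 + 8*N*T*s0^2 with hA_def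
  set B : ℝ := 8*T*(Lb:ℝ)^2 + 8*N*(Lσ:ℝ)^2 with hB_def
  have hA : 0 ≤ A := by positivity
  have hB : 0 ≤ B := by positivity
  set M2 : ℝ := A * Real.exp (B*T) with hM2_def
  have hM2n : 0 ≤ M2 := mul_nonneg hA (Real.exp_pos _).le
  set Cb : ℝ := b0 + (Lb:ℝ) * Real.sqrt M2 with hCb_def
  have hCbn : 0 ≤ Cb := by positivity
  set Cσ2 : ℝ := 2*s0^2 + 2*(Lσ:ℝ)^2*M2 with hCσ2_def
  have hCσ2n : 0 ≤ Cσ2 := by positivity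
  refine ⟨3*(Cb^2 + N*Cσ2 + 1), ?_⟩
  intro φ hφ hφN Y hYc hYeq s t hs hst htT
  have hstle : s ≤ t := hst.le
  have hsmem : s ∈ Icc 0 T := ⟨hs, hstle.trans htT⟩
  have htmem : t ∈ Icc 0 T := ⟨hs.trans hstle, htT⟩
  -- clamp and Z
  set c : ℝ → ℝ := fun u => max 0 (min u T) with hc_def
  have hc_cont : Continuous c := continuous_const.max (continuous_id.min continuous_const)
  have hc_mem : ∀ u, c u ∈ Icc 0 T := fun u =>
    ⟨le_max_left _ _, max_le hT.le (min_le_right _ _)⟩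
  have hc_eq : ∀ u ∈ Icc (0:ℝ) T, c u = u := by
    intro u hu
    simp [hc_def, min_eq_left hu.2, max_eq_right hu.1]
  set Z : ℝ → ℝ := fun u => Y (c u) with hZ_def
  have hZc : Continuous Z := hYc.comp_continuous hc_cont hc_mem
  have hZeq : ∀ u ∈ Icc (0:ℝ) T, Z u = Y u := fun u hu => by rw [hZ_def]; simp [hc_eq u hu]
  -- rewrite equation with Z
  have hYeq' : ∀ u ∈ Icc (0:ℝ) T,
      Y u = ξ + (∫ v in (0:ℝ)..u, b (Z v)) + (∫ v in (0:ℝ)..u, σ (Z v) * φ v) + K₀ u := by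
    intro u hu
    have h1 : (∫ v in (0:ℝ)..u, b (Y v)) = ∫ v in (0:ℝ)..u, b (Z v) :=
      intervalIntegral.integral_congr (fun v hv => by
        rw [uIcc_of_le hu.1] at hv
        rw [hZeq v ⟨hv.1, hv.2.trans hu.2⟩])
    have h2 : (∫ v in (0:ℝ)..u, σ (Y v) * φ v) = ∫ v in (0:ℝ)..u, σ (Z v) * φ v :=
      intervalIntegral.integral_congr (fun v hv => by
        rw [uIcc_of_le hu.1] at hv
        rw [hZeq v ⟨hv.1, hv.2.trans hu.2⟩])
    rw [hYeq u hu, h1, h2]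
  -- integrability facts
  have hφL2 : ∀ a d : ℝ, 0 ≤ a → d ≤ T → MemLp φ 2 (volume.restrict (Ioc a d)) := by
    intro a d ha hd
    refine hφ.mono_measure (Measure.restrict_mono ?_ le_rfl)
    exact fun x hx => ⟨ha.trans hx.1.le, hx.2.trans hd⟩
  have hφint : ∀ a d : ℝ, 0 ≤ a → d ≤ T → IntegrableOn φ (Ioc a d) volume := by
    intro a d ha hd
    exact (hφL2 a d ha hd).integrable one_le_two
  -- bound on σ∘Z before Gronwall: Z is bounded since Y is bounded on the compact Icc
  obtain ⟨My, hMy⟩ : ∃ My, ∀ x ∈ Icc (0:ℝ) T, ‖Y x‖ ≤ My :=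
    (isCompact_Icc).exists_bound_of_continuousOn hYc
  have hZbdd : ∀ u, |Z u| ≤ My := fun u => hMy (c u) (hc_mem u)
  have hσZb : ∀ u, |σ (Z u)| ≤ s0 + (Lσ:ℝ) * My := by
    intro u
    have h1 := hσg (Z u)
    have h2 := mul_le_mul_of_nonneg_left (hZbdd u) hLσn
    linarith only [h1, h2]
  have hσφint : ∀ a d : ℝ, 0 ≤ a → d ≤ T →
      IntegrableOn (fun u => σ (Z u) * φ u) (Ioc a d) volume := by
    intro a d ha hd
    exact (hφint a d ha hd).bdd_mul (c := s0 + (Lσ:ℝ) * My) (hσ.continuous.comp hZc).aestronglyMeasurable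
      (ae_of_all _ fun x => by simpa [Real.norm_eq_abs] using hσZb x)
  have hσφii : ∀ a d : ℝ, 0 ≤ a → a ≤ d → d ≤ T →
      IntervalIntegrable (fun u => σ (Z u) * φ u) volume a d := by
    intro a d ha had hd
    exact (intervalIntegrable_iff_integrableOn_Ioc_of_le had).2 (hσφint a d ha hd)
  -- φ² facts
  have hφsqint : IntegrableOn (fun u => (φ u)^2) (Icc 0 T) volume := hφ.integrable_sq
  have hφsqii : IntervalIntegrable (fun u => (φ u)^2) volume 0 T :=
    (intervalIntegrable_iff_integrableOn_Ioc_of_le hT.le).2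
      (hφsqint.mono_set Ioc_subset_Icc_self)
  have hφsqle : ∀ a d : ℝ, 0 ≤ a → a ≤ d → d ≤ T → (∫ u in a..d, (φ u)^2) ≤ N := by
    intro a d ha had hd
    refine le_trans ?_ hφN
    exact intervalIntegral.integral_mono_interval ha had hd
      (ae_of_all _ fun u => sq_nonneg _) hφsqii
  have hφsqnn : ∀ a d : ℝ, a ≤ d → 0 ≤ ∫ u in a..d, (φ u)^2 := fun a d had =>
    intervalIntegral.integral_nonneg had fun u _ => sq_nonneg _
  -- Step 1 : Gronwall bound
  have hgronh : ∀ u ∈ Icc (0:ℝ) T, (Z u)^2 ≤ A + B * ∫ v in (0:ℝ)..u, (Z v)^2 := by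
    intro u hu
    set I1 : ℝ := ∫ v in (0:ℝ)..u, b (Z v) with hI1_def
    set I2 : ℝ := ∫ v in (0:ℝ)..u, σ (Z v) * φ v with hI2_def
    have hZu : Z u = ξ + I1 + I2 + K₀ u := by rw [hZeq u hu]; exact hYeq' u hu
    set ZT2 : ℝ := ∫ v in (0:ℝ)..u, (Z v)^2 with hZT2_def
    have hZT2nn : 0 ≤ ZT2 := intervalIntegral.integral_nonneg hu.1 fun v _ => sq_nonneg _
    -- I1 bound
    have hbZmem : MemLp (fun v => b (Z v)) 2 (volume.restrict (Ioc 0 u)) :=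
      memL2_Ioc 0 u (b0 + (Lb:ℝ)*My) _ (hb.continuous.comp hZc) (fun x => by
        have h1 := hbg (Z x)
        have h2 := mul_le_mul_of_nonneg_left (hZbdd x) hLbn
        linarith only [h1, h2])
    have honemem : MemLp (fun _ : ℝ => (1:ℝ)) 2 (volume.restrict (Ioc 0 u)) :=
      memL2_Ioc 0 u 1 _ continuous_const (fun x => by norm_num)
    have hCS1 := my_CS_interval 0 u hu.1 (fun v => b (Z v)) (fun _ => 1) hbZmem honemem
    simp only [mul_one, one_pow] at hCS1
    have hone : (∫ _ in (0:ℝ)..u, (1:ℝ)) = u := by simp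
    rw [hone] at hCS1
    -- pointwise bound on b(Z)²
    have hbZsq : ∀ v, (b (Z v))^2 ≤ 2*b0^2 + 2*(Lb:ℝ)^2*(Z v)^2 := by
      intro v
      have h1 := hbg (Z v)
      nlinarith only [h1, abs_nonneg (Z v), sq_abs (Z v), sq_abs (b (Z v)), hb0n, hLbn,
        sq_nonneg (b0 - (Lb:ℝ) * |Z v|), abs_nonneg (b (Z v))]
    have hbZint : (∫ v in (0:ℝ)..u, (b (Z v))^2) ≤ 2*b0^2*u + 2*(Lb:ℝ)^2*ZT2 := by
      have hmono : (∫ v in (0:ℝ)..u, (b (Z v))^2)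
          ≤ ∫ v in (0:ℝ)..u, (2*b0^2 + 2*(Lb:ℝ)^2*(Z v)^2) := by
        apply intervalIntegral.integral_mono_on hu.1
        · exact ((hb.continuous.comp hZc).pow 2).intervalIntegrable _ _
        · exact (continuous_const.add (continuous_const.mul ((hZc.pow 2)))).intervalIntegrable _ _
        · exact fun v _ => hbZsq v
      have heq : (∫ v in (0:ℝ)..u, (2*b0^2 + 2*(Lb:ℝ)^2*(Z v)^2))
          = 2*b0^2*u + 2*(Lb:ℝ)^2*ZT2 := by
        rw [intervalIntegral.integral_add (g := fun v => 2*(Lb:ℝ)^2*(Z v)^2) (intervalIntegrable_const)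
          ((continuous_const.mul (hZc.pow 2)).intervalIntegrable _ _),
          intervalIntegral.integral_const,
          intervalIntegral.integral_const_mul]
        simp [hZT2_def, smul_eq_mul]; ring
      linarith
    have hbZnn : 0 ≤ ∫ v in (0:ℝ)..u, (b (Z v))^2 :=
      intervalIntegral.integral_nonneg hu.1 fun v _ => sq_nonneg _
    have hI1b : I1^2 ≤ 2*T^2*b0^2 + 2*T*(Lb:ℝ)^2*ZT2 := by
      have h1 : I1^2 ≤ (2*b0^2*u + 2*(Lb:ℝ)^2*ZT2) * u := by
        calc I1^2 ≤ (∫ v in (0:ℝ)..u, (b (Z v))^2) * u := hCS1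
          _ ≤ _ := mul_le_mul_of_nonneg_right hbZint hu.1
      have hu2 : u^2 ≤ T^2 := pow_le_pow_left₀ hu.1 hu.2 2
      have h3 : b0^2*u^2 ≤ b0^2*T^2 := mul_le_mul_of_nonneg_left hu2 (sq_nonneg b0)
      have h4 : ((Lb:ℝ)^2*ZT2)*u ≤ ((Lb:ℝ)^2*ZT2)*T :=
        mul_le_mul_of_nonneg_left hu.2 (mul_nonneg (sq_nonneg _) hZT2nn)
      nlinarith only [h1, h3, h4]
    -- I2 bound
    have hσZmem : MemLp (fun v => σ (Z v)) 2 (volume.restrict (Ioc 0 u)) :=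
      memL2_Ioc 0 u (s0 + (Lσ:ℝ)*My) _ (hσ.continuous.comp hZc) hσZb
    have hCS2 := my_CS_interval 0 u hu.1 (fun v => σ (Z v)) φ hσZmem (hφL2 0 u le_rfl hu.2)
    have hσZsq : ∀ v, (σ (Z v))^2 ≤ 2*s0^2 + 2*(Lσ:ℝ)^2*(Z v)^2 := by
      intro v
      have h1 := hσg (Z v)
      nlinarith only [h1, abs_nonneg (Z v), sq_abs (Z v), sq_abs (σ (Z v)), hs0n, hLσn,
        sq_nonneg (s0 - (Lσ:ℝ) * |Z v|), abs_nonneg (σ (Z v))]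
    have hσZint : (∫ v in (0:ℝ)..u, (σ (Z v))^2) ≤ 2*s0^2*u + 2*(Lσ:ℝ)^2*ZT2 := by
      have hmono : (∫ v in (0:ℝ)..u, (σ (Z v))^2)
          ≤ ∫ v in (0:ℝ)..u, (2*s0^2 + 2*(Lσ:ℝ)^2*(Z v)^2) := by
        apply intervalIntegral.integral_mono_on hu.1
        · exact ((hσ.continuous.comp hZc).pow 2).intervalIntegrable _ _
        · exact (continuous_const.add (continuous_const.mul ((hZc.pow 2)))).intervalIntegrable _ _
        · exact fun v _ => hσZsq v
      have heq : (∫ v in (0:ℝ)..u, (2*s0^2 + 2*(Lσ:ℝ)^2*(Z v)^2))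
          = 2*s0^2*u + 2*(Lσ:ℝ)^2*ZT2 := by
        rw [intervalIntegral.integral_add (g := fun v => 2*(Lσ:ℝ)^2*(Z v)^2) (intervalIntegrable_const)
          ((continuous_const.mul (hZc.pow 2)).intervalIntegrable _ _),
          intervalIntegral.integral_const,
          intervalIntegral.integral_const_mul]
        simp [hZT2_def, smul_eq_mul]; ring
      linarith
    have hσZnn : 0 ≤ ∫ v in (0:ℝ)..u, (σ (Z v))^2 :=
      intervalIntegral.integral_nonneg hu.1 fun v _ => sq_nonneg _
    have hI2b : I2^2 ≤ 2*N*T*s0^2 + 2*N*(Lσ:ℝ)^2*ZT2 := by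
      have h1 : I2^2 ≤ (∫ v in (0:ℝ)..u, (σ (Z v))^2) * N :=
        hCS2.trans (mul_le_mul_of_nonneg_left (hφsqle 0 u le_rfl hu.1 hu.2) hσZnn)
      have h2 : (∫ v in (0:ℝ)..u, (σ (Z v))^2) * N ≤ (2*s0^2*u + 2*(Lσ:ℝ)^2*ZT2) * N :=
        mul_le_mul_of_nonneg_right hσZint hN.le
      have h3 : (s0^2*N)*u ≤ (s0^2*N)*T :=
        mul_le_mul_of_nonneg_left hu.2 (mul_nonneg (sq_nonneg s0) hN.le)
      nlinarith only [h1, h2, h3]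
    -- K₀ bound
    have hK0u : 0 ≤ K₀ u := by rw [← hK₀0]; exact hK₀m (left_mem_Icc.2 hT.le) hu hu.1
    have hKu : K₀ u ≤ K₀ T := hK₀m hu (right_mem_Icc.2 hT.le) hu.2
    -- combine
    rw [hZu]
    have hsum : (ξ + I1 + I2 + K₀ u)^2 ≤ 4*(ξ^2 + I1^2 + I2^2 + (K₀ u)^2) := by
      nlinarith only [sq_nonneg (ξ - I1), sq_nonneg (ξ - I2), sq_nonneg (ξ - K₀ u),
        sq_nonneg (I1 - I2), sq_nonneg (I1 - K₀ u), sq_nonneg (I2 - K₀ u)]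
    have hKsq : (K₀ u)^2 ≤ (K₀ T)^2 := by nlinarith only [hK0u, hKu]
    have hAB : A + B * ZT2 = 4*ξ^2 + 4*(K₀ T)^2 + 8*T^2*b0^2 + 8*N*T*s0^2
        + (8*T*(Lb:ℝ)^2 + 8*N*(Lσ:ℝ)^2) * ZT2 := by rw [hA_def, hB_def]
    rw [hAB]
    nlinarith only [hsum, hKsq, hI1b, hI2b]
  have hgron := my_gronwall (fun u => (Z u)^2) (hZc.pow 2) T A B hA hB hgronh
  have hZM2 : ∀ u ∈ Icc (0:ℝ) T, (Z u)^2 ≤ M2 := by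
    intro u hu
    refine (hgron u hu).trans ?_
    rw [hM2_def]
    exact mul_le_mul_of_nonneg_left (Real.exp_le_exp.2 (mul_le_mul_of_nonneg_left hu.2 hB)) hA
  have hZM2' : ∀ u, (Z u)^2 ≤ M2 := by
    intro u
    have h1 := hZM2 (c u) (hc_mem u)
    have h2 : Z (c u) = Z u := by
      rw [hZ_def]
      simp only
      rw [hc_eq (c u) (hc_mem u)]
    rwa [h2] at h1
  have hZabs : ∀ u, |Z u| ≤ Real.sqrt M2 := by
    intro u
    rw [← Real.sqrt_sq_eq_abs]
    exact Real.sqrt_le_sqrt (hZM2' u)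
  -- Step 3 : increments
  set J1 : ℝ := ∫ u in s..t, b (Z u) with hJ1_def
  set J2 : ℝ := ∫ u in s..t, σ (Z u) * φ u with hJ2_def
  have hbZii : ∀ a d : ℝ, IntervalIntegrable (fun u => b (Z u)) volume a d :=
    fun a d => (hb.continuous.comp hZc).intervalIntegrable _ _
  have hsplit1 : (∫ u in (0:ℝ)..t, b (Z u)) - (∫ u in (0:ℝ)..s, b (Z u)) = J1 :=
    intervalIntegral.integral_interval_sub_left (hbZii 0 t) (hbZii 0 s)
  have hsplit2 : (∫ u in (0:ℝ)..t, σ (Z u) * φ u) - (∫ u in (0:ℝ)..s, σ (Z u) * φ u) = J2 :=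
    intervalIntegral.integral_interval_sub_left (hσφii 0 t le_rfl htmem.1 htT)
      (hσφii 0 s le_rfl hs (hsmem.2))
  have hdiff : Y t - Y s = J1 + J2 + (K₀ t - K₀ s) := by
    rw [hYeq' t htmem, hYeq' s hsmem]
    rw [← hsplit1, ← hsplit2]
    ring
  -- J1 bound
  have hJ1b : |J1| ≤ Cb * (t - s) := by
    have h1 : ‖J1‖ ≤ Cb * |t - s| := by
      apply intervalIntegral.norm_integral_le_of_norm_le_const
      intro x hx
      rw [Real.norm_eq_abs]
      have h2 := hbg (Z x)
      have h3 := mul_le_mul_of_nonneg_left (hZabs x) hLbn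
      rw [hCb_def]
      linarith only [h2, h3]
    rwa [Real.norm_eq_abs, abs_of_nonneg (by linarith : (0:ℝ) ≤ t - s)] at h1
  have hJ1sq : J1^2 ≤ Cb^2 * (t-s)^2 := by
    have := pow_le_pow_left₀ (abs_nonneg J1) hJ1b 2
    rw [sq_abs] at this
    calc J1^2 ≤ (Cb * (t-s))^2 := this
      _ = Cb^2 * (t-s)^2 := by ring
  -- J2 bound
  have hσZmem' : MemLp (fun v => σ (Z v)) 2 (volume.restrict (Ioc s t)) :=
    memL2_Ioc s t (s0 + (Lσ:ℝ)*My) _ (hσ.continuous.comp hZc) hσZb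
  have hCS3 := my_CS_interval s t hstle (fun v => σ (Z v)) φ hσZmem' (hφL2 s t hs htT)
  have hσZc : ∀ v, (σ (Z v))^2 ≤ Cσ2 := by
    intro v
    have h1 := hσg (Z v)
    have h2 := hZM2' v
    rw [hCσ2_def]
    nlinarith only [h1, h2, abs_nonneg (Z v), sq_abs (Z v), sq_abs (σ (Z v)), hs0n, hLσn,
      sq_nonneg (s0 - (Lσ:ℝ) * |Z v|), abs_nonneg (σ (Z v))]
  have hσZint3 : (∫ v in s..t, (σ (Z v))^2) ≤ Cσ2 * (t - s) := by
    have h1 : (∫ v in s..t, (σ (Z v))^2) ≤ ∫ _ in s..t, Cσ2 := by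
      apply intervalIntegral.integral_mono_on hstle
      · exact ((hσ.continuous.comp hZc).pow 2).intervalIntegrable _ _
      · exact intervalIntegrable_const
      · exact fun v _ => hσZc v
    rw [intervalIntegral.integral_const, smul_eq_mul] at h1
    linarith [h1]
  have hσZnn3 : 0 ≤ ∫ v in s..t, (σ (Z v))^2 :=
    intervalIntegral.integral_nonneg hstle fun v _ => sq_nonneg _
  have hJ2sq : J2^2 ≤ Cσ2 * (t - s) * N := by
    calc J2^2 ≤ (∫ v in s..t, (σ (Z v))^2) * (∫ v in s..t, (φ v)^2) := hCS3
      _ ≤ (∫ v in s..t, (σ (Z v))^2) * N :=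
          mul_le_mul_of_nonneg_left (hφsqle s t hs hstle htT) hσZnn3
      _ ≤ Cσ2 * (t - s) * N := mul_le_mul_of_nonneg_right hσZint3 hN.le
  -- final
  rw [sq_abs, hdiff, sq_abs]
  have hsum3 : (J1 + J2 + (K₀ t - K₀ s))^2 ≤ 3*(J1^2 + J2^2 + (K₀ t - K₀ s)^2) := by
    nlinarith only [sq_nonneg (J1 - J2), sq_nonneg (J1 - (K₀ t - K₀ s)),
      sq_nonneg (J2 - (K₀ t - K₀ s))]
  have hts1 : (0:ℝ) ≤ t - s := by linarith only [hstle]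
  nlinarith only [hsum3, hJ1sq, hJ2sq, sq_nonneg (t - s), sq_nonneg (K₀ t - K₀ s),
    hts1, hN.le, hCσ2n, sq_nonneg Cb,
    mul_nonneg (mul_nonneg hN.le hCσ2n) (sq_nonneg (t-s)),
    mul_nonneg (sq_nonneg Cb) hts1,
    mul_nonneg (mul_nonneg hN.le hCσ2n) hts1,
    mul_nonneg (sq_nonneg Cb) (sq_nonneg (K₀ t - K₀ s)),
    mul_nonneg (mul_nonneg hN.le hCσ2n) (sq_nonneg (K₀ t - K₀ s))]
end

section
/- Let b, σ : ℝ → ℝ be Lipschitz, K⁰ continuous nondecreasing with K⁰(0)=0, and N > 0. Suppose (φₙ) ⊂ L²([0,T],ℝ) satisfies ∫₀ᵀ|φₙ|² ≤ N for all n and φₙ converges weakly in L² to φ. Then the solutions Yⁿ of the skeleton equation with control φₙ converge uniformly on [0,T] to the solution Y with control φ. -/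
open MeasureTheory Set Filter

lemma cs_abs {μ : Measure ℝ} {f g : ℝ → ℝ} (hf : MemLp f 2 μ) (hg : MemLp g 2 μ) :
    |∫ a, f a * g a ∂μ| ≤ Real.sqrt (∫ a, f a ^ 2 ∂μ) * Real.sqrt (∫ a, g a ^ 2 ∂μ) := by
  have hpq : Real.HolderConjugate 2 2 := Real.holderConjugate_iff.mpr ⟨by norm_num, by norm_num⟩
  have hf2 : MemLp (fun a => |f a|) (ENNReal.ofReal 2) μ := by
    simpa [ENNReal.ofReal_ofNat] using hf.norm
  have hg2 : MemLp (fun a => |g a|) (ENNReal.ofReal 2) μ := by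
    simpa [ENNReal.ofReal_ofNat] using hg.norm
  have H := MeasureTheory.integral_mul_le_Lp_mul_Lq_of_nonneg hpq
    (Filter.Eventually.of_forall fun a => abs_nonneg (f a))
    (Filter.Eventually.of_forall fun a => abs_nonneg (g a)) hf2 hg2
  have e1 : ∀ (h : ℝ → ℝ), (∫ a, |h a| ^ (2:ℝ) ∂μ) = ∫ a, h a ^ 2 ∂μ := by
    intro h; congr 1; funext a
    rw [show ((2:ℝ)) = ((2:ℕ):ℝ) by norm_num, Real.rpow_natCast, sq_abs]
  rw [e1, e1] at H
  calc |∫ a, f a * g a ∂μ| ≤ ∫ a, |f a| * |g a| ∂μ := by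
        simpa [Real.norm_eq_abs, abs_mul] using
          norm_integral_le_integral_norm (μ := μ) (fun a => f a * g a)
    _ ≤ (∫ a, f a ^ 2 ∂μ) ^ ((1:ℝ)/2) * (∫ a, g a ^ 2 ∂μ) ^ ((1:ℝ)/2) := H
    _ = _ := by rw [Real.sqrt_eq_rpow, Real.sqrt_eq_rpow]

lemma cs_sq {μ : Measure ℝ} {f g : ℝ → ℝ} (hf : MemLp f 2 μ) (hg : MemLp g 2 μ) :
    (∫ a, f a * g a ∂μ) ^ 2 ≤ (∫ a, f a ^ 2 ∂μ) * (∫ a, g a ^ 2 ∂μ) := by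
  have h := cs_abs hf hg
  have h1 : (0:ℝ) ≤ ∫ a, f a ^ 2 ∂μ := integral_nonneg fun a => sq_nonneg _
  have h2 : (0:ℝ) ≤ ∫ a, g a ^ 2 ∂μ := integral_nonneg fun a => sq_nonneg _
  calc (∫ a, f a * g a ∂μ) ^ 2 = |∫ a, f a * g a ∂μ| ^ 2 := (sq_abs _).symm
    _ ≤ (Real.sqrt (∫ a, f a ^ 2 ∂μ) * Real.sqrt (∫ a, g a ^ 2 ∂μ)) ^ 2 := by
        exact pow_le_pow_left₀ (abs_nonneg _) h 2
    _ = _ := by rw [mul_pow, Real.sq_sqrt h1, Real.sq_sqrt h2]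

lemma gronwall_int {T C ε : ℝ} (hC : 0 < C) (hε : 0 ≤ ε) {w : ℝ → ℝ}
    (hw : Continuous w) (hw0 : ∀ t, 0 ≤ w t)
    (hle : ∀ t ∈ Icc (0:ℝ) T, w t ≤ ε + C * ∫ s in (0:ℝ)..t, w s) :
    ∀ t ∈ Icc (0:ℝ) T, w t ≤ ε * Real.exp (C * T) := by
  set v : ℝ → ℝ := fun t => ∫ s in (0:ℝ)..t, w s with hv_def
  have hv : ∀ t, HasDerivAt v (w t) t := fun t =>
    intervalIntegral.integral_hasDerivAt_right (hw.intervalIntegrable 0 t)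
      (hw.stronglyMeasurableAtFilter _ _) hw.continuousAt
  have hvc : Continuous v := by
    rw [continuous_iff_continuousAt]; exact fun t => (hv t).continuousAt
  have hvn : ∀ t ∈ Icc (0:ℝ) T, 0 ≤ v t := fun t ht =>
    intervalIntegral.integral_nonneg ht.1 (fun s _ => hw0 s)
  have key : ∀ t ∈ Icc (0:ℝ) T, ‖v t‖ ≤ gronwallBound 0 C ε (t - 0) := by
    apply norm_le_gronwallBound_of_norm_deriv_right_le hvc.continuousOn
      (fun t _ => (hv t).hasDerivWithinAt)
    · simp [hv_def]
    · intro t ht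
      rw [Real.norm_eq_abs, abs_of_nonneg (hw0 t), Real.norm_eq_abs,
        abs_of_nonneg (hvn t ⟨ht.1, ht.2.le⟩)]
      have := hle t ⟨ht.1, ht.2.le⟩
      linarith
  intro t ht
  have h1 := key t ht
  rw [Real.norm_eq_abs, abs_of_nonneg (hvn t ht), gronwallBound_of_K_ne_0 hC.ne',
    sub_zero] at h1
  have h2 := hle t ht
  have h3 : Real.exp (C * t) ≤ Real.exp (C * T) :=
    Real.exp_le_exp.mpr (by nlinarith [ht.2])
  have h4 : C * v t ≤ ε * (Real.exp (C * t) - 1) := by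
    have := mul_le_mul_of_nonneg_left h1 hC.le
    calc C * v t ≤ C * (0 * Real.exp (C * t) + ε / C * (Real.exp (C * t) - 1)) := this
      _ = ε * (Real.exp (C * t) - 1) := by field_simp; ring
  nlinarith [Real.exp_pos (C * t)]

lemma lip_sq {L : NNReal} {f : ℝ → ℝ} (hf : LipschitzWith L f) (x y : ℝ) :
    (f x - f y) ^ 2 ≤ (L:ℝ) ^ 2 * (x - y) ^ 2 := by
  have h := hf.dist_le_mul x y
  rw [Real.dist_eq, Real.dist_eq] at h
  have h2 := mul_self_le_mul_self (abs_nonneg (f x - f y)) h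
  nlinarith [sq_abs (f x - f y), sq_abs (x - y)]

lemma add3_sq_le (a b c : ℝ) : (a + b + c) ^ 2 ≤ 3 * a ^ 2 + 3 * b ^ 2 + 3 * c ^ 2 := by
  nlinarith [sq_nonneg (a - b), sq_nonneg (a - c), sq_nonneg (b - c)]

set_option maxHeartbeats 2000000

theorem stmt7
    (T : ℝ) (hT : 0 < T) (ξ : ℝ) (N : ℝ) (hN : 0 < N)
    (b σ : ℝ → ℝ) (Lb Lσ : NNReal)
    (hb : LipschitzWith Lb b) (hσ : LipschitzWith Lσ σ)
    (K₀ : ℝ → ℝ) (hK₀c : ContinuousOn K₀ (Icc 0 T))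
    (hK₀m : MonotoneOn K₀ (Icc 0 T)) (hK₀0 : K₀ 0 = 0)
    (φn : ℕ → ℝ → ℝ) (φ : ℝ → ℝ)
    (hφn : ∀ n, MemLp (φn n) 2 (volume.restrict (Icc (0:ℝ) T)))
    (hφ : MemLp φ 2 (volume.restrict (Icc (0:ℝ) T)))
    (hbound : ∀ n, (∫ s in (0:ℝ)..T, (φn n s) ^ 2) ≤ N)
    (hweak : ∀ g : ℝ → ℝ, MemLp g 2 (volume.restrict (Icc (0:ℝ) T)) →
      Tendsto (fun n => ∫ s in (0:ℝ)..T, φn n s * g s) atTop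
        (nhds (∫ s in (0:ℝ)..T, φ s * g s)))
    (Yn : ℕ → ℝ → ℝ) (Y : ℝ → ℝ)
    (hYnc : ∀ n, ContinuousOn (Yn n) (Icc 0 T))
    (hYn : ∀ n, ∀ t ∈ Icc (0:ℝ) T,
      Yn n t = ξ + (∫ s in (0:ℝ)..t, b (Yn n s)) + (∫ s in (0:ℝ)..t, σ (Yn n s) * φn n s) + K₀ t)
    (hYc : ContinuousOn Y (Icc 0 T))
    (hY : ∀ t ∈ Icc (0:ℝ) T,
      Y t = ξ + (∫ s in (0:ℝ)..t, b (Y s)) + (∫ s in (0:ℝ)..t, σ (Y s) * φ s) + K₀ t) :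
    Tendsto (fun n => sSup ((fun t => |Yn n t - Y t|) '' Icc (0:ℝ) T)) atTop (nhds 0) := by
    -- ==================== Setup ====================
  have hT0 : (0:ℝ) ∈ Icc (0:ℝ) T := ⟨le_rfl, hT.le⟩
  haveI : IsFiniteMeasure (volume.restrict (Icc (0:ℝ) T)) :=
    ⟨by rw [Measure.restrict_apply_univ]; exact measure_Icc_lt_top⟩
  have hIocSub : ∀ {a c : ℝ}, a ∈ Icc (0:ℝ) T → c ∈ Icc (0:ℝ) T →
      Ioc a c ⊆ Icc (0:ℝ) T := by
    intro a c ha hc x hx; exact ⟨le_trans ha.1 hx.1.le, le_trans hx.2 hc.2⟩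
  have hres : ∀ {a c : ℝ}, a ∈ Icc (0:ℝ) T → c ∈ Icc (0:ℝ) T →
      volume.restrict (Ioc a c) ≤ volume.restrict (Icc (0:ℝ) T) := fun ha hc =>
    Measure.restrict_mono (hIocSub ha hc) le_rfl
  have hII : ∀ (f : ℝ → ℝ), IntegrableOn f (Icc (0:ℝ) T) volume →
      ∀ a ∈ Icc (0:ℝ) T, ∀ c ∈ Icc (0:ℝ) T, IntervalIntegrable f volume a c := by
    intro f hf a ha c hc
    rw [intervalIntegrable_iff]
    refine hf.mono_set (fun x hx => ?_)
    rcases le_total a c with h | h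
    · rw [uIoc_of_le h] at hx; exact hIocSub ha hc hx
    · rw [uIoc_of_ge h] at hx; exact hIocSub hc ha hx
  have hMemCont : ∀ (h : ℝ → ℝ), ContinuousOn h (Icc (0:ℝ) T) →
      MemLp h 2 (volume.restrict (Icc (0:ℝ) T)) := by
    intro h hc
    obtain ⟨c, hcb⟩ := isCompact_Icc.exists_bound_of_continuousOn hc
    exact MemLp.of_bound (hc.aestronglyMeasurable measurableSet_Icc) c
      ((ae_restrict_iff' measurableSet_Icc).mpr (ae_of_all _ hcb))
  have hProd : ∀ (h ψ : ℝ → ℝ), ContinuousOn h (Icc (0:ℝ) T) →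
      MemLp ψ 2 (volume.restrict (Icc (0:ℝ) T)) →
      IntegrableOn (fun s => h s * ψ s) (Icc (0:ℝ) T) volume := by
    intro h ψ hc hψ
    obtain ⟨c, hcb⟩ := isCompact_Icc.exists_bound_of_continuousOn hc
    exact Integrable.bdd_mul (hψ.integrable one_le_two)
      (hc.aestronglyMeasurable measurableSet_Icc)
      ((ae_restrict_iff' measurableSet_Icc).mpr (ae_of_all _ hcb))
  have hσYc : ContinuousOn (fun s => σ (Y s)) (Icc (0:ℝ) T) :=
    hσ.continuous.comp_continuousOn hYc
  obtain ⟨M, hM⟩ := isCompact_Icc.exists_bound_of_continuousOn hσYc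
  have hM0 : 0 ≤ M := le_trans (norm_nonneg _) (hM 0 hT0)
  have hσY_meas : AEStronglyMeasurable (fun s => σ (Y s))
      (volume.restrict (Icc (0:ℝ) T)) := hσYc.aestronglyMeasurable measurableSet_Icc
  have hσY_L2 : MemLp (fun s => σ (Y s)) 2 (volume.restrict (Icc (0:ℝ) T)) :=
    hMemCont _ hσYc
  set P : ℝ := ∫ s in Icc (0:ℝ) T, (φ s) ^ 2 with hP_def
  have hP0 : 0 ≤ P := setIntegral_nonneg measurableSet_Icc (fun s _ => sq_nonneg _)
  have hφn_bd : ∀ n, (∫ s in Icc (0:ℝ) T, (φn n s) ^ 2) ≤ N := by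
    intro n
    rw [integral_Icc_eq_integral_Ioc]
    have h := hbound n
    rwa [intervalIntegral.integral_of_le hT.le] at h
  have hsq_sub : ∀ (ψ : ℝ → ℝ), IntegrableOn (fun s => ψ s ^ 2) (Icc (0:ℝ) T) volume →
      ∀ {a c : ℝ}, a ∈ Icc (0:ℝ) T → c ∈ Icc (0:ℝ) T →
      (∫ s in Ioc a c, ψ s ^ 2) ≤ ∫ s in Icc (0:ℝ) T, ψ s ^ 2 := by
    intro ψ hint a c ha hc
    exact setIntegral_mono_set hint (ae_of_all _ fun s => sq_nonneg _)
      (HasSubset.Subset.eventuallyLE (hIocSub ha hc))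
  -- ==================== F and equicontinuity ====================
  set F : ℕ → ℝ → ℝ := fun n t =>
    (∫ s in (0:ℝ)..t, σ (Y s) * φn n s) - ∫ s in (0:ℝ)..t, σ (Y s) * φ s with hF_def
  set Q : ℝ := M * Real.sqrt (2 * N + 2 * P) with hQ_def
  have hQ0 : 0 ≤ Q := mul_nonneg hM0 (Real.sqrt_nonneg _)
  have hFsub : ∀ n, ∀ {s t : ℝ}, s ∈ Icc (0:ℝ) T → t ∈ Icc (0:ℝ) T → s ≤ t →
      F n t - F n s = ∫ x in Ioc s t, σ (Y x) * (φn n x - φ x) := by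
    intro n s t hs ht hst
    have i1 := hII _ (hProd _ _ hσYc (hφn n)) 0 hT0 t ht
    have i2 := hII _ (hProd _ _ hσYc (hφn n)) 0 hT0 s hs
    have i3 := hII _ (hProd _ _ hσYc hφ) 0 hT0 t ht
    have i4 := hII _ (hProd _ _ hσYc hφ) 0 hT0 s hs
    have i5 := hII _ (hProd _ _ hσYc (hφn n)) s hs t ht
    have i6 := hII _ (hProd _ _ hσYc hφ) s hs t ht
    have e1 := intervalIntegral.integral_interval_sub_left i1 i2
    have e2 := intervalIntegral.integral_interval_sub_left i3 i4
    have e3 : F n t - F n s =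
        (∫ x in s..t, σ (Y x) * φn n x) - ∫ x in s..t, σ (Y x) * φ x := by
      rw [hF_def, ← e1, ← e2]; ring
    rw [e3, ← intervalIntegral.integral_sub i5 i6,
      intervalIntegral.integral_of_le hst]
    apply setIntegral_congr_fun measurableSet_Ioc
    intro x _
    ring
  have hFeq : ∀ n, ∀ {s t : ℝ}, s ∈ Icc (0:ℝ) T → t ∈ Icc (0:ℝ) T → s ≤ t →
      |F n t - F n s| ≤ Q * Real.sqrt (t - s) := by
    intro n s t hs ht hst
    rw [hFsub n hs ht hst]
    have hcs := cs_abs (μ := volume.restrict (Ioc s t))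
      (hσY_L2.mono_measure (hres hs ht))
      (((hφn n).sub hφ).mono_measure (hres hs ht))
    have bound1 : (∫ x in Ioc s t, σ (Y x) ^ 2) ≤ M ^ 2 * (t - s) := by
      have hmono : (∫ x in Ioc s t, σ (Y x) ^ 2) ≤ ∫ _x in Ioc s t, M ^ 2 := by
        apply setIntegral_mono_on
          ((hσY_L2.mono_measure (hres hs ht)).integrable_sq)
          (integrableOn_const measure_Ioc_lt_top.ne) measurableSet_Ioc
        intro x hx
        have h := hM x (hIocSub hs ht hx)
        rw [Real.norm_eq_abs] at h
        nlinarith [abs_nonneg (σ (Y x)), sq_abs (σ (Y x))]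
      calc (∫ x in Ioc s t, σ (Y x) ^ 2) ≤ ∫ _x in Ioc s t, M ^ 2 := hmono
        _ = M ^ 2 * (t - s) := by
          rw [setIntegral_const, Real.volume_real_Ioc_of_le hst, smul_eq_mul]
          ring
    have bound2 : (∫ x in Ioc s t, (φn n x - φ x) ^ 2) ≤ 2 * N + 2 * P := by
      have hint : IntegrableOn (fun x => (φn n x - φ x) ^ 2) (Icc (0:ℝ) T) volume :=
        ((hφn n).sub hφ).integrable_sq
      have h1 : (∫ x in Ioc s t, (φn n x - φ x) ^ 2) ≤
          ∫ x in Icc (0:ℝ) T, (φn n x - φ x) ^ 2 :=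
        setIntegral_mono_set hint (ae_of_all _ fun x => sq_nonneg _)
          (HasSubset.Subset.eventuallyLE (hIocSub hs ht))
      have h2 : (∫ x in Icc (0:ℝ) T, (φn n x - φ x) ^ 2) ≤
          ∫ x in Icc (0:ℝ) T, (2 * (φn n x) ^ 2 + 2 * (φ x) ^ 2) := by
        apply setIntegral_mono_on hint
          (((hφn n).integrable_sq.const_mul 2).add (hφ.integrable_sq.const_mul 2))
          measurableSet_Icc
        intro x _
        show (φn n x - φ x) ^ 2 ≤ 2 * (φn n x) ^ 2 + 2 * (φ x) ^ 2
        nlinarith [sq_nonneg (φn n x + φ x)]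
      have h3 : (∫ x in Icc (0:ℝ) T, (2 * (φn n x) ^ 2 + 2 * (φ x) ^ 2)) =
          2 * (∫ x in Icc (0:ℝ) T, (φn n x) ^ 2) + 2 * P := by
        rw [integral_add ((hφn n).integrable_sq.const_mul 2) (hφ.integrable_sq.const_mul 2),
          integral_const_mul, integral_const_mul, hP_def]
      have := hφn_bd n
      linarith
    calc |∫ x in Ioc s t, σ (Y x) * (φn n x - φ x)|
        ≤ Real.sqrt (∫ x in Ioc s t, σ (Y x) ^ 2) *
          Real.sqrt (∫ x in Ioc s t, (φn n x - φ x) ^ 2) := hcs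
      _ ≤ Real.sqrt (M ^ 2 * (t - s)) * Real.sqrt (2 * N + 2 * P) :=
          mul_le_mul (Real.sqrt_le_sqrt bound1) (Real.sqrt_le_sqrt bound2)
            (Real.sqrt_nonneg _) (Real.sqrt_nonneg _)
      _ = Q * Real.sqrt (t - s) := by
          rw [Real.sqrt_mul (sq_nonneg M), Real.sqrt_sq hM0, hQ_def]; ring
  have hF0 : ∀ n, F n 0 = 0 := by intro n; simp [hF_def]
  have hFbd : ∀ n, ∀ t ∈ Icc (0:ℝ) T, |F n t| ≤ Q * Real.sqrt T := by
    intro n t ht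
    have h := hFeq n hT0 ht ht.1
    rw [hF0 n, sub_zero, sub_zero] at h
    exact h.trans (mul_le_mul_of_nonneg_left (Real.sqrt_le_sqrt ht.2) hQ0)
  -- ==================== e n = sup |F n| ====================
  set e : ℕ → ℝ := fun n => sSup ((fun t => |F n t|) '' Icc (0:ℝ) T) with he_def
  have hene : ∀ n, ((fun t => |F n t|) '' Icc (0:ℝ) T).Nonempty :=
    fun n => ⟨|F n 0|, mem_image_of_mem _ hT0⟩
  have hebdd : ∀ n, BddAbove ((fun t => |F n t|) '' Icc (0:ℝ) T) := by
    intro n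
    refine ⟨Q * Real.sqrt T, ?_⟩
    rintro y ⟨t, ht, rfl⟩
    exact hFbd n t ht
  have he_ub : ∀ n, ∀ t ∈ Icc (0:ℝ) T, |F n t| ≤ e n :=
    fun n t ht => le_csSup (hebdd n) (mem_image_of_mem _ ht)
  have he0 : ∀ n, 0 ≤ e n :=
    fun n => le_trans (abs_nonneg _) (he_ub n 0 hT0)
  -- ==================== pointwise convergence of F ====================
  have hgmem : ∀ t ∈ Icc (0:ℝ) T,
      MemLp ((Icc (0:ℝ) t).indicator (fun s => σ (Y s))) 2
        (volume.restrict (Icc (0:ℝ) T)) := by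
    intro t ht
    refine MemLp.of_bound (hσY_meas.indicator measurableSet_Icc) M (ae_of_all _ ?_)
    intro x
    rw [Set.indicator_apply]
    split_ifs with hx
    · exact hM x ⟨hx.1, hx.2.trans ht.2⟩
    · simpa using hM0
  have hkeyint : ∀ t ∈ Icc (0:ℝ) T, ∀ (ψ : ℝ → ℝ),
      (∫ s in (0:ℝ)..T, ψ s * ((Icc (0:ℝ) t).indicator (fun s' => σ (Y s')) s)) =
        ∫ s in (0:ℝ)..t, σ (Y s) * ψ s := by
    intro t ht ψ
    rw [intervalIntegral.integral_of_le hT.le, intervalIntegral.integral_of_le ht.1]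
    have hpt : ∀ s, ψ s * ((Icc (0:ℝ) t).indicator (fun s' => σ (Y s')) s) =
        (Icc (0:ℝ) t).indicator (fun s' => σ (Y s') * ψ s') s := by
      intro s
      rw [Set.indicator_apply, Set.indicator_apply]
      split_ifs
      · ring
      · simp
    simp_rw [hpt]
    rw [integral_indicator measurableSet_Icc, Measure.restrict_restrict measurableSet_Icc]
    have hset : Icc (0:ℝ) t ∩ Ioc 0 T = Ioc 0 t := by
      ext x
      simp only [mem_inter_iff, mem_Icc, mem_Ioc]
      constructor
      · rintro ⟨⟨_, h2⟩, h3, _⟩; exact ⟨h3, h2⟩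
      · rintro ⟨h1, h2⟩; exact ⟨⟨h1.le, h2⟩, h1, h2.trans ht.2⟩
    rw [hset]
  have hFpt : ∀ t ∈ Icc (0:ℝ) T, Tendsto (fun n => F n t) atTop (nhds 0) := by
    intro t ht
    have h1 := hweak _ (hgmem t ht)
    rw [hkeyint t ht φ] at h1
    have h2 : ∀ n, (∫ s in (0:ℝ)..T,
        φn n s * ((Icc (0:ℝ) t).indicator (fun s' => σ (Y s')) s)) =
        ∫ s in (0:ℝ)..t, σ (Y s) * φn n s := fun n => hkeyint t ht (φn n)
    simp_rw [h2] at h1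
    have h3 := h1.sub_const (∫ s in (0:ℝ)..t, σ (Y s) * φ s)
    simpa [hF_def] using h3
  -- ==================== uniform convergence : e → 0 ====================
  have heconv : Tendsto e atTop (nhds 0) := by
    rw [NormedAddCommGroup.tendsto_nhds_zero]
    intro ε hε
    obtain ⟨k, hk⟩ := exists_nat_gt (max 0 (16 * Q ^ 2 * T / ε ^ 2))
    have hk0 : (0:ℝ) < k := lt_of_le_of_lt (le_max_left _ _) hk
    have hkQ : 16 * Q ^ 2 * T / ε ^ 2 < k := lt_of_le_of_lt (le_max_right _ _) hk
    have hmesh : Q * Real.sqrt (T / k) ≤ ε / 4 := by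
      have h1 : Q ^ 2 * (T / k) ≤ ε ^ 2 / 16 := by
        rw [← mul_div_assoc, div_le_div_iff₀ hk0 (by norm_num : (0:ℝ) < 16)]
        have hε2 : (0:ℝ) < ε ^ 2 := by positivity
        rw [div_lt_iff₀ hε2] at hkQ
        nlinarith
      calc Q * Real.sqrt (T / k) = Real.sqrt (Q ^ 2 * (T / k)) := by
            rw [Real.sqrt_mul (sq_nonneg Q), Real.sqrt_sq hQ0]
        _ ≤ Real.sqrt (ε ^ 2 / 16) := Real.sqrt_le_sqrt h1
        _ = ε / 4 := by
            rw [show ε ^ 2 / 16 = (ε / 4) ^ 2 by ring, Real.sqrt_sq (by linarith)]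
    have hti_mem : ∀ i : ℕ, i ≤ k → (i * T / k) ∈ Icc (0:ℝ) T := by
      intro i hi
      constructor
      · positivity
      · rw [div_le_iff₀ hk0]
        have : (i:ℝ) ≤ k := Nat.cast_le.mpr hi
        nlinarith
    have hev : ∀ᶠ n in atTop, ∀ i ∈ Finset.range (k + 1), |F n (i * T / k)| < ε / 4 := by
      rw [eventually_all_finset]
      intro i hi
      have hi' : i ≤ k := by
        have := Finset.mem_range.mp hi; omega
      have h := hFpt (i * T / k) (hti_mem i hi')
      have hb := h (Metric.ball_mem_nhds 0 (by positivity : (0:ℝ) < ε / 4))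
      filter_upwards [hb] with n hn
      simpa [Real.dist_eq] using hn
    filter_upwards [hev] with n hn
    have hbig : e n ≤ ε / 2 := by
      apply csSup_le (hene n)
      rintro y ⟨t, ht, rfl⟩
      set i : ℕ := ⌊t * k / T⌋₊ with hi_def
      have hfl : (i:ℝ) ≤ t * k / T :=
        Nat.floor_le (div_nonneg (mul_nonneg ht.1 (Nat.cast_nonneg k)) hT.le)
      have hfl2 : t * k / T < i + 1 := Nat.lt_floor_add_one _
      have hik : i ≤ k := by
        have h1 : t * k / T ≤ (k:ℝ) := by
          rw [div_le_iff₀ hT]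
          nlinarith [ht.2, hk0.le]
        have := Nat.floor_le_floor h1
        simpa [Nat.floor_natCast] using this
      have hiT : (i:ℝ) * T ≤ t * k := (le_div_iff₀ hT).mp hfl
      have hs_le : i * T / k ≤ t := by rw [div_le_iff₀ hk0]; linarith
      have hdiff : t - i * T / k ≤ T / k := by
        have h'' : t * k < ((i:ℝ) + 1) * T := (div_lt_iff₀ hT).mp hfl2
        rw [sub_le_iff_le_add, ← add_div, le_div_iff₀ hk0]
        nlinarith
      have htri : |F n t| ≤ |F n t - F n (i * T / k)| + |F n (i * T / k)| := by
        have := abs_add_le (F n t - F n (i * T / k)) (F n (i * T / k))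
        simpa using this
      have heq := hFeq n (hti_mem i hik) ht hs_le
      have hstep : |F n t - F n (i * T / k)| ≤ Q * Real.sqrt (T / k) :=
        heq.trans (mul_le_mul_of_nonneg_left (Real.sqrt_le_sqrt hdiff) hQ0)
      have hpti : |F n (i * T / k)| < ε / 4 :=
        hn i (Finset.mem_range.mpr (by omega))
      linarith
    rw [Real.norm_eq_abs, abs_of_nonneg (he0 n)]
    linarith
  -- ==================== Gronwall estimate ====================
  set C : ℝ := 3 * T * (Lb:ℝ) ^ 2 + 3 * N * (Lσ:ℝ) ^ 2 + 1 with hC_def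
  have hC : 0 < C := by
    have h1 : 0 ≤ 3 * T * (Lb:ℝ) ^ 2 := mul_nonneg (by linarith) (sq_nonneg _)
    have h2 : 0 ≤ 3 * N * (Lσ:ℝ) ^ 2 := mul_nonneg (by linarith) (sq_nonneg _)
    rw [hC_def]; linarith
  set D : ℝ := Real.sqrt (3 * Real.exp (C * T)) with hD_def
  have hbLip := lip_sq hb
  have hσLip := lip_sq hσ
  have main : ∀ n, ∀ t ∈ Icc (0:ℝ) T, |Yn n t - Y t| ≤ D * e n := by
    intro n
    set cl : ℝ → ℝ := fun x => max 0 (min x T) with hcl_def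
    have hclc : Continuous cl := continuous_const.max (continuous_id.min continuous_const)
    have hclmem : ∀ x, cl x ∈ Icc (0:ℝ) T := by
      intro x
      exact ⟨le_max_left _ _, max_le hT.le (min_le_right _ _)⟩
    have hclid : ∀ x ∈ Icc (0:ℝ) T, cl x = x := by
      intro x hx
      rw [hcl_def]
      simp only
      rw [min_eq_left hx.2, max_eq_right hx.1]
    set u : ℝ → ℝ := fun x => (Yn n (cl x) - Y (cl x)) ^ 2 with hu_def
    have hdc : ContinuousOn (fun x => Yn n x - Y x) (Icc (0:ℝ) T) := (hYnc n).sub hYc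
    have huc : Continuous u := (hdc.comp_continuous hclc hclmem).pow 2
    have hu0 : ∀ x, 0 ≤ u x := fun x => sq_nonneg _
    have hu_eq : ∀ x ∈ Icc (0:ℝ) T, u x = (Yn n x - Y x) ^ 2 := by
      intro x hx
      rw [hu_def]
      simp only
      rw [hclid x hx]
    have hIntu : ∀ t ∈ Icc (0:ℝ) T,
        (∫ s in (0:ℝ)..t, u s) = ∫ x in Ioc (0:ℝ) t, (Yn n x - Y x) ^ 2 := by
      intro t ht
      rw [intervalIntegral.integral_of_le ht.1]
      exact setIntegral_congr_fun measurableSet_Ioc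
        (fun x hx => hu_eq x (hIocSub hT0 ht hx))
    have hkey : ∀ t ∈ Icc (0:ℝ) T, u t ≤ 3 * (e n) ^ 2 + C * ∫ s in (0:ℝ)..t, u s := by
      intro t ht
      have hbYnc : ContinuousOn (fun x => b (Yn n x)) (Icc (0:ℝ) T) :=
        hb.continuous.comp_continuousOn (hYnc n)
      have hbYc : ContinuousOn (fun x => b (Y x)) (Icc (0:ℝ) T) :=
        hb.continuous.comp_continuousOn hYc
      have hσYnc : ContinuousOn (fun x => σ (Yn n x)) (Icc (0:ℝ) T) :=
        hσ.continuous.comp_continuousOn (hYnc n)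
      have iIoc : ∀ (f : ℝ → ℝ), ContinuousOn f (Icc (0:ℝ) T) →
          IntegrableOn f (Ioc (0:ℝ) t) volume :=
        fun f hf => (hf.integrableOn_compact isCompact_Icc).mono_set (hIocSub hT0 ht)
      have ibYn := iIoc _ hbYnc
      have ibY := iIoc _ hbYc
      have iP1 : IntegrableOn (fun x => σ (Yn n x) * φn n x) (Ioc (0:ℝ) t) volume :=
        (hProd _ _ hσYnc (hφn n)).mono_set (hIocSub hT0 ht)
      have iP2 : IntegrableOn (fun x => σ (Y x) * φn n x) (Ioc (0:ℝ) t) volume :=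
        (hProd _ _ hσYc (hφn n)).mono_set (hIocSub hT0 ht)
      have iP3 : IntegrableOn (fun x => σ (Y x) * φ x) (Ioc (0:ℝ) t) volume :=
        (hProd _ _ hσYc hφ).mono_set (hIocSub hT0 ht)
      have hdec : Yn n t - Y t =
          (∫ x in Ioc (0:ℝ) t, (b (Yn n x) - b (Y x)))
          + (∫ x in Ioc (0:ℝ) t, (σ (Yn n x) - σ (Y x)) * φn n x)
          + F n t := by
        have hFt : F n t = (∫ x in Ioc (0:ℝ) t, σ (Y x) * φn n x)
            - ∫ x in Ioc (0:ℝ) t, σ (Y x) * φ x := by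
          rw [hF_def]
          simp only
          rw [intervalIntegral.integral_of_le ht.1, intervalIntegral.integral_of_le ht.1]
        have h1 : (∫ x in Ioc (0:ℝ) t, (b (Yn n x) - b (Y x)))
            = (∫ x in Ioc (0:ℝ) t, b (Yn n x)) - ∫ x in Ioc (0:ℝ) t, b (Y x) :=
          integral_sub ibYn ibY
        have h2 : (∫ x in Ioc (0:ℝ) t, (σ (Yn n x) - σ (Y x)) * φn n x)
            = (∫ x in Ioc (0:ℝ) t, σ (Yn n x) * φn n x)
              - ∫ x in Ioc (0:ℝ) t, σ (Y x) * φn n x := by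
          rw [← integral_sub iP1 iP2]
          exact setIntegral_congr_fun measurableSet_Ioc (fun x _ => by ring)
        rw [hYn n t ht, hY t ht]
        simp only [intervalIntegral.integral_of_le ht.1]
        rw [h1, h2, hFt]
        ring
      set V : ℝ := ∫ x in Ioc (0:ℝ) t, (Yn n x - Y x) ^ 2 with hV_def
      have hVnn : 0 ≤ V := setIntegral_nonneg measurableSet_Ioc fun x _ => sq_nonneg _
      have hVint : IntegrableOn (fun x => (Yn n x - Y x) ^ 2) (Ioc (0:ℝ) t) volume :=
        iIoc _ (hdc.pow 2)
      have hL2sub : ∀ (f : ℝ → ℝ), MemLp f 2 (volume.restrict (Icc (0:ℝ) T)) →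
          MemLp f 2 (volume.restrict (Ioc (0:ℝ) t)) :=
        fun f hf => hf.mono_measure (hres hT0 ht)
      have hI1 : (∫ x in Ioc (0:ℝ) t, (b (Yn n x) - b (Y x))) ^ 2
          ≤ T * ((Lb:ℝ) ^ 2 * V) := by
        have hfm : MemLp (fun x => b (Yn n x) - b (Y x)) 2
            (volume.restrict (Ioc (0:ℝ) t)) := hL2sub _ (hMemCont _ (hbYnc.sub hbYc))
        have hgm : MemLp (fun _ : ℝ => (1:ℝ)) 2 (volume.restrict (Ioc (0:ℝ) t)) :=
          memLp_const 1
        have hcs := cs_sq hfm hgm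
        simp only [mul_one, one_pow] at hcs
        have hA : (∫ x in Ioc (0:ℝ) t, (b (Yn n x) - b (Y x)) ^ 2) ≤ (Lb:ℝ) ^ 2 * V := by
          calc (∫ x in Ioc (0:ℝ) t, (b (Yn n x) - b (Y x)) ^ 2)
              ≤ ∫ x in Ioc (0:ℝ) t, (Lb:ℝ) ^ 2 * (Yn n x - Y x) ^ 2 :=
                setIntegral_mono_on (iIoc _ ((hbYnc.sub hbYc).pow 2))
                  (hVint.const_mul _) measurableSet_Ioc (fun x _ => hbLip _ _)
            _ = (Lb:ℝ) ^ 2 * V := by rw [integral_const_mul, hV_def]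
        have hB : (∫ _x in Ioc (0:ℝ) t, (1:ℝ)) = t := by
          simp [Real.volume_Ioc, ENNReal.toReal_ofReal ht.1, ht.1]
        rw [hB] at hcs
        have hLV : (0:ℝ) ≤ (Lb:ℝ) ^ 2 * V := mul_nonneg (sq_nonneg _) hVnn
        calc (∫ x in Ioc (0:ℝ) t, (b (Yn n x) - b (Y x))) ^ 2
            ≤ (∫ x in Ioc (0:ℝ) t, (b (Yn n x) - b (Y x)) ^ 2) * t := hcs
          _ ≤ ((Lb:ℝ) ^ 2 * V) * t := mul_le_mul_of_nonneg_right hA ht.1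
          _ ≤ ((Lb:ℝ) ^ 2 * V) * T := mul_le_mul_of_nonneg_left ht.2 hLV
          _ = T * ((Lb:ℝ) ^ 2 * V) := mul_comm _ _
      have hI2 : (∫ x in Ioc (0:ℝ) t, (σ (Yn n x) - σ (Y x)) * φn n x) ^ 2
          ≤ ((Lσ:ℝ) ^ 2 * V) * N := by
        have hfm : MemLp (fun x => σ (Yn n x) - σ (Y x)) 2
            (volume.restrict (Ioc (0:ℝ) t)) := hL2sub _ (hMemCont _ (hσYnc.sub hσYc))
        have hgm : MemLp (φn n) 2 (volume.restrict (Ioc (0:ℝ) t)) := hL2sub _ (hφn n)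
        have hcs := cs_sq hfm hgm
        have hA : (∫ x in Ioc (0:ℝ) t, (σ (Yn n x) - σ (Y x)) ^ 2) ≤ (Lσ:ℝ) ^ 2 * V := by
          calc (∫ x in Ioc (0:ℝ) t, (σ (Yn n x) - σ (Y x)) ^ 2)
              ≤ ∫ x in Ioc (0:ℝ) t, (Lσ:ℝ) ^ 2 * (Yn n x - Y x) ^ 2 :=
                setIntegral_mono_on (iIoc _ ((hσYnc.sub hσYc).pow 2))
                  (hVint.const_mul _) measurableSet_Ioc (fun x _ => hσLip _ _)
            _ = (Lσ:ℝ) ^ 2 * V := by rw [integral_const_mul, hV_def]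
        have hB : (∫ x in Ioc (0:ℝ) t, (φn n x) ^ 2) ≤ N :=
          (hsq_sub _ (hφn n).integrable_sq hT0 ht).trans (hφn_bd n)
        have hg2nn : 0 ≤ ∫ x in Ioc (0:ℝ) t, (φn n x) ^ 2 :=
          setIntegral_nonneg measurableSet_Ioc fun x _ => sq_nonneg _
        have hLV : (0:ℝ) ≤ (Lσ:ℝ) ^ 2 * V := mul_nonneg (sq_nonneg _) hVnn
        calc (∫ x in Ioc (0:ℝ) t, (σ (Yn n x) - σ (Y x)) * φn n x) ^ 2
            ≤ (∫ x in Ioc (0:ℝ) t, (σ (Yn n x) - σ (Y x)) ^ 2)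
              * ∫ x in Ioc (0:ℝ) t, (φn n x) ^ 2 := hcs
          _ ≤ ((Lσ:ℝ) ^ 2 * V) * ∫ x in Ioc (0:ℝ) t, (φn n x) ^ 2 :=
              mul_le_mul_of_nonneg_right hA hg2nn
          _ ≤ ((Lσ:ℝ) ^ 2 * V) * N := mul_le_mul_of_nonneg_left hB hLV
      have hI3 : (F n t) ^ 2 ≤ (e n) ^ 2 := by
        rw [← sq_abs (F n t)]
        exact pow_le_pow_left₀ (abs_nonneg _) (he_ub n t ht) 2
      rw [hu_eq t ht, hdec, hIntu t ht]
      have hCV : C * V = 3 * T * (Lb:ℝ) ^ 2 * V + 3 * N * (Lσ:ℝ) ^ 2 * V + V := by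
        rw [hC_def]; ring
      have h3 := add3_sq_le (∫ x in Ioc (0:ℝ) t, (b (Yn n x) - b (Y x)))
        (∫ x in Ioc (0:ℝ) t, (σ (Yn n x) - σ (Y x)) * φn n x) (F n t)
      linarith [hI1, hI2, hI3, hVnn, h3, hCV]
    have hgr := gronwall_int hC (by positivity : (0:ℝ) ≤ 3 * (e n) ^ 2) huc hu0 hkey
    intro t ht
    have h := hgr t ht
    rw [hu_eq t ht] at h
    calc |Yn n t - Y t| = Real.sqrt ((Yn n t - Y t) ^ 2) := (Real.sqrt_sq_eq_abs _).symm
      _ ≤ Real.sqrt (3 * (e n) ^ 2 * Real.exp (C * T)) := Real.sqrt_le_sqrt h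
      _ = D * e n := by
          rw [show 3 * (e n) ^ 2 * Real.exp (C * T)
              = (3 * Real.exp (C * T)) * (e n) ^ 2 by ring,
            Real.sqrt_mul (by positivity), Real.sqrt_sq (he0 n), hD_def]
  -- ==================== conclusion ====================
  have hS0 : ∀ n, (0:ℝ) ≤ sSup ((fun t => |Yn n t - Y t|) '' Icc (0:ℝ) T) := by
    intro n
    apply Real.sSup_nonneg
    rintro x ⟨t, _, rfl⟩
    exact abs_nonneg _
  have hSle : ∀ n, sSup ((fun t => |Yn n t - Y t|) '' Icc (0:ℝ) T) ≤ D * e n := by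
    intro n
    apply csSup_le ⟨_, mem_image_of_mem _ hT0⟩
    rintro y ⟨t, ht, rfl⟩
    exact main n t ht
  have hDe : Tendsto (fun n => D * e n) atTop (nhds 0) := by
    simpa using heconv.const_mul D
  exact tendsto_of_tendsto_of_tendsto_of_le_of_le tendsto_const_nhds hDe hS0 hSle
end

section
/- Let b : ℝ → ℝ be Lipschitz and h : ℝ → ℝ increasing bi-Lipschitz with constants 0 < m ≤ M, and ξ ∈ ℝ with h(ξ) ≥ 0. Then the mean reflected ODE X(t) = ξ + ∫₀ᵗ b(X(s)) ds + K(t) with constraints h(X(t)) ≥ 0 for all t and ∫₀ᵗ h(X(s)) dK(s) = 0, where K is continuous nondecreasing with K(0)=0, has at most one solution pair (X,K). -/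
open MeasureTheory Set

private lemma key_ineq
    (T : ℝ) (ξ : ℝ)
    (b : ℝ → ℝ) (Lb : NNReal) (hb : LipschitzWith Lb b)
    (m M : ℝ) (hm : 0 < m)
    (h : ℝ → ℝ) (hmono : Monotone h)
    (hbil : ∀ x y : ℝ, m * |x - y| ≤ |h x - h y| ∧ |h x - h y| ≤ M * |x - y|)
    (X X' : ℝ → ℝ) (K K' : StieltjesFunction ℝ)
    (hXc : ContinuousOn X (Icc 0 T)) (hK0 : K 0 = 0)
    (hXeq : ∀ t ∈ Icc (0:ℝ) T, X t = ξ + (∫ s in (0:ℝ)..t, b (X s)) + K t)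
    (hXpos : ∀ t ∈ Icc (0:ℝ) T, 0 ≤ h (X t))
    (hXflat : ∀ t ∈ Icc (0:ℝ) T, ∫ s in Ioc (0:ℝ) t, h (X s) ∂K.measure = 0)
    (hX'c : ContinuousOn X' (Icc 0 T)) (hK'0 : K' 0 = 0)
    (hX'eq : ∀ t ∈ Icc (0:ℝ) T, X' t = ξ + (∫ s in (0:ℝ)..t, b (X' s)) + K' t)
    (hX'pos : ∀ t ∈ Icc (0:ℝ) T, 0 ≤ h (X' t)) :
    ∀ t ∈ Icc (0:ℝ) T, X t - X' t ≤ Lb * ∫ s in (0:ℝ)..t, |X s - X' s| := by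
  intro t ht
  have hT0 : (0:ℝ) ≤ T := le_trans ht.1 ht.2
  have h0T : (0:ℝ) ∈ Icc (0:ℝ) T := ⟨le_refl _, hT0⟩
  by_cases hDt : X t - X' t ≤ 0
  · have : (0:ℝ) ≤ (Lb : ℝ) * ∫ s in (0:ℝ)..t, |X s - X' s| :=
      mul_nonneg Lb.coe_nonneg
        (intervalIntegral.integral_nonneg ht.1 fun s _ => abs_nonneg _)
    linarith
  push_neg at hDt
  -- X 0 = X' 0 = ξ
  have hX0 : X 0 = ξ := by
    have := hXeq 0 h0T; simpa [hK0] using this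
  have hX'0 : X' 0 = ξ := by
    have := hX'eq 0 h0T; simpa [hK'0] using this
  -- the set of times where X ≤ X'
  set S : Set ℝ := Icc 0 t ∩ {s | X s - X' s ≤ 0} with hS
  have hDcont : ContinuousOn (fun s => X s - X' s) (Icc 0 T) := hXc.sub hX'c
  have hScl : IsClosed S :=
    (hDcont.mono (Icc_subset_Icc le_rfl ht.2)).preimage_isClosed_of_isClosed
      isClosed_Icc isClosed_Iic
  have hScomp : IsCompact S :=
    isCompact_Icc.of_isClosed_subset hScl inter_subset_left
  have hSne : S.Nonempty := ⟨0, ⟨le_refl _, ht.1⟩, by simp [hX0, hX'0]⟩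
  set σ := sSup S with hσdef
  have hσS : σ ∈ S := hScomp.sSup_mem hSne
  have hσ0 : 0 ≤ σ := hσS.1.1
  have hσt : σ ≤ t := hσS.1.2
  have hσD : X σ - X' σ ≤ 0 := hσS.2
  have hσT : σ ∈ Icc (0:ℝ) T := ⟨hσ0, hσt.trans ht.2⟩
  have hσlt : σ < t := lt_of_le_of_ne hσt (fun e => by rw [e] at hσD; linarith)
  have hBdd : BddAbove S := hScomp.bddAbove
  -- on (σ, t], X > X'
  have hpos : ∀ s ∈ Ioc σ t, X' s < X s := by
    intro s hs
    by_contra hc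
    push_neg at hc
    have hsS : s ∈ S := ⟨⟨hσ0.trans hs.1.le, hs.2⟩, by simpa using sub_nonpos.mpr hc⟩
    exact absurd (le_csSup hBdd hsS) (not_le.mpr hs.1)
  -- hence h ∘ X > 0 on (σ, t]
  have hfpos : ∀ s ∈ Ioc σ t, 0 < h (X s) := by
    intro s hs
    have hsT : s ∈ Icc (0:ℝ) T := ⟨hσ0.trans hs.1.le, hs.2.trans ht.2⟩
    have hlt := hpos s hs
    have hmle : h (X' s) ≤ h (X s) := hmono hlt.le
    have hb1 := (hbil (X s) (X' s)).1
    rw [abs_of_pos (by linarith), abs_of_nonneg (by linarith)] at hb1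
    have := hX'pos s hsT
    nlinarith
  -- h continuous
  have hconth : Continuous h := by
    have : LipschitzWith (Real.toNNReal M) h := by
      refine LipschitzWith.of_dist_le_mul fun x y => ?_
      rw [Real.dist_eq, Real.dist_eq, Real.coe_toNNReal']
      exact le_trans (hbil x y).2 (mul_le_mul_of_nonneg_right (le_max_left _ _) (abs_nonneg _))
    exact this.continuous
  set f : ℝ → ℝ := fun s => h (X s) with hf
  have hfc : ContinuousOn f (Icc 0 T) := hconth.comp_continuousOn hXc
  set μ := K.measure with hμ
  -- integrability of f on Ioc 0 t w.r.t. μ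
  have hsub : Ioc (0:ℝ) t ⊆ Icc 0 T := fun s hs => ⟨hs.1.le, hs.2.trans ht.2⟩
  have hmeas : AEStronglyMeasurable f (μ.restrict (Ioc 0 t)) :=
    (hfc.mono hsub).aestronglyMeasurable measurableSet_Ioc
  obtain ⟨C, hC⟩ := isCompact_Icc.exists_bound_of_continuousOn hfc
  have hμfin : μ (Ioc (0:ℝ) t) ≠ ⊤ := by
    rw [K.measure_Ioc]; exact ENNReal.ofReal_ne_top
  have hint : IntegrableOn f (Ioc (0:ℝ) t) μ :=
    ⟨hmeas, HasFiniteIntegral.restrict_of_bounded (C := C) hμfin.lt_top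
      (ae_restrict_of_forall_mem measurableSet_Ioc fun s hs => hC s (hsub hs))⟩
  -- the flat condition forces μ (Ioc σ t) = 0
  have hunion : Ioc (0:ℝ) σ ∪ Ioc σ t = Ioc 0 t := Ioc_union_Ioc_eq_Ioc hσ0 hσt
  have hadd : (∫ s in Ioc (0:ℝ) σ, f s ∂μ) + (∫ s in Ioc σ t, f s ∂μ)
      = ∫ s in Ioc (0:ℝ) t, f s ∂μ := by
    rw [← hunion]
    exact (setIntegral_union (Ioc_disjoint_Ioc_of_le le_rfl) measurableSet_Ioc
      (hint.mono_set (hunion ▸ subset_union_left))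
      (hint.mono_set (hunion ▸ subset_union_right))).symm
  have hzero : (∫ s in Ioc σ t, f s ∂μ) = 0 := by
    have h1 := hXflat σ hσT
    have h2 := hXflat t ht
    linarith [hadd, h1, h2]
  have hint2 : IntegrableOn f (Ioc σ t) μ := hint.mono_set (Ioc_subset_Ioc_left hσ0)
  have hae : f =ᵐ[μ.restrict (Ioc σ t)] 0 :=
    (integral_eq_zero_iff_of_nonneg_ae
      (ae_restrict_of_forall_mem measurableSet_Ioc fun s hs => (hfpos s hs).le) hint2).mp hzero
  have hμ0 : μ (Ioc σ t) = 0 := by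
    have h1 : μ.restrict (Ioc σ t) {x | ¬ f x = 0} = 0 := by
      have := hae
      rw [Filter.EventuallyEq, ae_iff] at this
      simpa using this
    have h2 : Ioc σ t ⊆ {x | ¬ f x = 0} := fun s hs => ne_of_gt (hfpos s hs)
    have h3 : μ.restrict (Ioc σ t) (Ioc σ t) ≤ 0 := h1 ▸ measure_mono h2
    rw [Measure.restrict_apply_self] at h3
    exact le_antisymm h3 (zero_le)
  have hKσt : K t = K σ := by
    have hμIoc := K.measure_Ioc σ t
    rw [hμ0] at hμIoc
    have h1 : K t - K σ ≤ 0 := ENNReal.ofReal_eq_zero.mp hμIoc.symm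
    have h2 : K σ ≤ K t := K.mono hσt
    linarith
  -- interval integrability
  have hbXc : ContinuousOn (fun s => b (X s)) (Icc 0 T) := hb.continuous.comp_continuousOn hXc
  have hbX'c : ContinuousOn (fun s => b (X' s)) (Icc 0 T) := hb.continuous.comp_continuousOn hX'c
  have huIcc1 : uIcc (0:ℝ) σ ⊆ Icc 0 T := by
    rw [uIcc_of_le hσ0]; exact Icc_subset_Icc le_rfl (hσt.trans ht.2)
  have huIcc2 : uIcc σ t ⊆ Icc 0 T := by
    rw [uIcc_of_le hσt]; exact Icc_subset_Icc hσ0 ht.2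
  have huIcc3 : uIcc (0:ℝ) t ⊆ Icc 0 T := by
    rw [uIcc_of_le ht.1]; exact Icc_subset_Icc le_rfl ht.2
  have hiX1 : IntervalIntegrable (fun s => b (X s)) volume 0 σ :=
    (hbXc.mono huIcc1).intervalIntegrable
  have hiX2 : IntervalIntegrable (fun s => b (X s)) volume σ t :=
    (hbXc.mono huIcc2).intervalIntegrable
  have hiX'1 : IntervalIntegrable (fun s => b (X' s)) volume 0 σ :=
    (hbX'c.mono huIcc1).intervalIntegrable
  have hiX'2 : IntervalIntegrable (fun s => b (X' s)) volume σ t :=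
    (hbX'c.mono huIcc2).intervalIntegrable
  have habs : ContinuousOn (fun s => |X s - X' s|) (Icc 0 T) := (hXc.sub hX'c).abs
  have hiabs2 : IntervalIntegrable (fun s => |X s - X' s|) volume σ t :=
    (habs.mono huIcc2).intervalIntegrable
  have hiabs3 : IntervalIntegrable (fun s => |X s - X' s|) volume 0 t :=
    (habs.mono huIcc3).intervalIntegrable
  -- split the drift integrals
  have hsplitX : (∫ s in (0:ℝ)..σ, b (X s)) + (∫ s in σ..t, b (X s))
      = ∫ s in (0:ℝ)..t, b (X s) :=
    intervalIntegral.integral_add_adjacent_intervals hiX1 hiX2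
  have hsplitX' : (∫ s in (0:ℝ)..σ, b (X' s)) + (∫ s in σ..t, b (X' s))
      = ∫ s in (0:ℝ)..t, b (X' s) :=
    intervalIntegral.integral_add_adjacent_intervals hiX'1 hiX'2
  have hXt := hXeq t ht
  have hXσ := hXeq σ hσT
  have hX't := hX'eq t ht
  have hX'σ := hX'eq σ hσT
  have hK' : K' σ ≤ K' t := K'.mono hσt
  -- pointwise Lipschitz bound
  have hpt : ∀ s, b (X s) - b (X' s) ≤ (Lb : ℝ) * |X s - X' s| := by
    intro s
    have := hb.dist_le_mul (X s) (X' s)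
    rw [Real.dist_eq, Real.dist_eq] at this
    calc b (X s) - b (X' s) ≤ |b (X s) - b (X' s)| := le_abs_self _
      _ ≤ (Lb : ℝ) * |X s - X' s| := this
  have hmono_int : (∫ s in σ..t, (b (X s) - b (X' s)))
      ≤ ∫ s in σ..t, (Lb : ℝ) * |X s - X' s| := by
    apply intervalIntegral.integral_mono_on hσt (hiX2.sub hiX'2)
      (hiabs2.const_mul _)
    intro s _; exact hpt s
  have hsub_int : (∫ s in σ..t, (b (X s) - b (X' s)))
      = (∫ s in σ..t, b (X s)) - ∫ s in σ..t, b (X' s) :=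
    intervalIntegral.integral_sub hiX2 hiX'2
  have hgrow : (∫ s in σ..t, (Lb : ℝ) * |X s - X' s|)
      ≤ ∫ s in (0:ℝ)..t, (Lb : ℝ) * |X s - X' s| := by
    apply intervalIntegral.integral_mono_interval hσ0 hσt le_rfl
    · exact ae_restrict_of_forall_mem measurableSet_Ioc fun s _ =>
        mul_nonneg Lb.coe_nonneg (abs_nonneg _)
    · exact hiabs3.const_mul _
  have hconst : (∫ s in (0:ℝ)..t, (Lb : ℝ) * |X s - X' s|)
      = (Lb : ℝ) * ∫ s in (0:ℝ)..t, |X s - X' s| :=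
    intervalIntegral.integral_const_mul _ _
  -- put everything together
  have e1 : X t - X σ = ∫ s in σ..t, b (X s) := by
    rw [hXt, hXσ, hKσt]; linarith [hsplitX]
  have e2 : X' t - X' σ = (∫ s in σ..t, b (X' s)) + (K' t - K' σ) := by
    rw [hX't, hX'σ]; linarith [hsplitX']
  have : X t - X' t ≤ (∫ s in σ..t, b (X s)) - ∫ s in σ..t, b (X' s) := by
    linarith
  calc X t - X' t ≤ (∫ s in σ..t, b (X s)) - ∫ s in σ..t, b (X' s) := this
    _ = ∫ s in σ..t, (b (X s) - b (X' s)) := hsub_int.symm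
    _ ≤ ∫ s in σ..t, (Lb : ℝ) * |X s - X' s| := hmono_int
    _ ≤ ∫ s in (0:ℝ)..t, (Lb : ℝ) * |X s - X' s| := hgrow
    _ = (Lb : ℝ) * ∫ s in (0:ℝ)..t, |X s - X' s| := hconst

theorem stmt8
    (T : ℝ) (hT : 0 < T) (ξ : ℝ)
    (b : ℝ → ℝ) (Lb : NNReal) (hb : LipschitzWith Lb b)
    (m M : ℝ) (hm : 0 < m) (hmM : m ≤ M)
    (h : ℝ → ℝ) (hmono : Monotone h)
    (hbil : ∀ x y : ℝ, m * |x - y| ≤ |h x - h y| ∧ |h x - h y| ≤ M * |x - y|)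
    (hξ : 0 ≤ h ξ)
    (X X' : ℝ → ℝ) (K K' : StieltjesFunction ℝ)
    (hXc : ContinuousOn X (Icc 0 T)) (hKc : Continuous ⇑K) (hK0 : K 0 = 0)
    (hXeq : ∀ t ∈ Icc (0:ℝ) T, X t = ξ + (∫ s in (0:ℝ)..t, b (X s)) + K t)
    (hXpos : ∀ t ∈ Icc (0:ℝ) T, 0 ≤ h (X t))
    (hXflat : ∀ t ∈ Icc (0:ℝ) T, ∫ s in Ioc (0:ℝ) t, h (X s) ∂K.measure = 0)
    (hX'c : ContinuousOn X' (Icc 0 T)) (hK'c : Continuous ⇑K') (hK'0 : K' 0 = 0)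
    (hX'eq : ∀ t ∈ Icc (0:ℝ) T, X' t = ξ + (∫ s in (0:ℝ)..t, b (X' s)) + K' t)
    (hX'pos : ∀ t ∈ Icc (0:ℝ) T, 0 ≤ h (X' t))
    (hX'flat : ∀ t ∈ Icc (0:ℝ) T, ∫ s in Ioc (0:ℝ) t, h (X' s) ∂K'.measure = 0) :
    ∀ t ∈ Icc (0:ℝ) T, X t = X' t ∧ K t = K' t := by
  have key1 := key_ineq T ξ b Lb hb m M hm h hmono hbil X X' K K'
    hXc hK0 hXeq hXpos hXflat hX'c hK'0 hX'eq hX'pos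
  have hbil' : ∀ x y : ℝ, m * |x - y| ≤ |h x - h y| ∧ |h x - h y| ≤ M * |x - y| := hbil
  have key2 := key_ineq T ξ b Lb hb m M hm h hmono hbil X' X K' K
    hX'c hK'0 hX'eq hX'pos hX'flat hXc hK0 hXeq hXpos
  -- |X t - X' t| ≤ Lb * ∫₀ᵗ |X - X'|
  have keyabs : ∀ t ∈ Icc (0:ℝ) T, |X t - X' t| ≤ Lb * ∫ s in (0:ℝ)..t, |X s - X' s| := by
    intro t ht
    have h2 := key2 t ht
    have hcongr : (∫ s in (0:ℝ)..t, |X' s - X s|) = ∫ s in (0:ℝ)..t, |X s - X' s| :=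
      intervalIntegral.integral_congr fun s _ => abs_sub_comm _ _
    rw [hcongr] at h2
    exact abs_le.mpr ⟨by linarith, key1 t ht⟩
  -- continuous extension of |X - X'| to all of ℝ
  set p : ℝ → ℝ := fun s => max 0 (min s T) with hp
  have hpc : Continuous p := continuous_const.max (continuous_id.min continuous_const)
  have hpmem : ∀ s, p s ∈ Icc (0:ℝ) T := fun s =>
    ⟨le_max_left _ _, max_le hT.le (min_le_right _ _)⟩
  have hpid : ∀ s ∈ Icc (0:ℝ) T, p s = s := by
    intro s hs
    simp only [hp]
    rw [min_eq_left hs.2, max_eq_right hs.1]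
  set g : ℝ → ℝ := fun s => |X (p s) - X' (p s)| with hg
  have hgc : Continuous g := by
    have h1 : Continuous fun s => X (p s) := hXc.comp_continuous hpc hpmem
    have h2 : Continuous fun s => X' (p s) := hX'c.comp_continuous hpc hpmem
    exact (h1.sub h2).abs
  have hgnn : ∀ s, 0 ≤ g s := fun s => abs_nonneg _
  set G : ℝ → ℝ := fun r => ∫ s in (0:ℝ)..r, g s with hG
  have hGder : ∀ x : ℝ, HasDerivAt G (g x) x := by
    intro x
    exact intervalIntegral.integral_hasDerivAt_right (hgc.intervalIntegrable _ _)
      hgc.stronglyMeasurable.stronglyMeasurableAtFilter hgc.continuousAt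
  have hGc : ContinuousOn G (Icc 0 T) := fun x _ => (hGder x).continuousAt.continuousWithinAt
  have hG0 : G 0 = 0 := intervalIntegral.integral_same
  have hbound : ∀ x ∈ Ico (0:ℝ) T, ‖g x‖ ≤ (Lb : ℝ) * ‖G x‖ + 0 := by
    intro x hx
    have hxI : x ∈ Icc (0:ℝ) T := ⟨hx.1, hx.2.le⟩
    have hGnn : 0 ≤ G x := intervalIntegral.integral_nonneg hx.1 fun s _ => hgnn s
    have hGeq : G x = ∫ s in (0:ℝ)..x, |X s - X' s| := by
      apply intervalIntegral.integral_congr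
      intro s hs
      rw [uIcc_of_le hx.1] at hs
      have : p s = s := hpid s ⟨hs.1, hs.2.trans hx.2.le⟩
      simp only [hg, this]
    have hgx : g x = |X x - X' x| := by simp only [hg, hpid x hxI]
    rw [Real.norm_of_nonneg (hgnn x), Real.norm_of_nonneg hGnn, add_zero, hGeq, hgx]
    exact keyabs x hxI
  have hGron := norm_le_gronwallBound_of_norm_deriv_right_le (δ := 0) (ε := 0) hGc
    (fun x _ => (hGder x).hasDerivWithinAt) (by simp [hG0]) hbound
  have hGzero : ∀ x ∈ Icc (0:ℝ) T, G x = 0 := by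
    intro x hx
    have := hGron x hx
    rw [gronwallBound_ε0_δ0] at this
    have hGnn : 0 ≤ G x := intervalIntegral.integral_nonneg hx.1 fun s _ => hgnn s
    rw [Real.norm_of_nonneg hGnn] at this
    linarith
  have hXeqX' : ∀ x ∈ Icc (0:ℝ) T, X x = X' x := by
    intro x hx
    have h1 := keyabs x hx
    have hGeq : G x = ∫ s in (0:ℝ)..x, |X s - X' s| := by
      apply intervalIntegral.integral_congr
      intro s hs
      rw [uIcc_of_le hx.1] at hs
      have : p s = s := hpid s ⟨hs.1, hs.2.trans hx.2⟩
      simp only [hg, this]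
    rw [← hGeq, hGzero x hx, mul_zero] at h1
    have := abs_nonneg (X x - X' x)
    have : |X x - X' x| = 0 := le_antisymm h1 this
    have := abs_eq_zero.mp this
    linarith
  intro t ht
  refine ⟨hXeqX' t ht, ?_⟩
  have hdrift : (∫ s in (0:ℝ)..t, b (X s)) = ∫ s in (0:ℝ)..t, b (X' s) := by
    apply intervalIntegral.integral_congr
    intro s hs
    rw [uIcc_of_le ht.1] at hs
    simp only [hXeqX' s ⟨hs.1, hs.2.trans ht.2⟩]
  have h1 := hXeq t ht
  have h2 := hX'eq t ht
  have h3 := hXeqX' t ht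
  rw [hdrift] at h1
  linarith [h1, h2]
end

section
/- Let b, σ : ℝ → ℝ be Lipschitz, K⁰ continuous nondecreasing with K⁰(0)=0, N > 0, and let Y^φ, Y^ψ solve the skeleton equation with controls φ, ψ in the L² ball of radius N. Then there exists a constant C (depending on T, N, ξ, the Lipschitz constants, K⁰(T)) such that sup_{t∈[0,T]} |Y^φ(t) − Y^ψ(t)|² ≤ C ∫₀ᵀ |φ(s) − ψ(s)|² ds. -/
open MeasureTheory Set

open intervalIntegral Real

section helpers

lemma gronwall_int_s12 {u : ℝ → ℝ} {A c T : ℝ} (hT : 0 ≤ T) (hc : 0 < c) (hA : 0 ≤ A)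
    (hu : ContinuousOn u (Icc 0 T)) (hnn : ∀ t ∈ Icc 0 T, 0 ≤ u t)
    (h : ∀ t ∈ Icc 0 T, u t ≤ A + c * ∫ s in (0:ℝ)..t, u s) :
    ∀ t ∈ Icc 0 T, u t ≤ A * Real.exp (c * T) := by
  have huint : IntegrableOn u (Icc 0 T) := hu.integrableOn_compact isCompact_Icc
  have huIcc : uIcc (0:ℝ) T = Icc 0 T := uIcc_of_le hT
  set v : ℝ → ℝ := fun x => ∫ s in (0:ℝ)..x, u s with hvdef
  have hvc : ContinuousOn v (Icc 0 T) := by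
    have := continuousOn_primitive_interval (μ := volume) (a := (0:ℝ)) (b := T)
      (f := u) (by rwa [huIcc])
    rwa [huIcc] at this
  have hvnn : ∀ x ∈ Icc (0:ℝ) T, 0 ≤ v x := by
    intro x hx
    apply intervalIntegral.integral_nonneg hx.1
    intro s hs; exact hnn s ⟨hs.1, hs.2.trans hx.2⟩
  have hder : ∀ x ∈ Ico (0:ℝ) T, HasDerivWithinAt v (u x) (Ici x) x := by
    intro x hx
    have hIccmem : Icc (0:ℝ) T ∈ nhdsWithin x (Ici x) := by
      refine Filter.mem_of_superset (Filter.inter_mem self_mem_nhdsWithin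
        (mem_nhdsWithin_of_mem_nhds (Iio_mem_nhds hx.2))) ?_
      rintro z ⟨hz1, hz2⟩
      exact ⟨hx.1.trans hz1, le_of_lt hz2⟩
    have hIccmem' : Icc (0:ℝ) T ∈ nhdsWithin x (Ioi x) :=
      nhdsWithin_mono x Ioi_subset_Ici_self hIccmem
    have hmeas : StronglyMeasurableAtFilter u (nhdsWithin x (Ioi x)) volume :=
      ⟨Icc 0 T, hIccmem', huint.aestronglyMeasurable⟩
    have hii : IntervalIntegrable u volume 0 x := by
      rw [intervalIntegrable_iff_integrableOn_Ioc_of_le hx.1]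
      exact huint.mono_set (fun z hz => ⟨hz.1.le, hz.2.trans hx.2.le⟩)
    have hcont : Filter.Tendsto u (nhdsWithin x (Ioi x) ⊓ ae volume) (nhds (u x)) := by
      have h1 : Filter.Tendsto u (nhdsWithin x (Icc 0 T)) (nhds (u x)) :=
        hu x ⟨hx.1, hx.2.le⟩
      refine h1.mono_left ?_
      calc nhdsWithin x (Ioi x) ⊓ ae volume ≤ nhdsWithin x (Ioi x) := inf_le_left
        _ ≤ nhdsWithin x (Icc 0 T) := nhdsWithin_le_iff.mpr hIccmem'
    exact intervalIntegral.integral_hasDerivWithinAt_of_tendsto_ae_right hii hmeas hcont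
  have key := norm_le_gronwallBound_of_norm_deriv_right_le (f := v) (f' := u)
    (δ := 0) (K := c) (ε := A) (a := 0) (b := T) hvc hder
    (by simp [hvdef]) ?_
  · intro t ht
    have hvb := key t ht
    rw [Real.norm_eq_abs, abs_of_nonneg (hvnn t ht)] at hvb
    have hgb : gronwallBound 0 c A (t - 0) = A / c * (Real.exp (c * t) - 1) := by
      rw [gronwallBound_of_K_ne_0 hc.ne']
      simp
    rw [hgb] at hvb
    calc u t ≤ A + c * v t := h t ht
      _ ≤ A + c * (A / c * (Real.exp (c * t) - 1)) := by nlinarith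
      _ = A * Real.exp (c * t) := by field_simp; ring
      _ ≤ A * Real.exp (c * T) := by
          apply mul_le_mul_of_nonneg_left _ hA
          exact Real.exp_le_exp.mpr (by nlinarith [ht.2])
  · intro x hx
    rw [Real.norm_eq_abs, Real.norm_eq_abs, abs_of_nonneg (hnn x ⟨hx.1, hx.2.le⟩),
      abs_of_nonneg (hvnn x ⟨hx.1, hx.2.le⟩)]
    linarith [h x ⟨hx.1, hx.2.le⟩]

lemma cs_sq_s12 {f g : ℝ → ℝ} {t : ℝ} (ht : 0 ≤ t)
    (hf : MemLp f 2 (volume.restrict (Ioc 0 t)))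
    (hg : MemLp g 2 (volume.restrict (Ioc 0 t))) :
    (∫ s in (0:ℝ)..t, |f s| * |g s|) ^ 2
      ≤ (∫ s in (0:ℝ)..t, f s ^ 2) * (∫ s in (0:ℝ)..t, g s ^ 2) := by
  have habs : ∀ x : ℝ, |x| ^ (2:ℝ) = x ^ 2 := by
    intro x
    rw [show (2:ℝ) = ((2:ℕ):ℝ) by norm_num, Real.rpow_natCast]
    exact sq_abs x
  rw [intervalIntegral.integral_of_le ht, intervalIntegral.integral_of_le ht,
    intervalIntegral.integral_of_le ht]
  set μ := volume.restrict (Ioc (0:ℝ) t) with hμ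
  have h2 : Real.HolderConjugate 2 2 := Real.holderConjugate_iff.mpr ⟨one_lt_two, by norm_num⟩
  have hf' : MemLp (fun s => |f s|) (ENNReal.ofReal 2) μ := by
    have := hf.norm
    simp only [Real.norm_eq_abs] at this
    convert this using 2
    norm_num
  have hg' : MemLp (fun s => |g s|) (ENNReal.ofReal 2) μ := by
    have := hg.norm
    simp only [Real.norm_eq_abs] at this
    convert this using 2
    norm_num
  have key := integral_mul_le_Lp_mul_Lq_of_nonneg h2
    (Filter.Eventually.of_forall (fun s => abs_nonneg (f s)))
    (Filter.Eventually.of_forall (fun s => abs_nonneg (g s))) hf' hg'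
  simp only [habs] at key
  have hX : 0 ≤ ∫ s, f s ^ 2 ∂μ := integral_nonneg (fun s => sq_nonneg _)
  have hY : 0 ≤ ∫ s, g s ^ 2 ∂μ := integral_nonneg (fun s => sq_nonneg _)
  have hL : 0 ≤ ∫ s, |f s| * |g s| ∂μ :=
    integral_nonneg (fun s => mul_nonneg (abs_nonneg _) (abs_nonneg _))
  have hhalf : ∀ X : ℝ, 0 ≤ X → (X ^ (1/2:ℝ)) ^ 2 = X := by
    intro X hX0
    rw [← Real.rpow_natCast (X ^ (1/2:ℝ)) 2, ← Real.rpow_mul hX0]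
    norm_num
  calc (∫ s, |f s| * |g s| ∂μ) ^ 2
      ≤ ((∫ s, f s ^ 2 ∂μ) ^ (1/2:ℝ) * (∫ s, g s ^ 2 ∂μ) ^ (1/2:ℝ)) ^ 2 :=
        pow_le_pow_left₀ hL key 2
    _ = (∫ s, f s ^ 2 ∂μ) * (∫ s, g s ^ 2 ∂μ) := by
        rw [mul_pow, hhalf _ hX, hhalf _ hY]

/-- Product of two L² functions is integrable. -/
lemma l2_mul_int {α : Type*} [MeasurableSpace α] {μ : Measure α} {f g : α → ℝ}
    (hf : MemLp f 2 μ) (hg : MemLp g 2 μ) : Integrable (fun x => f x * g x) μ := by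
  refine Integrable.mono' ((hf.integrable_sq.add hg.integrable_sq).const_mul (1/2))
    (hf.1.mul hg.1) ?_
  filter_upwards with x
  simp only [Pi.add_apply]
  rw [Real.norm_eq_abs, abs_mul]
  nlinarith [sq_nonneg (|f x| - |g x|), sq_abs (f x), sq_abs (g x), abs_nonneg (f x),
    abs_nonneg (g x)]

lemma memL2_restrict {χ : ℝ → ℝ} {T t : ℝ} (h : MemLp χ 2 (volume.restrict (Icc 0 T)))
    (ht : t ∈ Icc 0 T) : MemLp χ 2 (volume.restrict (Ioc 0 t)) :=
  h.mono_measure (Measure.restrict_mono (Ioc_subset_Icc_self.trans (Icc_subset_Icc le_rfl ht.2)) le_rfl)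

lemma memL2_of_bound {W : ℝ → ℝ} {T t C : ℝ} (hW : ContinuousOn W (Icc 0 T))
    (ht : t ∈ Icc 0 T) (hC : ∀ s ∈ Icc (0:ℝ) T, |W s| ≤ C) :
    MemLp W 2 (volume.restrict (Ioc 0 t)) := by
  have hsub : Ioc (0:ℝ) t ⊆ Icc 0 T := fun z hz => ⟨hz.1.le, hz.2.trans ht.2⟩
  have hmeas : AEStronglyMeasurable W (volume.restrict (Ioc 0 t)) :=
    (hW.mono hsub).aestronglyMeasurable measurableSet_Ioc
  refine MemLp.of_bound hmeas C ?_
  filter_upwards [ae_restrict_mem measurableSet_Ioc] with s hs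
  rw [Real.norm_eq_abs]
  exact hC s (hsub hs)

lemma memL2_cont {W : ℝ → ℝ} {T t : ℝ} (hW : ContinuousOn W (Icc 0 T))
    (ht : t ∈ Icc 0 T) : MemLp W 2 (volume.restrict (Ioc 0 t)) := by
  obtain ⟨C, hC⟩ := (isCompact_Icc.image_of_continuousOn hW).isBounded.subset_closedBall 0
  refine memL2_of_bound (C := C) hW ht (fun s hs => ?_)
  have := hC (mem_image_of_mem W hs)
  simpa [Metric.mem_closedBall, Real.dist_eq] using this

lemma l2_intInt {χ : ℝ → ℝ} {t : ℝ} (ht : 0 ≤ t)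
    (h : MemLp χ 2 (volume.restrict (Ioc 0 t))) : IntervalIntegrable χ volume 0 t := by
  rw [intervalIntegrable_iff_integrableOn_Ioc_of_le ht]
  exact h.integrable one_le_two

lemma l2_mul_intInt {f g : ℝ → ℝ} {t : ℝ} (ht : 0 ≤ t)
    (hf : MemLp f 2 (volume.restrict (Ioc 0 t)))
    (hg : MemLp g 2 (volume.restrict (Ioc 0 t))) :
    IntervalIntegrable (fun s => f s * g s) volume 0 t := by
  rw [intervalIntegrable_iff_integrableOn_Ioc_of_le ht]
  exact l2_mul_int hf hg

lemma l2_sq_intInt {f : ℝ → ℝ} {t : ℝ} (ht : 0 ≤ t)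
    (hf : MemLp f 2 (volume.restrict (Ioc 0 t))) :
    IntervalIntegrable (fun s => f s ^ 2) volume 0 t := by
  rw [intervalIntegrable_iff_integrableOn_Ioc_of_le ht]
  exact hf.integrable_sq

end helpers

lemma three_sq (x y z : ℝ) : (x + y + z) ^ 2 ≤ 3 * x ^ 2 + 3 * y ^ 2 + 3 * z ^ 2 := by
  nlinarith [sq_nonneg (x - y), sq_nonneg (x - z), sq_nonneg (y - z)]

lemma memL2_abs {α : Type*} [MeasurableSpace α] {μ : Measure α} {f : α → ℝ}
    (h : MemLp f 2 μ) : MemLp (fun x => |f x|) 2 μ := by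
  simpa only [Real.norm_eq_abs] using h.norm

lemma apriori (T : ℝ) (hT : 0 < T) (ξ N : ℝ) (hN : 0 < N)
    (b σ : ℝ → ℝ) (Lb Lσ : NNReal) (hb : LipschitzWith Lb b) (hσ : LipschitzWith Lσ σ)
    (K₀ : ℝ → ℝ) (hK₀m : MonotoneOn K₀ (Icc 0 T)) (hK₀0 : K₀ 0 = 0) :
    ∃ R : ℝ, 0 ≤ R ∧ ∀ χ : ℝ → ℝ, MemLp χ 2 (volume.restrict (Icc 0 T)) →
      (∫ s in (0:ℝ)..T, χ s ^ 2) ≤ N →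
      ∀ W : ℝ → ℝ, ContinuousOn W (Icc 0 T) →
        (∀ t ∈ Icc (0:ℝ) T, W t = ξ + (∫ s in (0:ℝ)..t, b (W s))
            + (∫ s in (0:ℝ)..t, σ (W s) * χ s) + K₀ t) →
        ∀ t ∈ Icc (0:ℝ) T, |W t| ≤ R := by
  have hK₀T : 0 ≤ K₀ T := by
    rw [← hK₀0]
    exact hK₀m ⟨le_rfl, hT.le⟩ ⟨hT.le, le_rfl⟩ hT.le
  set a₀ : ℝ := |ξ| + K₀ T + T * |b 0| with ha₀
  have ha₀nn : 0 ≤ a₀ := by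
    have := abs_nonneg ξ
    have := abs_nonneg (b 0)
    nlinarith
  set A : ℝ := 3 * a₀ ^ 2 + 6 * N * (σ 0) ^ 2 * T with hA
  set c : ℝ := 3 * (Lb:ℝ) ^ 2 * T + 6 * N * (Lσ:ℝ) ^ 2 + 1 with hc
  have hAnn : 0 ≤ A := by positivity
  have hcpos : 0 < c := by positivity
  clear_value a₀ A c
  refine ⟨Real.sqrt (A * Real.exp (c * T)), Real.sqrt_nonneg _, ?_⟩
  intro χ hχ hχN W hWc hWeq
  have hχT2 : MemLp χ 2 (volume.restrict (Ioc 0 T)) := memL2_restrict hχ ⟨hT.le, le_rfl⟩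
  have hχsqT : IntervalIntegrable (fun s => χ s ^ 2) volume 0 T := l2_sq_intInt hT.le hχT2
  have hχsqle : ∀ t ∈ Icc (0:ℝ) T, (∫ s in (0:ℝ)..t, χ s ^ 2) ≤ N := by
    intro t ht
    refine le_trans (intervalIntegral.integral_mono_interval le_rfl ht.1 ht.2
      (Filter.Eventually.of_forall (fun s => sq_nonneg _)) hχsqT) hχN
  set u : ℝ → ℝ := fun t => (W t) ^ 2 with hu
  have hucont : ContinuousOn u (Icc 0 T) := hWc.pow 2
  have hunn : ∀ t ∈ Icc (0:ℝ) T, 0 ≤ u t := fun t _ => sq_nonneg _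
  have hmain : ∀ t ∈ Icc (0:ℝ) T, u t ≤ A + c * ∫ s in (0:ℝ)..t, u s := by
    intro t ht
    have ht0 : 0 ≤ t := ht.1
    have htT : t ≤ T := ht.2
    have hsub : Icc (0:ℝ) t ⊆ Icc 0 T := Icc_subset_Icc le_rfl htT
    have hW' : ContinuousOn W (Icc 0 t) := hWc.mono hsub
    have hχ2 : MemLp χ 2 (volume.restrict (Ioc 0 t)) := memL2_restrict hχ ht
    have hW2 : MemLp W 2 (volume.restrict (Ioc 0 t)) := memL2_cont hWc ht
    have hσW : ContinuousOn (fun s => σ (W s)) (Icc 0 T) :=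
      hσ.continuous.comp_continuousOn hWc
    have hσW2 : MemLp (fun s => σ (W s)) 2 (volume.restrict (Ioc 0 t)) := memL2_cont hσW ht
    -- the comparison function f
    set f : ℝ → ℝ := fun s => |σ 0| + (Lσ:ℝ) * |W s| with hf
    have hfc : ContinuousOn f (Icc 0 T) := continuousOn_const.add (hWc.abs.const_smul (Lσ:ℝ))
    have hf2 : MemLp f 2 (volume.restrict (Ioc 0 t)) := memL2_cont hfc ht
    have hfnn : ∀ s, 0 ≤ f s := fun s => by positivity
    -- interval integrability
    have hiu : IntervalIntegrable u volume 0 t :=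
      ((hucont.mono hsub)).intervalIntegrable_of_Icc ht0
    have hiW : IntervalIntegrable (fun s => |W s|) volume 0 t :=
      (hW'.abs).intervalIntegrable_of_Icc ht0
    have hibW : IntervalIntegrable (fun s => |b (W s)|) volume 0 t :=
      ((hb.continuous.comp_continuousOn hW').abs).intervalIntegrable_of_Icc ht0
    have hiσχ : IntervalIntegrable (fun s => σ (W s) * χ s) volume 0 t :=
      l2_mul_intInt ht0 hσW2 hχ2
    have hifχ : IntervalIntegrable (fun s => |f s| * |χ s|) volume 0 t :=
      l2_mul_intInt ht0 (memL2_abs hf2) (memL2_abs hχ2)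
    -- quantities
    set B : ℝ := ∫ s in (0:ℝ)..t, |W s| with hB
    set Q : ℝ := ∫ s in (0:ℝ)..t, |f s| * |χ s| with hQ
    set Iu : ℝ := ∫ s in (0:ℝ)..t, u s with hIu
    have hIunn : 0 ≤ Iu :=
      intervalIntegral.integral_nonneg ht0 (fun s _ => sq_nonneg _)
    have hBnn : 0 ≤ B :=
      intervalIntegral.integral_nonneg ht0 (fun s _ => abs_nonneg _)
    have hQnn : 0 ≤ Q :=
      intervalIntegral.integral_nonneg ht0
        (fun s _ => mul_nonneg (abs_nonneg _) (abs_nonneg _))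
    -- step 1 : pointwise bound on W t
    have hWt : |W t| ≤ a₀ + (Lb:ℝ) * B + Q := by
      have heq := hWeq t ht
      have hK₀t1 : 0 ≤ K₀ t := by rw [← hK₀0]; exact hK₀m ⟨le_rfl, hT.le⟩ ht ht0
      have hK₀t2 : K₀ t ≤ K₀ T := hK₀m ht ⟨hT.le, le_rfl⟩ htT
      -- |I1| bound
      have hI1 : |∫ s in (0:ℝ)..t, b (W s)| ≤ |b 0| * t + (Lb:ℝ) * B := by
        have h1 : |∫ s in (0:ℝ)..t, b (W s)| ≤ ∫ s in (0:ℝ)..t, |b (W s)| := by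
          simpa [Real.norm_eq_abs] using
            intervalIntegral.norm_integral_le_integral_norm (f := fun s => b (W s))
              (μ := volume) (a := 0) (b := t) ht0
        have h2 : (∫ s in (0:ℝ)..t, |b (W s)|)
            ≤ ∫ s in (0:ℝ)..t, (|b 0| + (Lb:ℝ) * |W s|) := by
          refine intervalIntegral.integral_mono_on ht0 hibW
            (intervalIntegrable_const.add (hiW.const_mul _)) (fun s _ => ?_)
          have := hb.dist_le_mul (W s) 0
          rw [Real.dist_eq, Real.dist_eq, sub_zero] at this
          calc |b (W s)| = |(b (W s) - b 0) + b 0| := by congr 1; ring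
            _ ≤ |b (W s) - b 0| + |b 0| := abs_add_le _ _
            _ ≤ (Lb:ℝ) * |W s| + |b 0| := by linarith
            _ = |b 0| + (Lb:ℝ) * |W s| := by ring
        have h3 : (∫ s in (0:ℝ)..t, (|b 0| + (Lb:ℝ) * |W s|)) = |b 0| * t + (Lb:ℝ) * B := by
          rw [intervalIntegral.integral_add intervalIntegrable_const (hiW.const_mul _),
            intervalIntegral.integral_const, intervalIntegral.integral_const_mul]
          simp [mul_comm, hB]
        linarith
      -- |I2| bound
      have hI2 : |∫ s in (0:ℝ)..t, σ (W s) * χ s| ≤ Q := by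
        have h1 : |∫ s in (0:ℝ)..t, σ (W s) * χ s| ≤ ∫ s in (0:ℝ)..t, |σ (W s)| * |χ s| := by
          simpa [Real.norm_eq_abs, abs_mul] using
            intervalIntegral.norm_integral_le_integral_norm (f := fun s => σ (W s) * χ s)
              (μ := volume) (a := 0) (b := t) ht0
        have h2 : (∫ s in (0:ℝ)..t, |σ (W s)| * |χ s|) ≤ Q := by
          refine intervalIntegral.integral_mono_on ht0
            (l2_mul_intInt ht0 (memL2_abs hσW2) (memL2_abs hχ2)) hifχ (fun s _ => ?_)
          have hσs : |σ (W s)| ≤ f s := by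
            have := hσ.dist_le_mul (W s) 0
            rw [Real.dist_eq, Real.dist_eq, sub_zero] at this
            calc |σ (W s)| = |(σ (W s) - σ 0) + σ 0| := by congr 1; ring
              _ ≤ |σ (W s) - σ 0| + |σ 0| := abs_add_le _ _
              _ ≤ (Lσ:ℝ) * |W s| + |σ 0| := by linarith
              _ = f s := by rw [hf]; ring
          calc |σ (W s)| * |χ s| ≤ f s * |χ s| :=
                mul_le_mul_of_nonneg_right hσs (abs_nonneg _)
            _ = |f s| * |χ s| := by rw [abs_of_nonneg (hfnn s)]
        linarith
      rw [heq]
      have habs4 : |ξ + (∫ s in (0:ℝ)..t, b (W s)) + (∫ s in (0:ℝ)..t, σ (W s) * χ s) + K₀ t|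
          ≤ |ξ| + |∫ s in (0:ℝ)..t, b (W s)| + |∫ s in (0:ℝ)..t, σ (W s) * χ s| + |K₀ t| := by
        calc _ ≤ |ξ + (∫ s in (0:ℝ)..t, b (W s)) + (∫ s in (0:ℝ)..t, σ (W s) * χ s)| + |K₀ t| :=
              abs_add_le _ _
          _ ≤ |ξ + (∫ s in (0:ℝ)..t, b (W s))| + |∫ s in (0:ℝ)..t, σ (W s) * χ s| + |K₀ t| := by
              have := abs_add_le (ξ + (∫ s in (0:ℝ)..t, b (W s))) (∫ s in (0:ℝ)..t, σ (W s) * χ s)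
              linarith
          _ ≤ _ := by
              have := abs_add_le ξ (∫ s in (0:ℝ)..t, b (W s))
              linarith
      have hK₀abs : |K₀ t| ≤ K₀ T := by rw [abs_of_nonneg hK₀t1]; exact hK₀t2
      have hbt : |b 0| * t ≤ |b 0| * T := by
        exact mul_le_mul_of_nonneg_left htT (abs_nonneg _)
      calc |ξ + (∫ s in (0:ℝ)..t, b (W s)) + (∫ s in (0:ℝ)..t, σ (W s) * χ s) + K₀ t|
          ≤ |ξ| + |∫ s in (0:ℝ)..t, b (W s)| + |∫ s in (0:ℝ)..t, σ (W s) * χ s| + |K₀ t| := habs4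
        _ ≤ |ξ| + (|b 0| * t + (Lb:ℝ) * B) + Q + K₀ T := by linarith
        _ ≤ a₀ + (Lb:ℝ) * B + Q := by rw [ha₀]; linarith
    -- step 2 : Cauchy-Schwarz bounds
    have hBsq : B ^ 2 ≤ Iu * t := by
      have h1 := cs_sq_s12 (f := W) (g := fun _ => (1:ℝ)) ht0 hW2 (memLp_const 1)
      have h2 : (∫ s in (0:ℝ)..t, |W s| * |(1:ℝ)|) = B := by simp [hB]
      have h3 : (∫ s in (0:ℝ)..t, ((fun _ => (1:ℝ)) s) ^ 2) = t := by simp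
      rw [h2, h3] at h1
      exact h1
    have hfsq : (∫ s in (0:ℝ)..t, f s ^ 2) ≤ 2 * (σ 0) ^ 2 * t + 2 * (Lσ:ℝ) ^ 2 * Iu := by
      have h1 : (∫ s in (0:ℝ)..t, f s ^ 2)
          ≤ ∫ s in (0:ℝ)..t, (2 * (σ 0) ^ 2 + 2 * (Lσ:ℝ) ^ 2 * u s) := by
        refine intervalIntegral.integral_mono_on ht0
          (((hfc.mono hsub).pow 2).intervalIntegrable_of_Icc ht0)
          (intervalIntegrable_const.add (hiu.const_mul _)) (fun s _ => ?_)
        show (|σ 0| + (Lσ:ℝ) * |W s|) ^ 2 ≤ 2 * (σ 0) ^ 2 + 2 * (Lσ:ℝ) ^ 2 * (W s) ^ 2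
        have h2 : (|σ 0|) ^ 2 = (σ 0) ^ 2 := sq_abs _
        have h3 : (|W s|) ^ 2 = (W s) ^ 2 := sq_abs _
        nlinarith [sq_nonneg (|σ 0| - (Lσ:ℝ) * |W s|)]
      have h2 : (∫ s in (0:ℝ)..t, (2 * (σ 0) ^ 2 + 2 * (Lσ:ℝ) ^ 2 * u s))
          = 2 * (σ 0) ^ 2 * t + 2 * (Lσ:ℝ) ^ 2 * Iu := by
        rw [intervalIntegral.integral_add intervalIntegrable_const (hiu.const_mul _),
          intervalIntegral.integral_const, intervalIntegral.integral_const_mul]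
        simp [mul_comm, hIu]
      linarith
    have hQsq : Q ^ 2 ≤ (2 * (σ 0) ^ 2 * t + 2 * (Lσ:ℝ) ^ 2 * Iu) * N := by
      have h1 := cs_sq_s12 (f := f) (g := χ) ht0 hf2 hχ2
      have h2 : (∫ s in (0:ℝ)..t, χ s ^ 2) ≤ N := hχsqle t ht
      have h3 : 0 ≤ ∫ s in (0:ℝ)..t, χ s ^ 2 :=
        intervalIntegral.integral_nonneg ht0 (fun s _ => sq_nonneg _)
      have h4 : 0 ≤ ∫ s in (0:ℝ)..t, f s ^ 2 :=
        intervalIntegral.integral_nonneg ht0 (fun s _ => sq_nonneg _)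
      calc Q ^ 2 ≤ (∫ s in (0:ℝ)..t, f s ^ 2) * (∫ s in (0:ℝ)..t, χ s ^ 2) := h1
        _ ≤ (∫ s in (0:ℝ)..t, f s ^ 2) * N := mul_le_mul_of_nonneg_left h2 h4
        _ ≤ (2 * (σ 0) ^ 2 * t + 2 * (Lσ:ℝ) ^ 2 * Iu) * N :=
            mul_le_mul_of_nonneg_right hfsq hN.le
    -- step 3 : assemble
    clear_value B Q Iu
    have hut : u t = |W t| ^ 2 := by rw [hu]; rw [sq_abs]
    rw [hut]
    have hsq : |W t| ^ 2 ≤ (a₀ + (Lb:ℝ) * B + Q) ^ 2 :=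
      pow_le_pow_left₀ (abs_nonneg _) hWt 2
    have hLbnn : (0:ℝ) ≤ (Lb:ℝ) := (Lb:NNReal).coe_nonneg
    have e1 : (a₀ + (Lb:ℝ) * B + Q) ^ 2
        ≤ 3 * a₀ ^ 2 + 3 * ((Lb:ℝ) * B) ^ 2 + 3 * Q ^ 2 := three_sq _ _ _
    have e3 : B ^ 2 ≤ Iu * T := le_trans hBsq (mul_le_mul_of_nonneg_left htT hIunn)
    have e4 : Q ^ 2 ≤ (2 * (σ 0) ^ 2 * T + 2 * (Lσ:ℝ) ^ 2 * Iu) * N := by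
      refine le_trans hQsq (mul_le_mul_of_nonneg_right ?_ hN.le)
      have : 2 * (σ 0) ^ 2 * t ≤ 2 * (σ 0) ^ 2 * T :=
        mul_le_mul_of_nonneg_left htT (by positivity)
      linarith
    have f1 : 3 * (Lb:ℝ) ^ 2 * B ^ 2 ≤ 3 * (Lb:ℝ) ^ 2 * (Iu * T) :=
      mul_le_mul_of_nonneg_left e3 (by positivity)
    have e2 : ((Lb:ℝ) * B) ^ 2 = (Lb:ℝ) ^ 2 * B ^ 2 := by ring
    rw [hA, hc]
    linarith only [hsq, e1, e2, f1, e4, hIunn]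
  -- conclude with Gronwall
  intro t ht
  have := gronwall_int_s12 hT.le hcpos hAnn hucont hunn hmain t ht
  have h1 : |W t| = Real.sqrt (u t) := by
    rw [hu]
    exact (Real.sqrt_sq_eq_abs _).symm
  rw [h1]
  exact Real.sqrt_le_sqrt this

theorem stmt12
    (T : ℝ) (hT : 0 < T) (ξ : ℝ) (N : ℝ) (hN : 0 < N)
    (b σ : ℝ → ℝ) (Lb Lσ : NNReal)
    (hb : LipschitzWith Lb b) (hσ : LipschitzWith Lσ σ)
    (K₀ : ℝ → ℝ) (hK₀c : ContinuousOn K₀ (Icc 0 T))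
    (hK₀m : MonotoneOn K₀ (Icc 0 T)) (hK₀0 : K₀ 0 = 0) :
    ∃ C : ℝ, ∀ φ ψ : ℝ → ℝ,
      MemLp φ 2 (volume.restrict (Icc (0:ℝ) T)) →
      MemLp ψ 2 (volume.restrict (Icc (0:ℝ) T)) →
      (∫ s in (0:ℝ)..T, (φ s) ^ 2) ≤ N →
      (∫ s in (0:ℝ)..T, (ψ s) ^ 2) ≤ N →
      ∀ Y Z : ℝ → ℝ,
        ContinuousOn Y (Icc 0 T) →
        (∀ t ∈ Icc (0:ℝ) T,
          Y t = ξ + (∫ s in (0:ℝ)..t, b (Y s)) + (∫ s in (0:ℝ)..t, σ (Y s) * φ s) + K₀ t) →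
        ContinuousOn Z (Icc 0 T) →
        (∀ t ∈ Icc (0:ℝ) T,
          Z t = ξ + (∫ s in (0:ℝ)..t, b (Z s)) + (∫ s in (0:ℝ)..t, σ (Z s) * ψ s) + K₀ t) →
        ∀ t ∈ Icc (0:ℝ) T,
          |Y t - Z t| ^ 2 ≤ C * ∫ s in (0:ℝ)..T, |φ s - ψ s| ^ 2 := by
  obtain ⟨R, hR0, hRbound⟩ := apriori T hT ξ N hN b σ Lb Lσ hb hσ K₀ hK₀m hK₀0
  set M : ℝ := |σ 0| + (Lσ:ℝ) * R with hM
  have hMnn : 0 ≤ M := by positivity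
  set c : ℝ := 3 * (Lb:ℝ) ^ 2 * T + 3 * N * (Lσ:ℝ) ^ 2 + 1 with hc
  have hcpos : 0 < c := by positivity
  clear_value M c
  refine ⟨3 * M ^ 2 * T * Real.exp (c * T), ?_⟩
  intro φ ψ hφ hψ hφN hψN Y Z hYc hYeq hZc hZeq
  have hZb : ∀ s ∈ Icc (0:ℝ) T, |Z s| ≤ R := hRbound ψ hψ hψN Z hZc hZeq
  have hσZ : ∀ s ∈ Icc (0:ℝ) T, |σ (Z s)| ≤ M := by
    intro s hs
    have h1 := hσ.dist_le_mul (Z s) 0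
    rw [Real.dist_eq, Real.dist_eq, sub_zero] at h1
    have h2 : |Z s| ≤ R := hZb s hs
    have hLσnn : (0:ℝ) ≤ (Lσ:ℝ) := (Lσ:NNReal).coe_nonneg
    calc |σ (Z s)| = |(σ (Z s) - σ 0) + σ 0| := by congr 1; ring
      _ ≤ |σ (Z s) - σ 0| + |σ 0| := abs_add_le _ _
      _ ≤ (Lσ:ℝ) * |Z s| + |σ 0| := by linarith
      _ ≤ (Lσ:ℝ) * R + |σ 0| := by nlinarith
      _ = M := by rw [hM]; ring
  -- difference process
  set D : ℝ → ℝ := fun s => Y s - Z s with hD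
  have hDc : ContinuousOn D (Icc 0 T) := hYc.sub hZc
  set E : ℝ := ∫ s in (0:ℝ)..T, (φ s - ψ s) ^ 2 with hE
  have hφψ : MemLp (fun s => φ s - ψ s) 2 (volume.restrict (Icc 0 T)) := hφ.sub hψ
  have hφψT2 : MemLp (fun s => φ s - ψ s) 2 (volume.restrict (Ioc 0 T)) :=
    memL2_restrict hφψ ⟨hT.le, le_rfl⟩
  have hEnn : 0 ≤ E :=
    intervalIntegral.integral_nonneg hT.le (fun s _ => sq_nonneg _)
  have hφψsqT : IntervalIntegrable (fun s => (φ s - ψ s) ^ 2) volume 0 T :=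
    l2_sq_intInt hT.le hφψT2
  have hφψsqle : ∀ t ∈ Icc (0:ℝ) T, (∫ s in (0:ℝ)..t, (φ s - ψ s) ^ 2) ≤ E := by
    intro t ht
    exact intervalIntegral.integral_mono_interval le_rfl ht.1 ht.2
      (Filter.Eventually.of_forall (fun s => sq_nonneg _)) hφψsqT
  have hφT2 : MemLp φ 2 (volume.restrict (Ioc 0 T)) := memL2_restrict hφ ⟨hT.le, le_rfl⟩
  have hφsqT : IntervalIntegrable (fun s => φ s ^ 2) volume 0 T := l2_sq_intInt hT.le hφT2
  have hφsqle : ∀ t ∈ Icc (0:ℝ) T, (∫ s in (0:ℝ)..t, φ s ^ 2) ≤ N := by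
    intro t ht
    exact le_trans (intervalIntegral.integral_mono_interval le_rfl ht.1 ht.2
      (Filter.Eventually.of_forall (fun s => sq_nonneg _)) hφsqT) hφN
  set u : ℝ → ℝ := fun t => (D t) ^ 2 with hu
  have hucont : ContinuousOn u (Icc 0 T) := hDc.pow 2
  have hunn : ∀ t ∈ Icc (0:ℝ) T, 0 ≤ u t := fun t _ => sq_nonneg _
  have hmain : ∀ t ∈ Icc (0:ℝ) T, u t ≤ 3 * M ^ 2 * T * E + c * ∫ s in (0:ℝ)..t, u s := by
    intro t ht
    have ht0 : 0 ≤ t := ht.1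
    have htT : t ≤ T := ht.2
    have hsub : Icc (0:ℝ) t ⊆ Icc 0 T := Icc_subset_Icc le_rfl htT
    -- L² memberships on Ioc 0 t
    have hφ2 : MemLp φ 2 (volume.restrict (Ioc 0 t)) := memL2_restrict hφ ht
    have hψ2 : MemLp ψ 2 (volume.restrict (Ioc 0 t)) := memL2_restrict hψ ht
    have hφψ2 : MemLp (fun s => φ s - ψ s) 2 (volume.restrict (Ioc 0 t)) :=
      memL2_restrict hφψ ht
    have hD2 : MemLp D 2 (volume.restrict (Ioc 0 t)) := memL2_cont hDc ht
    have hσY : ContinuousOn (fun s => σ (Y s)) (Icc 0 T) :=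
      hσ.continuous.comp_continuousOn hYc
    have hσZc : ContinuousOn (fun s => σ (Z s)) (Icc 0 T) :=
      hσ.continuous.comp_continuousOn hZc
    have hσY2 : MemLp (fun s => σ (Y s)) 2 (volume.restrict (Ioc 0 t)) := memL2_cont hσY ht
    have hσZ2 : MemLp (fun s => σ (Z s)) 2 (volume.restrict (Ioc 0 t)) := memL2_cont hσZc ht
    -- interval integrability
    have hiu : IntervalIntegrable u volume 0 t :=
      (hucont.mono hsub).intervalIntegrable_of_Icc ht0
    have hiD : IntervalIntegrable (fun s => |D s|) volume 0 t :=
      ((hDc.mono hsub).abs).intervalIntegrable_of_Icc ht0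
    have hibY : IntervalIntegrable (fun s => b (Y s)) volume 0 t :=
      (hb.continuous.comp_continuousOn (hYc.mono hsub)).intervalIntegrable_of_Icc ht0
    have hibZ : IntervalIntegrable (fun s => b (Z s)) volume 0 t :=
      (hb.continuous.comp_continuousOn (hZc.mono hsub)).intervalIntegrable_of_Icc ht0
    have hibd : IntervalIntegrable (fun s => |b (Y s) - b (Z s)|) volume 0 t :=
      (hibY.sub hibZ).abs
    have hiσYφ : IntervalIntegrable (fun s => σ (Y s) * φ s) volume 0 t :=
      l2_mul_intInt ht0 hσY2 hφ2
    have hiσZψ : IntervalIntegrable (fun s => σ (Z s) * ψ s) volume 0 t :=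
      l2_mul_intInt ht0 hσZ2 hψ2
    have hiDφ : IntervalIntegrable (fun s => |D s| * |φ s|) volume 0 t :=
      l2_mul_intInt ht0 (memL2_abs hD2) (memL2_abs hφ2)
    have hiφψ : IntervalIntegrable (fun s => |φ s - ψ s|) volume 0 t := by
      have := l2_intInt ht0 (memL2_abs hφψ2)
      exact this
    -- quantities
    set BD : ℝ := ∫ s in (0:ℝ)..t, |D s| with hBD
    set P : ℝ := ∫ s in (0:ℝ)..t, |D s| * |φ s| with hP
    set G : ℝ := ∫ s in (0:ℝ)..t, |φ s - ψ s| with hG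
    set Iu : ℝ := ∫ s in (0:ℝ)..t, u s with hIu
    have hIunn : 0 ≤ Iu :=
      intervalIntegral.integral_nonneg ht0 (fun s _ => sq_nonneg _)
    have hBDnn : 0 ≤ BD :=
      intervalIntegral.integral_nonneg ht0 (fun s _ => abs_nonneg _)
    have hPnn : 0 ≤ P :=
      intervalIntegral.integral_nonneg ht0
        (fun s _ => mul_nonneg (abs_nonneg _) (abs_nonneg _))
    have hGnn : 0 ≤ G :=
      intervalIntegral.integral_nonneg ht0 (fun s _ => abs_nonneg _)
    -- step 1 : pointwise bound on D t
    have hDt : |D t| ≤ (Lb:ℝ) * BD + ((Lσ:ℝ) * P + M * G) := by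
      have heqY := hYeq t ht
      have heqZ := hZeq t ht
      have heqD : D t = (∫ s in (0:ℝ)..t, (b (Y s) - b (Z s)))
          + ∫ s in (0:ℝ)..t, (σ (Y s) * φ s - σ (Z s) * ψ s) := by
        rw [intervalIntegral.integral_sub hibY hibZ,
          intervalIntegral.integral_sub hiσYφ hiσZψ]
        show Y t - Z t = _
        rw [heqY, heqZ]
        ring
      have hI1 : |∫ s in (0:ℝ)..t, (b (Y s) - b (Z s))| ≤ (Lb:ℝ) * BD := by
        have h1 : |∫ s in (0:ℝ)..t, (b (Y s) - b (Z s))|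
            ≤ ∫ s in (0:ℝ)..t, |b (Y s) - b (Z s)| := by
          simpa [Real.norm_eq_abs] using
            intervalIntegral.norm_integral_le_integral_norm
              (f := fun s => b (Y s) - b (Z s)) (μ := volume) (a := 0) (b := t) ht0
        have h2 : (∫ s in (0:ℝ)..t, |b (Y s) - b (Z s)|)
            ≤ ∫ s in (0:ℝ)..t, (Lb:ℝ) * |D s| := by
          refine intervalIntegral.integral_mono_on ht0 hibd (hiD.const_mul _) (fun s _ => ?_)
          have := hb.dist_le_mul (Y s) (Z s)
          rw [Real.dist_eq, Real.dist_eq] at this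
          exact this
        have h3 : (∫ s in (0:ℝ)..t, (Lb:ℝ) * |D s|) = (Lb:ℝ) * BD := by
          rw [intervalIntegral.integral_const_mul]
        linarith
      have hI2 : |∫ s in (0:ℝ)..t, (σ (Y s) * φ s - σ (Z s) * ψ s)|
          ≤ (Lσ:ℝ) * P + M * G := by
        have h1 : |∫ s in (0:ℝ)..t, (σ (Y s) * φ s - σ (Z s) * ψ s)|
            ≤ ∫ s in (0:ℝ)..t, |σ (Y s) * φ s - σ (Z s) * ψ s| := by
          simpa [Real.norm_eq_abs] using
            intervalIntegral.norm_integral_le_integral_norm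
              (f := fun s => σ (Y s) * φ s - σ (Z s) * ψ s)
              (μ := volume) (a := 0) (b := t) ht0
        have h2 : (∫ s in (0:ℝ)..t, |σ (Y s) * φ s - σ (Z s) * ψ s|)
            ≤ ∫ s in (0:ℝ)..t, ((Lσ:ℝ) * (|D s| * |φ s|) + M * |φ s - ψ s|) := by
          refine intervalIntegral.integral_mono_on ht0 (hiσYφ.sub hiσZψ).abs
            ((hiDφ.const_mul _).add (hiφψ.const_mul _)) (fun s hs => ?_)
          have hls := hσ.dist_le_mul (Y s) (Z s)
          rw [Real.dist_eq, Real.dist_eq] at hls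
          have hσZs : |σ (Z s)| ≤ M := hσZ s (hsub hs)
          calc |σ (Y s) * φ s - σ (Z s) * ψ s|
              = |(σ (Y s) - σ (Z s)) * φ s + σ (Z s) * (φ s - ψ s)| := by congr 1; ring
            _ ≤ |(σ (Y s) - σ (Z s)) * φ s| + |σ (Z s) * (φ s - ψ s)| := abs_add_le _ _
            _ = |σ (Y s) - σ (Z s)| * |φ s| + |σ (Z s)| * |φ s - ψ s| := by
                rw [abs_mul, abs_mul]
            _ ≤ (Lσ:ℝ) * |D s| * |φ s| + M * |φ s - ψ s| := by
                have hφn : (0:ℝ) ≤ |φ s| := abs_nonneg _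
                have hφψn : (0:ℝ) ≤ |φ s - ψ s| := abs_nonneg _
                have e1 : |σ (Y s) - σ (Z s)| * |φ s| ≤ (Lσ:ℝ) * |D s| * |φ s| :=
                  mul_le_mul_of_nonneg_right hls hφn
                have e2 : |σ (Z s)| * |φ s - ψ s| ≤ M * |φ s - ψ s| :=
                  mul_le_mul_of_nonneg_right hσZs hφψn
                linarith
            _ = (Lσ:ℝ) * (|D s| * |φ s|) + M * |φ s - ψ s| := by ring
        have h3 : (∫ s in (0:ℝ)..t, ((Lσ:ℝ) * (|D s| * |φ s|) + M * |φ s - ψ s|))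
            = (Lσ:ℝ) * P + M * G := by
          rw [intervalIntegral.integral_add (hiDφ.const_mul _) (hiφψ.const_mul _),
            intervalIntegral.integral_const_mul, intervalIntegral.integral_const_mul]
        linarith
      calc |D t| = |(∫ s in (0:ℝ)..t, (b (Y s) - b (Z s)))
            + ∫ s in (0:ℝ)..t, (σ (Y s) * φ s - σ (Z s) * ψ s)| := by rw [heqD]
        _ ≤ |∫ s in (0:ℝ)..t, (b (Y s) - b (Z s))|
            + |∫ s in (0:ℝ)..t, (σ (Y s) * φ s - σ (Z s) * ψ s)| := abs_add_le _ _
        _ ≤ (Lb:ℝ) * BD + ((Lσ:ℝ) * P + M * G) := by linarith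
    -- step 2 : Cauchy-Schwarz bounds
    have hBDsq : BD ^ 2 ≤ Iu * t := by
      have h1 := cs_sq_s12 (f := D) (g := fun _ => (1:ℝ)) ht0 hD2 (memLp_const 1)
      have h2 : (∫ s in (0:ℝ)..t, |D s| * |(1:ℝ)|) = BD := by simp [hBD]
      have h3 : (∫ s in (0:ℝ)..t, ((fun _ => (1:ℝ)) s) ^ 2) = t := by simp
      rw [h2, h3] at h1
      exact h1
    have hPsq : P ^ 2 ≤ Iu * N := by
      have h1 := cs_sq_s12 (f := D) (g := φ) ht0 hD2 hφ2
      have h2 : 0 ≤ ∫ s in (0:ℝ)..t, φ s ^ 2 :=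
        intervalIntegral.integral_nonneg ht0 (fun s _ => sq_nonneg _)
      have h3 : (∫ s in (0:ℝ)..t, φ s ^ 2) ≤ N := hφsqle t ht
      calc P ^ 2 ≤ (∫ s in (0:ℝ)..t, D s ^ 2) * (∫ s in (0:ℝ)..t, φ s ^ 2) := h1
        _ ≤ (∫ s in (0:ℝ)..t, D s ^ 2) * N := mul_le_mul_of_nonneg_left h3 hIunn
        _ = Iu * N := rfl
    have hGsq : G ^ 2 ≤ E * t := by
      have h1 := cs_sq_s12 (f := fun s => φ s - ψ s) (g := fun _ => (1:ℝ)) ht0 hφψ2 (memLp_const 1)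
      have h2 : (∫ s in (0:ℝ)..t, |φ s - ψ s| * |(1:ℝ)|) = G := by simp [hG]
      have h3 : (∫ s in (0:ℝ)..t, ((fun _ => (1:ℝ)) s) ^ 2) = t := by simp
      rw [h2, h3] at h1
      calc G ^ 2 ≤ (∫ s in (0:ℝ)..t, (φ s - ψ s) ^ 2) * t := h1
        _ ≤ E * t := mul_le_mul_of_nonneg_right (hφψsqle t ht) ht0
    -- step 3 : assemble
    clear_value BD P G Iu
    have hut : u t = |D t| ^ 2 := by rw [hu]; rw [sq_abs]
    rw [hut]
    have hsq : |D t| ^ 2 ≤ ((Lb:ℝ) * BD + ((Lσ:ℝ) * P + M * G)) ^ 2 :=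
      pow_le_pow_left₀ (abs_nonneg _) hDt 2
    have e1 : ((Lb:ℝ) * BD + ((Lσ:ℝ) * P + M * G)) ^ 2
        ≤ 3 * ((Lb:ℝ) * BD) ^ 2 + 3 * ((Lσ:ℝ) * P) ^ 2 + 3 * (M * G) ^ 2 := by
      have := three_sq ((Lb:ℝ) * BD) ((Lσ:ℝ) * P) (M * G)
      linarith only [this]
    have e2 : ((Lb:ℝ) * BD) ^ 2 = (Lb:ℝ) ^ 2 * BD ^ 2 := by ring
    have e3 : ((Lσ:ℝ) * P) ^ 2 = (Lσ:ℝ) ^ 2 * P ^ 2 := by ring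
    have e4 : (M * G) ^ 2 = M ^ 2 * G ^ 2 := by ring
    have f1 : 3 * (Lb:ℝ) ^ 2 * BD ^ 2 ≤ 3 * (Lb:ℝ) ^ 2 * (Iu * T) := by
      refine mul_le_mul_of_nonneg_left (le_trans hBDsq ?_) (by positivity)
      exact mul_le_mul_of_nonneg_left htT hIunn
    have f2 : 3 * (Lσ:ℝ) ^ 2 * P ^ 2 ≤ 3 * (Lσ:ℝ) ^ 2 * (Iu * N) :=
      mul_le_mul_of_nonneg_left hPsq (by positivity)
    have f3 : 3 * M ^ 2 * G ^ 2 ≤ 3 * M ^ 2 * (E * T) := by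
      refine mul_le_mul_of_nonneg_left (le_trans hGsq ?_) (by positivity)
      exact mul_le_mul_of_nonneg_left htT hEnn
    rw [hc]
    linarith only [hsq, e1, e2, e3, e4, f1, f2, f3, hIunn]
  -- conclusion via Gronwall
  intro t ht
  have hgr := gronwall_int_s12 hT.le hcpos (by positivity) hucont hunn hmain t ht
  have hgoal : |Y t - Z t| ^ 2 = u t := by
    show |Y t - Z t| ^ 2 = D t ^ 2
    simp only [hD]
    exact sq_abs _
  have hEeq : (∫ s in (0:ℝ)..T, |φ s - ψ s| ^ 2) = E := by
    rw [hE]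
    refine intervalIntegral.integral_congr (fun s _ => ?_)
    exact sq_abs _
  rw [hgoal, hEeq]
  calc u t ≤ 3 * M ^ 2 * T * E * Real.exp (c * T) := hgr
    _ = 3 * M ^ 2 * T * Real.exp (c * T) * E := by ring
end

section
/- Let b, σ : ℝ → ℝ be Lipschitz, φₙ ⇀ φ weakly in L²([0,T],ℝ), and suppose Yⁿ → Z uniformly on [0,T] where Yⁿ solves Yⁿ(t) = ξ + ∫₀ᵗ b(Yⁿ) ds + ∫₀ᵗ σ(Yⁿ) φₙ ds + K⁰(t). Then Z solves Z(t) = ξ + ∫₀ᵗ b(Z) ds + ∫₀ᵗ σ(Z) φ ds + K⁰(t) for all t ∈ [0,T]. -/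
open MeasureTheory Set Filter

theorem stmt16
    (T : ℝ) (hT : 0 < T) (ξ : ℝ)
    (b σ : ℝ → ℝ) (Lb Lσ : NNReal)
    (hb : LipschitzWith Lb b) (hσ : LipschitzWith Lσ σ)
    (K₀ : ℝ → ℝ) (hK₀c : ContinuousOn K₀ (Icc 0 T))
    (φn : ℕ → ℝ → ℝ) (φ : ℝ → ℝ)
    (hφn : ∀ n, MemLp (φn n) 2 (volume.restrict (Icc (0:ℝ) T)))
    (hφ : MemLp φ 2 (volume.restrict (Icc (0:ℝ) T)))
    (hweak : ∀ g : ℝ → ℝ, MemLp g 2 (volume.restrict (Icc (0:ℝ) T)) →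
      Tendsto (fun n => ∫ s in (0:ℝ)..T, φn n s * g s) atTop
        (nhds (∫ s in (0:ℝ)..T, φ s * g s)))
    (Yn : ℕ → ℝ → ℝ) (Z : ℝ → ℝ)
    (hYnc : ∀ n, ContinuousOn (Yn n) (Icc 0 T))
    (hYn : ∀ n, ∀ t ∈ Icc (0:ℝ) T,
      Yn n t = ξ + (∫ s in (0:ℝ)..t, b (Yn n s)) + (∫ s in (0:ℝ)..t, σ (Yn n s) * φn n s) + K₀ t)
    (hunif : Tendsto (fun n => sSup ((fun t => |Yn n t - Z t|) '' Icc (0:ℝ) T)) atTop (nhds 0))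
    (hZc : ContinuousOn Z (Icc 0 T)) :
    ∀ t ∈ Icc (0:ℝ) T,
      Z t = ξ + (∫ s in (0:ℝ)..t, b (Z s)) + (∫ s in (0:ℝ)..t, σ (Z s) * φ s) + K₀ t := by
  intro t ht
  obtain ⟨ht0, htT⟩ := ht
  set μ := volume.restrict (Icc (0:ℝ) T) with hμdef
  haveI : Fact ((1:ENNReal) ≤ 2) := ⟨by norm_num⟩
  haveI : IsFiniteMeasure μ := by
    constructor
    rw [hμdef, Measure.restrict_apply_univ, Real.volume_Icc]
    exact ENNReal.ofReal_lt_top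
  set M : ℕ → ℝ := fun n => sSup ((fun t => |Yn n t - Z t|) '' Icc (0:ℝ) T) with hM
  have hcomp : IsCompact (Icc (0:ℝ) T) := isCompact_Icc
  have hMb : ∀ n, ∀ s ∈ Icc (0:ℝ) T, |Yn n s - Z s| ≤ M n := by
    intro n s hs
    exact le_csSup (hcomp.image_of_continuousOn ((hYnc n).sub hZc).abs).bddAbove
      ⟨s, hs, rfl⟩
  have hsub : Ioc (0:ℝ) t ⊆ Icc 0 T := fun x hx => ⟨hx.1.le, hx.2.trans htT⟩
  -- Step A : pointwise convergence of Yn at t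
  have hA : Tendsto (fun n => Yn n t) atTop (nhds (Z t)) := by
    rw [tendsto_iff_dist_tendsto_zero]
    refine squeeze_zero (fun n => dist_nonneg) (fun n => ?_) hunif
    rw [Real.dist_eq]
    exact hMb n t ⟨ht0, htT⟩
  -- Step B : convergence of the drift integrals
  have hbYn_int : ∀ n, IntervalIntegrable (fun s => b (Yn n s)) volume 0 t := by
    intro n
    apply ContinuousOn.intervalIntegrable
    rw [uIcc_of_le ht0]
    exact (hb.continuous.comp_continuousOn (hYnc n)).mono (Icc_subset_Icc le_rfl htT)
  have hbZ_int : IntervalIntegrable (fun s => b (Z s)) volume 0 t := by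
    apply ContinuousOn.intervalIntegrable
    rw [uIcc_of_le ht0]
    exact (hb.continuous.comp_continuousOn hZc).mono (Icc_subset_Icc le_rfl htT)
  have hB : Tendsto (fun n => ∫ s in (0:ℝ)..t, b (Yn n s)) atTop
      (nhds (∫ s in (0:ℝ)..t, b (Z s))) := by
    rw [tendsto_iff_dist_tendsto_zero]
    refine squeeze_zero (fun n => dist_nonneg) (fun n => ?_)
      (by simpa using hunif.const_mul ((Lb : ℝ) * T))
    rw [dist_eq_norm, ← intervalIntegral.integral_sub (hbYn_int n) hbZ_int]
    have hbd : ∀ x ∈ uIoc (0:ℝ) t, ‖b (Yn n x) - b (Z x)‖ ≤ (Lb : ℝ) * M n := by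
      intro x hx
      rw [uIoc_of_le ht0] at hx
      calc ‖b (Yn n x) - b (Z x)‖ = dist (b (Yn n x)) (b (Z x)) := (dist_eq_norm _ _).symm
        _ ≤ (Lb : ℝ) * dist (Yn n x) (Z x) := hb.dist_le_mul _ _
        _ ≤ (Lb : ℝ) * M n := by
            refine mul_le_mul_of_nonneg_left ?_ Lb.coe_nonneg
            rw [Real.dist_eq]
            exact hMb n x (hsub hx)
    have hM0 : 0 ≤ M n := le_trans (abs_nonneg _) (hMb n 0 ⟨le_rfl, hT.le⟩)
    calc ‖∫ s in (0:ℝ)..t, (b (Yn n s) - b (Z s))‖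
        ≤ ((Lb : ℝ) * M n) * |t - 0| := intervalIntegral.norm_integral_le_of_norm_le_const hbd
      _ ≤ (Lb : ℝ) * T * M n := by
          rw [sub_zero, abs_of_nonneg ht0]
          nlinarith [mul_nonneg (mul_nonneg Lb.coe_nonneg hM0) (sub_nonneg.2 htT)]
  -- Banach–Steinhaus: uniform bound on the L² norms of φn
  have hbs : ∃ C : ℝ, 0 ≤ C ∧ ∀ n, (eLpNorm (φn n) 2 μ).toReal ≤ C := by
    set F : ℕ → (Lp ℝ 2 μ) →L[ℝ] ℝ := fun n => innerSL ℝ ((hφn n).toLp (φn n)) with hF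
    have heq : ∀ (n : ℕ) (g : Lp ℝ 2 μ),
        F n g = ∫ s in (0:ℝ)..T, φn n s * (g : ℝ → ℝ) s := by
      intro n g
      rw [intervalIntegral.integral_of_le hT.le, ← integral_Icc_eq_integral_Ioc]
      have h1 : F n g = ∫ x, (((hφn n).toLp (φn n)) : ℝ → ℝ) x * (g : ℝ → ℝ) x ∂μ := by
        simp only [hF, innerSL_apply_apply, L2.inner_def, RCLike.inner_apply, conj_trivial, mul_comm]
      rw [h1]
      refine integral_congr_ae ?_
      filter_upwards [(hφn n).coeFn_toLp] with x hx
      rw [hx]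
    have hpoint : ∀ g : Lp ℝ 2 μ, ∃ C, ∀ n, ‖F n g‖ ≤ C := by
      intro g
      have h1 := (hweak (g : ℝ → ℝ) (Lp.memLp g)).norm
      have h2 : Tendsto (fun n => ‖F n g‖) atTop
          (nhds ‖∫ s in (0:ℝ)..T, φ s * (g : ℝ → ℝ) s‖) := by
        refine h1.congr fun n => ?_
        rw [heq n g]
      obtain ⟨C, hC⟩ := h2.bddAbove_range
      exact ⟨C, fun n => hC ⟨n, rfl⟩⟩
    obtain ⟨C', hC'⟩ := banach_steinhaus hpoint
    refine ⟨C', le_trans (norm_nonneg (F 0)) (hC' 0), fun n => ?_⟩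
    have h3 : ‖F n‖ = (eLpNorm (φn n) 2 μ).toReal := by
      rw [hF]
      rw [innerSL_apply_norm]
      exact Lp.norm_toLp _ _
    rw [← h3]
    exact hC' n
  obtain ⟨C, hC0, hCb⟩ := hbs
  set R : ℝ := C * T ^ ((1:ℝ)/2) with hR
  have hR0 : 0 ≤ R := mul_nonneg hC0 (Real.rpow_nonneg hT.le _)
  -- uniform L¹ bound
  have hφn_int : ∀ n, Integrable (φn n) μ := fun n => (hφn n).integrable one_le_two
  have hL1 : ∀ n, ∫ x, |φn n x| ∂μ ≤ R := by
    intro n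
    have h1 : ∫ x, |φn n x| ∂μ = (eLpNorm (φn n) 1 μ).toReal := by
      rw [eLpNorm_one_eq_lintegral_enorm,
        ← integral_norm_eq_lintegral_enorm (hφn n).aestronglyMeasurable]
      simp [Real.norm_eq_abs]
    have h2 : eLpNorm (φn n) 1 μ ≤ eLpNorm (φn n) 2 μ * (ENNReal.ofReal T) ^ ((1:ℝ)/2) := by
      have h := eLpNorm_le_eLpNorm_mul_rpow_measure_univ (p := 1) (q := 2)
        (by norm_num) (hφn n).aestronglyMeasurable
      have hμu : μ univ = ENNReal.ofReal T := by
        rw [hμdef, Measure.restrict_apply_univ, Real.volume_Icc, sub_zero]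
      rw [hμu] at h
      convert h using 2
      norm_num
    have hfin : eLpNorm (φn n) 2 μ * (ENNReal.ofReal T) ^ ((1:ℝ)/2) ≠ ⊤ :=
      ENNReal.mul_ne_top (hφn n).eLpNorm_ne_top
        (ENNReal.rpow_ne_top_of_nonneg (by norm_num) ENNReal.ofReal_ne_top)
    calc ∫ x, |φn n x| ∂μ = (eLpNorm (φn n) 1 μ).toReal := h1
      _ ≤ (eLpNorm (φn n) 2 μ * (ENNReal.ofReal T) ^ ((1:ℝ)/2)).toReal :=
          ENNReal.toReal_mono hfin h2
      _ = (eLpNorm (φn n) 2 μ).toReal * T ^ ((1:ℝ)/2) := by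
          rw [ENNReal.toReal_mul, ← ENNReal.toReal_rpow, ENNReal.toReal_ofReal hT.le]
      _ ≤ R := by
          rw [hR]
          exact mul_le_mul_of_nonneg_right (hCb n) (Real.rpow_nonneg hT.le _)
  -- integrability of the products
  have hφn_Ioc : ∀ n, IntegrableOn (φn n) (Ioc 0 t) volume := by
    intro n
    have : IntegrableOn (φn n) (Icc 0 T) volume := hφn_int n
    exact this.mono_set hsub
  have hprod_int : ∀ (f : ℝ → ℝ), ContinuousOn f (Icc 0 T) → ∀ n,
      IntervalIntegrable (fun s => f s * φn n s) volume 0 t := by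
    intro f hf n
    rw [intervalIntegrable_iff_integrableOn_Ioc_of_le ht0]
    obtain ⟨Cf, hCf⟩ := hcomp.exists_bound_of_continuousOn hf
    refine Integrable.bdd_mul (hφn_Ioc n) ((hf.mono hsub).aestronglyMeasurable measurableSet_Ioc)
      ((ae_restrict_mem measurableSet_Ioc).mono fun x hx => hCf x (hsub hx))
  have hσYn_int : ∀ n, IntervalIntegrable (fun s => σ (Yn n s) * φn n s) volume 0 t :=
    fun n => hprod_int _ (hσ.continuous.comp_continuousOn (hYnc n)) n
  have hσZφn_int : ∀ n, IntervalIntegrable (fun s => σ (Z s) * φn n s) volume 0 t :=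
    fun n => hprod_int _ (hσ.continuous.comp_continuousOn hZc) n
  -- Step C1 : the strong × weak product correction term vanishes
  have hC1 : Tendsto (fun n => ∫ s in (0:ℝ)..t, (σ (Yn n s) - σ (Z s)) * φn n s) atTop
      (nhds 0) := by
    refine squeeze_zero_norm (fun n => ?_) (by simpa using hunif.const_mul ((Lσ : ℝ) * R))
    have hM0 : 0 ≤ M n := le_trans (abs_nonneg _) (hMb n 0 ⟨le_rfl, hT.le⟩)
    have hint : IntegrableOn (fun s => (σ (Yn n s) - σ (Z s)) * φn n s) (Ioc 0 t) volume := by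
      have := (hσYn_int n).sub (hσZφn_int n)
      rw [intervalIntegrable_iff_integrableOn_Ioc_of_le ht0] at this
      refine this.congr_fun (fun x _ => by ring) measurableSet_Ioc
    have hbd : ∀ x ∈ Ioc (0:ℝ) t, ‖σ (Yn n x) - σ (Z x)‖ ≤ (Lσ : ℝ) * M n := by
      intro x hx
      calc ‖σ (Yn n x) - σ (Z x)‖ = dist (σ (Yn n x)) (σ (Z x)) := (dist_eq_norm _ _).symm
        _ ≤ (Lσ : ℝ) * dist (Yn n x) (Z x) := hσ.dist_le_mul _ _
        _ ≤ (Lσ : ℝ) * M n := by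
            refine mul_le_mul_of_nonneg_left ?_ Lσ.coe_nonneg
            rw [Real.dist_eq]
            exact hMb n x (hsub hx)
    have h1 : ‖∫ s in (0:ℝ)..t, (σ (Yn n s) - σ (Z s)) * φn n s‖
        ≤ ∫ s in Ioc (0:ℝ) t, ‖(σ (Yn n s) - σ (Z s)) * φn n s‖ := by
      rw [intervalIntegral.integral_of_le ht0]
      exact norm_integral_le_integral_norm _
    have h2 : ∫ s in Ioc (0:ℝ) t, ‖(σ (Yn n s) - σ (Z s)) * φn n s‖
        ≤ ∫ s in Ioc (0:ℝ) t, ((Lσ : ℝ) * M n) * |φn n s| := by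
      refine integral_mono_ae hint.norm
        (by simpa [Real.norm_eq_abs] using (hφn_Ioc n).norm.const_mul ((Lσ : ℝ) * M n))
        (((ae_restrict_mem measurableSet_Ioc).mono fun x hx => ?_))
      show ‖(σ (Yn n x) - σ (Z x)) * φn n x‖ ≤ ((Lσ : ℝ) * M n) * |φn n x|
      rw [norm_mul, Real.norm_eq_abs (φn n x)]
      exact mul_le_mul_of_nonneg_right (hbd x hx) (abs_nonneg _)
    have h3 : ∫ s in Ioc (0:ℝ) t, ((Lσ : ℝ) * M n) * |φn n s|
        = ((Lσ : ℝ) * M n) * ∫ s in Ioc (0:ℝ) t, |φn n s| := integral_const_mul _ _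
    have h4 : ∫ s in Ioc (0:ℝ) t, |φn n s| ≤ ∫ x, |φn n x| ∂μ := by
      rw [hμdef]
      refine setIntegral_mono_set (hφn_int n).abs
        (Eventually.of_forall fun x => abs_nonneg _) (HasSubset.Subset.eventuallyLE hsub)
    calc ‖∫ s in (0:ℝ)..t, (σ (Yn n s) - σ (Z s)) * φn n s‖
        ≤ ((Lσ : ℝ) * M n) * ∫ s in Ioc (0:ℝ) t, |φn n s| := by
          rw [← h3]; exact h1.trans h2
      _ ≤ ((Lσ : ℝ) * M n) * R := by
          refine mul_le_mul_of_nonneg_left ((h4).trans (hL1 n))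
            (mul_nonneg Lσ.coe_nonneg hM0)
      _ = (Lσ : ℝ) * R * M n := by ring
  -- Step C2 : weak convergence applied to the indicator of [0,t] times σ∘Z
  have hg2 : MemLp ((Icc (0:ℝ) t).indicator fun s => σ (Z s)) 2 μ := by
    obtain ⟨Cz, hCz⟩ := hcomp.exists_bound_of_continuousOn (hσ.continuous.comp_continuousOn hZc)
    refine MemLp.indicator measurableSet_Icc ?_
    refine MemLp.of_bound ((hσ.continuous.comp_continuousOn hZc).aestronglyMeasurable
      measurableSet_Icc) Cz ?_
    exact (ae_restrict_mem measurableSet_Icc).mono fun x hx => hCz x hx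
  have hkey : ∀ ψ : ℝ → ℝ,
      (∫ s in (0:ℝ)..T, ψ s * (Icc (0:ℝ) t).indicator (fun s => σ (Z s)) s)
        = ∫ s in (0:ℝ)..t, σ (Z s) * ψ s := by
    intro ψ
    rw [intervalIntegral.integral_of_le hT.le, intervalIntegral.integral_of_le ht0]
    have hpt : ∀ s, ψ s * (Icc (0:ℝ) t).indicator (fun s => σ (Z s)) s
        = (Icc (0:ℝ) t).indicator (fun s => σ (Z s) * ψ s) s := by
      intro s
      by_cases hs : s ∈ Icc (0:ℝ) t <;> simp [indicator_apply, hs, mul_comm]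
    rw [setIntegral_congr_fun measurableSet_Ioc fun s _ => hpt s,
      setIntegral_indicator measurableSet_Icc]
    have hset : Ioc (0:ℝ) T ∩ Icc 0 t = Ioc 0 t := by
      ext x
      simp only [mem_inter_iff, mem_Ioc, mem_Icc]
      constructor
      · rintro ⟨⟨h1, _⟩, _, h4⟩; exact ⟨h1, h4⟩
      · rintro ⟨h1, h2⟩; exact ⟨⟨h1, h2.trans htT⟩, h1.le, h2⟩
    rw [hset]
  have hC2 : Tendsto (fun n => ∫ s in (0:ℝ)..t, σ (Z s) * φn n s) atTop
      (nhds (∫ s in (0:ℝ)..t, σ (Z s) * φ s)) := by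
    have h := hweak _ hg2
    rw [hkey φ] at h
    exact h.congr fun n => hkey (φn n)
  -- combine C1 and C2
  have hsplit : ∀ n, ∫ s in (0:ℝ)..t, (σ (Yn n s) - σ (Z s)) * φn n s
      = (∫ s in (0:ℝ)..t, σ (Yn n s) * φn n s) - ∫ s in (0:ℝ)..t, σ (Z s) * φn n s := by
    intro n
    simp_rw [sub_mul]
    exact intervalIntegral.integral_sub (hσYn_int n) (hσZφn_int n)
  have hCc : Tendsto (fun n => ∫ s in (0:ℝ)..t, σ (Yn n s) * φn n s) atTop
      (nhds (∫ s in (0:ℝ)..t, σ (Z s) * φ s)) := by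
    have h := hC1.add hC2
    rw [zero_add] at h
    refine h.congr fun n => ?_
    rw [hsplit n]
    ring
  -- conclude by uniqueness of limits
  have hRHS : Tendsto (fun n => ξ + (∫ s in (0:ℝ)..t, b (Yn n s))
      + (∫ s in (0:ℝ)..t, σ (Yn n s) * φn n s) + K₀ t) atTop
      (nhds (ξ + (∫ s in (0:ℝ)..t, b (Z s)) + (∫ s in (0:ℝ)..t, σ (Z s) * φ s) + K₀ t)) :=
    (((tendsto_const_nhds.add hB).add hCc).add tendsto_const_nhds)
  exact tendsto_nhds_unique hA (hRHS.congr fun n => (hYn n t ⟨ht0, htT⟩).symm)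
end
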